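/- arXiv:1203.0862 — 4 statements merged into one kernel-verified Lean document; each statement's English description precedes it below -/
import Mathlib

section
/- Under the Lipschitz and monotonicity assumptions, for every t ∈ [0,T] and every x ∈ ℝⁿ there exists exactly one solution of the forward–backward system with data (t,x); i.e., there is exactly one pair of continuous maps X,Y : [t,T] → ℝⁿ with X(s) = x + ∫_t^s f(r,X(r),Y(r)) dr and Y(s) = h(X(T)) + ∫_s^T g(r,X(r),Y(r)) dr for all s ∈ [t,T]. (Deterministic forward–backward existence and uniqueness, Lemma 5 of the paper.) -/
open MeasureTheory Set intervalIntegral RealInnerProductSpace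

noncomputable section

/-- `ℝⁿ` as a real inner product space. -/
abbrev Vec (n : ℕ) := EuclideanSpace ℝ (Fin n)

/-- A solution of the (deterministic) forward–backward system with data `(t, x)`:
a pair of maps `X, Y`, continuous on `[t, T]`, satisfying
`X s = x + ∫_t^s f r (X r) (Y r) dr` and `Y s = h (X T) + ∫_s^T g r (X r) (Y r) dr`
for all `s ∈ [t, T]`. -/
def IsFBSol {n : ℕ} (T : ℝ)
    (f g : ℝ → Vec n → Vec n → Vec n) (h : Vec n → Vec n)
    (t : ℝ) (x : Vec n) (X Y : ℝ → Vec n) : Prop :=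
  ContinuousOn X (Icc t T) ∧ ContinuousOn Y (Icc t T) ∧
  (∀ s ∈ Icc t T, X s = x + ∫ r in t..s, f r (X r) (Y r)) ∧
  (∀ s ∈ Icc t T, Y s = h (X T) + ∫ r in s..T, g r (X r) (Y r))

namespace FBSDEProof

/-- All the data and hypotheses of the problem, bundled. -/
structure Setup (n : ℕ) where
  T : ℝ
  f : ℝ → Vec n → Vec n → Vec n
  g : ℝ → Vec n → Vec n → Vec n
  h : Vec n → Vec n
  C₁ : ℝ
  C₂ : ℝ
  t : ℝ
  x : Vec n
  hT : 0 < T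
  ht0 : 0 ≤ t
  htT : t ≤ T
  hf_cont : ContinuousOn (fun p : ℝ × Vec n × Vec n => f p.1 p.2.1 p.2.2)
      (Icc 0 T ×ˢ (univ ×ˢ univ))
  hg_cont : ContinuousOn (fun p : ℝ × Vec n × Vec n => g p.1 p.2.1 p.2.2)
      (Icc 0 T ×ˢ (univ ×ˢ univ))
  hh_cont : Continuous h
  hC₁ : 0 < C₁
  hf_lip : ∀ s ∈ Icc (0:ℝ) T, ∀ x₁ x₂ y₁ y₂ : Vec n,
      ‖f s x₁ y₁ - f s x₂ y₂‖ ≤ C₁ * (‖x₁ - x₂‖ + ‖y₁ - y₂‖)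
  hg_lip : ∀ s ∈ Icc (0:ℝ) T, ∀ x₁ x₂ y₁ y₂ : Vec n,
      ‖g s x₁ y₁ - g s x₂ y₂‖ ≤ C₁ * (‖x₁ - x₂‖ + ‖y₁ - y₂‖)
  hh_lip : ∀ x₁ x₂ : Vec n, ‖h x₁ - h x₂‖ ≤ C₁ * ‖x₁ - x₂‖
  hC₂ : 0 < C₂
  hmono : ∀ s ∈ Icc (0:ℝ) T, ∀ x₁ x₂ y₁ y₂ : Vec n,
      ⟪-(g s x₁ y₁ - g s x₂ y₂), x₁ - x₂⟫ + ⟪f s x₁ y₁ - f s x₂ y₂, y₁ - y₂⟫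
        ≤ -C₂ * (‖x₁ - x₂‖ ^ 2 + ‖y₁ - y₂‖ ^ 2)
  hh_mono : ∀ x₁ x₂ : Vec n, C₂ * ‖x₁ - x₂‖ ^ 2 ≤ ⟪h x₁ - h x₂, x₁ - x₂⟫

variable {n : ℕ}

namespace Setup

/-- Common Lipschitz constant for the interpolated coefficients. -/
def C (S : Setup n) : ℝ := S.C₁ + 1
/-- Common monotonicity constant for the interpolated coefficients. -/
def c (S : Setup n) : ℝ := min S.C₂ 1

lemma C_pos (S : Setup n) : 0 < S.C := by have := S.hC₁; unfold C; linarith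
lemma c_pos (S : Setup n) : 0 < S.c := lt_min S.hC₂ one_pos
lemma c_le_one (S : Setup n) : S.c ≤ 1 := min_le_right _ _

/-- Interpolated forward drift. -/
def F (S : Setup n) (α : ℝ) (s : ℝ) (u v : Vec n) : Vec n := α • S.f s u v - (1 - α) • v
/-- Interpolated backward driver. -/
def G (S : Setup n) (α : ℝ) (s : ℝ) (u v : Vec n) : Vec n := α • S.g s u v + (1 - α) • u
/-- Interpolated terminal condition. -/
def H (S : Setup n) (α : ℝ) (u : Vec n) : Vec n := α • S.h u + (1 - α) • u

/-- Solution of the interpolated FBSDE with forcing terms `(φ, ψ, a)`. -/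
def Sol (S : Setup n) (α : ℝ) (φ ψ : ℝ → Vec n) (a : Vec n) (X Y : ℝ → Vec n) : Prop :=
  ContinuousOn X (Icc S.t S.T) ∧ ContinuousOn Y (Icc S.t S.T) ∧
  (∀ s ∈ Icc S.t S.T, X s = S.x + ∫ r in S.t..s, (S.F α r (X r) (Y r) + φ r)) ∧
  (∀ s ∈ Icc S.t S.T, Y s = S.H α (X S.T) + a + ∫ r in s..S.T, (S.G α r (X r) (Y r) + ψ r))

/-- Solvability (for all continuous forcings) at interpolation parameter `α`. -/
def AllSolv (S : Setup n) (α : ℝ) : Prop :=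
  ∀ φ ψ : ℝ → Vec n, Continuous φ → Continuous ψ → ∀ a : Vec n,
    ∃ X Y : ℝ → Vec n, S.Sol α φ ψ a X Y

variable (S : Setup n)

lemma Icc_sub : Icc S.t S.T ⊆ Icc 0 S.T := Icc_subset_Icc S.ht0 le_rfl

lemma F_lip {α : ℝ} (hα : α ∈ Icc (0:ℝ) 1) {s : ℝ} (hs : s ∈ Icc 0 S.T)
    (u₁ u₂ v₁ v₂ : Vec n) :
    ‖S.F α s u₁ v₁ - S.F α s u₂ v₂‖ ≤ S.C * (‖u₁ - u₂‖ + ‖v₁ - v₂‖) := by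
  have hf := S.hf_lip s hs u₁ u₂ v₁ v₂
  have h1 : S.F α s u₁ v₁ - S.F α s u₂ v₂
      = α • (S.f s u₁ v₁ - S.f s u₂ v₂) - (1 - α) • (v₁ - v₂) := by
    unfold F; module
  rw [h1]
  have h2 : ‖α • (S.f s u₁ v₁ - S.f s u₂ v₂) - (1 - α) • (v₁ - v₂)‖
      ≤ ‖α • (S.f s u₁ v₁ - S.f s u₂ v₂)‖ + ‖(1 - α) • (v₁ - v₂)‖ := norm_sub_le _ _
  rw [norm_smul, norm_smul, Real.norm_eq_abs, Real.norm_eq_abs,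
    abs_of_nonneg hα.1, abs_of_nonneg (by linarith [hα.2])] at h2
  have hC₁ := S.hC₁
  have hn1 : (0:ℝ) ≤ ‖u₁ - u₂‖ := norm_nonneg _
  have hn2 : (0:ℝ) ≤ ‖v₁ - v₂‖ := norm_nonneg _
  have hfn : (0:ℝ) ≤ ‖S.f s u₁ v₁ - S.f s u₂ v₂‖ := norm_nonneg _
  unfold C
  nlinarith [hα.1, hα.2]

lemma G_lip {α : ℝ} (hα : α ∈ Icc (0:ℝ) 1) {s : ℝ} (hs : s ∈ Icc 0 S.T)
    (u₁ u₂ v₁ v₂ : Vec n) :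
    ‖S.G α s u₁ v₁ - S.G α s u₂ v₂‖ ≤ S.C * (‖u₁ - u₂‖ + ‖v₁ - v₂‖) := by
  have hf := S.hg_lip s hs u₁ u₂ v₁ v₂
  have h1 : S.G α s u₁ v₁ - S.G α s u₂ v₂
      = α • (S.g s u₁ v₁ - S.g s u₂ v₂) + (1 - α) • (u₁ - u₂) := by
    unfold G; module
  rw [h1]
  have h2 : ‖α • (S.g s u₁ v₁ - S.g s u₂ v₂) + (1 - α) • (u₁ - u₂)‖
      ≤ ‖α • (S.g s u₁ v₁ - S.g s u₂ v₂)‖ + ‖(1 - α) • (u₁ - u₂)‖ := norm_add_le _ _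
  rw [norm_smul, norm_smul, Real.norm_eq_abs, Real.norm_eq_abs,
    abs_of_nonneg hα.1, abs_of_nonneg (by linarith [hα.2])] at h2
  have hC₁ := S.hC₁
  have hn1 : (0:ℝ) ≤ ‖u₁ - u₂‖ := norm_nonneg _
  have hn2 : (0:ℝ) ≤ ‖v₁ - v₂‖ := norm_nonneg _
  have hfn : (0:ℝ) ≤ ‖S.g s u₁ v₁ - S.g s u₂ v₂‖ := norm_nonneg _
  unfold C
  nlinarith [hα.1, hα.2]

lemma H_lip {α : ℝ} (hα : α ∈ Icc (0:ℝ) 1) (u₁ u₂ : Vec n) :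
    ‖S.H α u₁ - S.H α u₂‖ ≤ S.C * ‖u₁ - u₂‖ := by
  have hf := S.hh_lip u₁ u₂
  have h1 : S.H α u₁ - S.H α u₂ = α • (S.h u₁ - S.h u₂) + (1 - α) • (u₁ - u₂) := by
    unfold H; module
  rw [h1]
  have h2 := norm_add_le (α • (S.h u₁ - S.h u₂)) ((1 - α) • (u₁ - u₂))
  rw [norm_smul, norm_smul, Real.norm_eq_abs, Real.norm_eq_abs,
    abs_of_nonneg hα.1, abs_of_nonneg (by linarith [hα.2])] at h2
  have hC₁ := S.hC₁
  have hn1 : (0:ℝ) ≤ ‖u₁ - u₂‖ := norm_nonneg _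
  have hfn : (0:ℝ) ≤ ‖S.h u₁ - S.h u₂‖ := norm_nonneg _
  unfold C
  nlinarith [hα.1, hα.2]

lemma FG_mono {α : ℝ} (hα : α ∈ Icc (0:ℝ) 1) {s : ℝ} (hs : s ∈ Icc 0 S.T)
    (u₁ u₂ v₁ v₂ : Vec n) :
    ⟪-(S.G α s u₁ v₁ - S.G α s u₂ v₂), u₁ - u₂⟫
      + ⟪S.F α s u₁ v₁ - S.F α s u₂ v₂, v₁ - v₂⟫
      ≤ -S.c * (‖u₁ - u₂‖ ^ 2 + ‖v₁ - v₂‖ ^ 2) := by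
  have hm := S.hmono s hs u₁ u₂ v₁ v₂
  have h1 : S.G α s u₁ v₁ - S.G α s u₂ v₂
      = α • (S.g s u₁ v₁ - S.g s u₂ v₂) + (1 - α) • (u₁ - u₂) := by unfold G; module
  have h2 : S.F α s u₁ v₁ - S.F α s u₂ v₂
      = α • (S.f s u₁ v₁ - S.f s u₂ v₂) - (1 - α) • (v₁ - v₂) := by unfold F; module
  have e1 : ⟪-(S.G α s u₁ v₁ - S.G α s u₂ v₂), u₁ - u₂⟫
      = α * ⟪-(S.g s u₁ v₁ - S.g s u₂ v₂), u₁ - u₂⟫ - (1 - α) * ‖u₁ - u₂‖ ^ 2 := by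
    rw [h1]
    simp only [inner_neg_left, inner_add_left, real_inner_smul_left,
      real_inner_self_eq_norm_sq]
    ring
  have h2' : S.F α s u₁ v₁ - S.F α s u₂ v₂
      = α • (S.f s u₁ v₁ - S.f s u₂ v₂) + (α - 1) • (v₁ - v₂) := by
    rw [h2]; module
  have e2 : ⟪S.F α s u₁ v₁ - S.F α s u₂ v₂, v₁ - v₂⟫
      = α * ⟪S.f s u₁ v₁ - S.f s u₂ v₂, v₁ - v₂⟫ - (1 - α) * ‖v₁ - v₂‖ ^ 2 := by
    rw [h2']
    simp only [inner_add_left, real_inner_smul_left, real_inner_self_eq_norm_sq]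
    ring
  rw [e1, e2]
  have hc1 : S.c ≤ S.C₂ := min_le_left _ _
  have hc2 : S.c ≤ 1 := min_le_right _ _
  have hn1 : (0:ℝ) ≤ ‖u₁ - u₂‖ ^ 2 := sq_nonneg _
  have hn2 : (0:ℝ) ≤ ‖v₁ - v₂‖ ^ 2 := sq_nonneg _
  have h1α : (0:ℝ) ≤ 1 - α := by linarith [hα.2]
  have key := mul_le_mul_of_nonneg_left hm hα.1
  nlinarith [mul_nonneg hα.1 (sub_nonneg.2 hc1), mul_nonneg h1α (sub_nonneg.2 hc2),
    mul_nonneg (mul_nonneg hα.1 (sub_nonneg.2 hc1)) (by linarith : (0:ℝ) ≤ ‖u₁ - u₂‖ ^ 2 + ‖v₁ - v₂‖ ^ 2),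
    mul_nonneg (mul_nonneg h1α (sub_nonneg.2 hc2)) (by linarith : (0:ℝ) ≤ ‖u₁ - u₂‖ ^ 2 + ‖v₁ - v₂‖ ^ 2)]

lemma H_mono {α : ℝ} (hα : α ∈ Icc (0:ℝ) 1) (u₁ u₂ : Vec n) :
    S.c * ‖u₁ - u₂‖ ^ 2 ≤ ⟪S.H α u₁ - S.H α u₂, u₁ - u₂⟫ := by
  have hm := S.hh_mono u₁ u₂
  have h1 : S.H α u₁ - S.H α u₂ = α • (S.h u₁ - S.h u₂) + (1 - α) • (u₁ - u₂) := by
    unfold H; module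
  rw [h1, inner_add_left, real_inner_smul_left, real_inner_smul_left,
    real_inner_self_eq_norm_sq]
  have hc1 : S.c ≤ S.C₂ := min_le_left _ _
  have hc2 : S.c ≤ 1 := min_le_right _ _
  have hn1 : (0:ℝ) ≤ ‖u₁ - u₂‖ ^ 2 := sq_nonneg _
  have h1α : (0:ℝ) ≤ 1 - α := by linarith [hα.2]
  have key := mul_le_mul_of_nonneg_left hm hα.1
  nlinarith [mul_nonneg (mul_nonneg hα.1 (sub_nonneg.2 hc1)) hn1,
    mul_nonneg (mul_nonneg h1α (sub_nonneg.2 hc2)) hn1]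

lemma f_comp_cont {X Y : ℝ → Vec n} (hX : ContinuousOn X (Icc S.t S.T))
    (hY : ContinuousOn Y (Icc S.t S.T)) :
    ContinuousOn (fun r => S.f r (X r) (Y r)) (Icc S.t S.T) := by
  have : ContinuousOn (fun r : ℝ => (r, X r, Y r)) (Icc S.t S.T) :=
    (continuousOn_id.prodMk (hX.prodMk hY))
  exact S.hf_cont.comp this (fun r hr => ⟨S.Icc_sub hr, mem_univ _, mem_univ _⟩)

lemma g_comp_cont {X Y : ℝ → Vec n} (hX : ContinuousOn X (Icc S.t S.T))
    (hY : ContinuousOn Y (Icc S.t S.T)) :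
    ContinuousOn (fun r => S.g r (X r) (Y r)) (Icc S.t S.T) := by
  have : ContinuousOn (fun r : ℝ => (r, X r, Y r)) (Icc S.t S.T) :=
    (continuousOn_id.prodMk (hX.prodMk hY))
  exact S.hg_cont.comp this (fun r hr => ⟨S.Icc_sub hr, mem_univ _, mem_univ _⟩)

lemma F_comp_cont (α : ℝ) {X Y : ℝ → Vec n} (hX : ContinuousOn X (Icc S.t S.T))
    (hY : ContinuousOn Y (Icc S.t S.T)) :
    ContinuousOn (fun r => S.F α r (X r) (Y r)) (Icc S.t S.T) := by
  unfold F
  have h1 := S.f_comp_cont hX hY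
  fun_prop

lemma G_comp_cont (α : ℝ) {X Y : ℝ → Vec n} (hX : ContinuousOn X (Icc S.t S.T))
    (hY : ContinuousOn Y (Icc S.t S.T)) :
    ContinuousOn (fun r => S.G α r (X r) (Y r)) (Icc S.t S.T) := by
  unfold G
  have h1 := S.g_comp_cont hX hY
  fun_prop

end Setup

/-- Interval integrability of a function continuous on `[t,T]`, over subintervals. -/
lemma interv_int (S : Setup n) {E : Type*} [NormedAddCommGroup E] {u : ℝ → E}
    (hu : ContinuousOn u (Icc S.t S.T)) {a b : ℝ} (ha : a ∈ Icc S.t S.T)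
    (hb : b ∈ Icc S.t S.T) : IntervalIntegrable u volume a b :=
  (hu.mono (uIcc_subset_Icc ha hb)).intervalIntegrable

namespace Setup

variable (S : Setup n)

lemma mem_t : S.t ∈ Icc S.t S.T := ⟨le_rfl, S.htT⟩
lemma mem_T : S.T ∈ Icc S.t S.T := ⟨S.htT, le_rfl⟩

lemma hasDerivAt_solX {α : ℝ} {φ ψ : ℝ → Vec n} {a : Vec n} {X Y : ℝ → Vec n}
    (hsol : S.Sol α φ ψ a X Y) (hφ : Continuous φ) {s : ℝ} (hs : s ∈ Ioo S.t S.T) :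
    HasDerivAt X (S.F α s (X s) (Y s) + φ s) s := by
  obtain ⟨hXc, hYc, hXe, _⟩ := hsol
  set w : ℝ → Vec n := fun r => S.F α r (X r) (Y r) + φ r with hw
  have hwc : ContinuousOn w (Icc S.t S.T) :=
    (S.F_comp_cont α hXc hYc).add hφ.continuousOn
  have hmem : Icc S.t S.T ∈ nhds s := Icc_mem_nhds hs.1 hs.2
  have hint : IntervalIntegrable w volume S.t s :=
    interv_int S hwc S.mem_t ⟨hs.1.le, hs.2.le⟩
  have hmeas : StronglyMeasurableAtFilter w (nhds s) volume := by
    refine ContinuousAt.stronglyMeasurableAtFilter isOpen_Ioo ?_ s hs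
    exact fun r hr => hwc.continuousAt (Icc_mem_nhds hr.1 hr.2)
  have hJ : HasDerivAt (fun u => S.x + ∫ r in S.t..u, w r) (w s) s :=
    (intervalIntegral.integral_hasDerivAt_right hint hmeas
      (hwc.continuousAt hmem)).const_add _
  exact hJ.congr_of_eventuallyEq (Filter.eventuallyEq_of_mem hmem fun r hr => hXe r hr)

lemma hasDerivAt_solY {α : ℝ} {φ ψ : ℝ → Vec n} {a : Vec n} {X Y : ℝ → Vec n}
    (hsol : S.Sol α φ ψ a X Y) (hψ : Continuous ψ) {s : ℝ} (hs : s ∈ Ioo S.t S.T) :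
    HasDerivAt Y (-(S.G α s (X s) (Y s) + ψ s)) s := by
  obtain ⟨hXc, hYc, _, hYe⟩ := hsol
  set z : ℝ → Vec n := fun r => S.G α r (X r) (Y r) + ψ r with hz
  have hzc : ContinuousOn z (Icc S.t S.T) :=
    (S.G_comp_cont α hXc hYc).add hψ.continuousOn
  have hmem : Icc S.t S.T ∈ nhds s := Icc_mem_nhds hs.1 hs.2
  have hint : IntervalIntegrable z volume S.t s :=
    interv_int S hzc S.mem_t ⟨hs.1.le, hs.2.le⟩
  have hmeas : StronglyMeasurableAtFilter z (nhds s) volume := by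
    refine ContinuousAt.stronglyMeasurableAtFilter isOpen_Ioo ?_ s hs
    exact fun r hr => hzc.continuousAt (Icc_mem_nhds hr.1 hr.2)
  have hJ : HasDerivAt (fun u => (S.H α (X S.T) + a + ∫ r in S.t..S.T, z r)
      - ∫ r in S.t..u, z r) (-(z s)) s := by
    simpa using ((intervalIntegral.integral_hasDerivAt_right hint hmeas
      (hzc.continuousAt hmem)).const_sub (S.H α (X S.T) + a + ∫ r in S.t..S.T, z r))
  refine hJ.congr_of_eventuallyEq (Filter.eventuallyEq_of_mem hmem fun r hr => ?_)
  have hsplit : (∫ u in S.t..r, z u) + ∫ u in r..S.T, z u = ∫ u in S.t..S.T, z u :=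
    intervalIntegral.integral_add_adjacent_intervals
      (interv_int S hzc S.mem_t hr) (interv_int S hzc hr S.mem_T)
  have := hYe r hr
  rw [this]
  rw [← hsplit]
  abel

end Setup

/-- Helper: quasi Cauchy–Schwarz via the `ε`-trick. -/
lemma eps_bound {x b β : ℝ} (hb : 0 < b) (hβ : 0 ≤ β)
    (hx : ∀ ε : ℝ, 0 < ε → x ≤ b * ε / 2 + β ^ 2 / (2 * ε)) :
    x ≤ Real.sqrt b * β := by
  rcases eq_or_lt_of_le hβ with hβ0 | hβpos
  · rw [← hβ0, mul_zero]
    by_contra hcon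
    push_neg at hcon
    have h1 := hx (x / b) (div_pos hcon hb)
    rw [← hβ0] at h1
    have : b * (x / b) = x := by field_simp
    rw [this] at h1
    have h2 : (0:ℝ) ^ 2 / (2 * (x / b)) = 0 := by
      rw [zero_pow (by norm_num : 2 ≠ 0), zero_div]
    rw [h2] at h1
    linarith
  · have hsb : 0 < Real.sqrt b := Real.sqrt_pos.2 hb
    have hbb : Real.sqrt b * Real.sqrt b = b := Real.mul_self_sqrt hb.le
    have h1 := hx (β / Real.sqrt b) (div_pos hβpos hsb)
    have e : b * (β / Real.sqrt b) / 2 + β ^ 2 / (2 * (β / Real.sqrt b))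
        = Real.sqrt b * β := by
      field_simp
      nlinarith [hbb]
    linarith [e ▸ h1]

namespace Setup

/-- The uniform stability constant. -/
def K (S : Setup n) : ℝ :=
  1 + S.T + S.C * (1 + 2 * Real.sqrt (2 * S.T)) * (1 + Real.sqrt S.T) / S.c

lemma K_pos (S : Setup n) : 0 < S.K := by
  have h1 := S.C_pos
  have h2 := S.c_pos
  have h3 := S.hT
  have h4 : 0 ≤ Real.sqrt (2 * S.T) := Real.sqrt_nonneg _
  have h5 : 0 ≤ Real.sqrt S.T := Real.sqrt_nonneg _
  have : 0 ≤ S.C * (1 + 2 * Real.sqrt (2 * S.T)) * (1 + Real.sqrt S.T) / S.c := by positivity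
  unfold K; linarith

end Setup


section ArithHelpers

private lemma young2 {c u v P Q cst : ℝ} (hc : 0 < c) (hcst : 2 * c * cst = P ^ 2 + Q ^ 2) :
    -c * (u ^ 2 + v ^ 2) + (P * v + Q * u) ≤ -(c / 2) * (u ^ 2 + v ^ 2) + cst := by
  nlinarith [sq_nonneg (c * v - P), sq_nonneg (c * u - Q), hc, sq_nonneg u, sq_nonneg v]

private lemma young1 {c w A : ℝ} (hc : 0 < c) : w * A ≤ c / 2 * w ^ 2 + A ^ 2 / (2 * c) := by
  have hAc : 2 * c * (A ^ 2 / (2 * c)) = A ^ 2 := by field_simp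
  nlinarith [sq_nonneg (c * w - A), hc]

private lemma arith1 {c u I2 A P Q Tt T cst : ℝ} (hc : 0 < c) (hTt : Tt ≤ T) (hT : 0 < T)
    (hP : 0 ≤ P) (hQ : 0 ≤ Q) (hI2 : 0 ≤ I2) (hu : 0 ≤ u)
    (hcst : 2 * c * cst = P ^ 2 + Q ^ 2) (hcst0 : 0 ≤ cst)
    (hcore : c / 2 * (u + I2) ≤ A ^ 2 / (2 * c) + Tt * cst) :
    u + I2 ≤ (A ^ 2 + T * (P ^ 2 + Q ^ 2)) / c ^ 2 := by
  rw [le_div_iff₀ (by positivity : (0:ℝ) < c ^ 2)]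
  have h1 : Tt * cst ≤ T * cst := mul_le_mul_of_nonneg_right hTt hcst0
  have h2 := mul_le_mul_of_nonneg_left hcore (by positivity : (0:ℝ) ≤ 2 * c)
  have h3 : 2 * c * (A ^ 2 / (2 * c)) = A ^ 2 := by field_simp
  have h4 := mul_le_mul_of_nonneg_left h1 (by positivity : (0:ℝ) ≤ 2 * c)
  nlinarith [hc]

private lemma arith2 {A P Q T τ : ℝ} (hA : 0 ≤ A) (hP : 0 ≤ P) (hQ : 0 ≤ Q)
    (hτ : 0 ≤ τ) (hττ : τ * τ = T) :
    A ^ 2 + T * (P ^ 2 + Q ^ 2) ≤ (A + τ * (P + Q)) ^ 2 := by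
  nlinarith [mul_nonneg hP hQ, mul_nonneg (mul_nonneg hA hτ) (add_nonneg hP hQ),
    mul_nonneg (mul_nonneg hτ hτ) (mul_nonneg hP hQ)]

private lemma arith3 {σ τ A P Q : ℝ} (hσ : 0 ≤ σ) (hτ : 0 ≤ τ) (hA : 0 ≤ A)
    (hP : 0 ≤ P) (hQ : 0 ≤ Q) :
    (1 + σ) * (A + τ * (P + Q)) ≤ (1 + 2 * σ) * (1 + τ) * (P + Q + A) := by
  nlinarith [mul_nonneg hτ hA, mul_nonneg hσ (by linarith : (0:ℝ) ≤ 2*P + 2*Q + A),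
    mul_nonneg (mul_nonneg hσ hτ) (by linarith : (0:ℝ) ≤ P + Q + 2*A)]

private lemma sq_le_imp_le {w B : ℝ} (hw : 0 ≤ w) (hB : 0 ≤ B) (h : w ^ 2 ≤ B ^ 2) : w ≤ B := by
  nlinarith

end ArithHelpers

namespace Setup

set_option maxHeartbeats 2000000 in
/-- The key a priori stability estimate, uniform in `α ∈ [0,1]`. -/
lemma stab (S : Setup n) {α : ℝ} (hα : α ∈ Icc (0:ℝ) 1)
    {φ₁ ψ₁ φ₂ ψ₂ : ℝ → Vec n} (hφ₁ : Continuous φ₁) (hψ₁ : Continuous ψ₁)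
    (hφ₂ : Continuous φ₂) (hψ₂ : Continuous ψ₂) {a₁ a₂ : Vec n}
    {X₁ Y₁ X₂ Y₂ : ℝ → Vec n}
    (hs1 : S.Sol α φ₁ ψ₁ a₁ X₁ Y₁) (hs2 : S.Sol α φ₂ ψ₂ a₂ X₂ Y₂)
    {P Q A : ℝ}
    (hP : ∀ r ∈ Icc S.t S.T, ‖φ₁ r - φ₂ r‖ ≤ P)
    (hQ : ∀ r ∈ Icc S.t S.T, ‖ψ₁ r - ψ₂ r‖ ≤ Q)
    (hA : ‖a₁ - a₂‖ ≤ A) :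
    ∀ s ∈ Icc S.t S.T,
      ‖X₁ s - X₂ s‖ ≤ S.K * (P + Q + A) ∧ ‖Y₁ s - Y₂ s‖ ≤ S.K * (P + Q + A) := by
  obtain ⟨hX₁c, hY₁c, hX₁e, hY₁e⟩ := id hs1
  obtain ⟨hX₂c, hY₂c, hX₂e, hY₂e⟩ := id hs2
  have htT := S.htT
  have hT := S.hT
  have hc := S.c_pos
  have hC := S.C_pos
  have hP0 : 0 ≤ P := le_trans (norm_nonneg _) (hP S.t S.mem_t)
  have hQ0 : 0 ≤ Q := le_trans (norm_nonneg _) (hQ S.t S.mem_t)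
  have hA0 : 0 ≤ A := le_trans (norm_nonneg _) hA
  -- abbreviations
  set NX : ℝ → ℝ := fun r => ‖X₁ r - X₂ r‖ with hNXdef
  set NY : ℝ → ℝ := fun r => ‖Y₁ r - Y₂ r‖ with hNYdef
  have hNXc : ContinuousOn NX (Icc S.t S.T) := (hX₁c.sub hX₂c).norm
  have hNYc : ContinuousOn NY (Icc S.t S.T) := (hY₁c.sub hY₂c).norm
  -- difference of drivers
  set Fd : ℝ → Vec n := fun r => S.F α r (X₁ r) (Y₁ r) - S.F α r (X₂ r) (Y₂ r) with hFddef
  set Gd : ℝ → Vec n := fun r => S.G α r (X₁ r) (Y₁ r) - S.G α r (X₂ r) (Y₂ r) with hGddef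
  have hFdc : ContinuousOn Fd (Icc S.t S.T) :=
    (S.F_comp_cont α hX₁c hY₁c).sub (S.F_comp_cont α hX₂c hY₂c)
  have hGdc : ContinuousOn Gd (Icc S.t S.T) :=
    (S.G_comp_cont α hX₁c hY₁c).sub (S.G_comp_cont α hX₂c hY₂c)
  have hdφc : ContinuousOn (fun r => φ₁ r - φ₂ r) (Icc S.t S.T) :=
    (hφ₁.sub hφ₂).continuousOn
  have hdψc : ContinuousOn (fun r => ψ₁ r - ψ₂ r) (Icc S.t S.T) :=
    (hψ₁.sub hψ₂).continuousOn
  -- the derivative of the inner product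
  set D : ℝ → ℝ := fun r =>
    ⟪X₁ r - X₂ r, -(Gd r + (ψ₁ r - ψ₂ r))⟫ + ⟪Fd r + (φ₁ r - φ₂ r), Y₁ r - Y₂ r⟫ with hDdef
  have hD : ∀ s ∈ Ioo S.t S.T, HasDerivAt (fun r => ⟪X₁ r - X₂ r, Y₁ r - Y₂ r⟫) (D s) s := by
    intro s hs
    have h1 : HasDerivAt (fun r => X₁ r - X₂ r) (Fd s + (φ₁ s - φ₂ s)) s := by
      have := (S.hasDerivAt_solX hs1 hφ₁ hs).sub (S.hasDerivAt_solX hs2 hφ₂ hs)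
      refine this.congr_deriv ?_
      simp only [hFddef]
      abel
    have h2 : HasDerivAt (fun r => Y₁ r - Y₂ r) (-(Gd s + (ψ₁ s - ψ₂ s))) s := by
      have := (S.hasDerivAt_solY hs1 hψ₁ hs).sub (S.hasDerivAt_solY hs2 hψ₂ hs)
      refine this.congr_deriv ?_
      simp only [hGddef]
      abel
    exact HasDerivAt.inner ℝ h1 h2
  have hinnerc : ContinuousOn (fun r => ⟪X₁ r - X₂ r, Y₁ r - Y₂ r⟫) (Icc S.t S.T) :=
    (hX₁c.sub hX₂c).inner (hY₁c.sub hY₂c)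
  have hDc : ContinuousOn D (Icc S.t S.T) := by
    apply ContinuousOn.add
    · exact (hX₁c.sub hX₂c).inner ((hGdc.add hdψc).neg)
    · exact (hFdc.add hdφc).inner (hY₁c.sub hY₂c)
  have hDi : IntervalIntegrable D volume S.t S.T := interv_int S hDc S.mem_t S.mem_T
  have hkey : ∫ r in S.t..S.T, D r
      = ⟪X₁ S.T - X₂ S.T, Y₁ S.T - Y₂ S.T⟫ - ⟪X₁ S.t - X₂ S.t, Y₁ S.t - Y₂ S.t⟫ :=
    intervalIntegral.integral_eq_sub_of_hasDeriv_right_of_le htT hinnerc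
      (fun s hs => (hD s hs).hasDerivWithinAt) hDi
  -- endpoint values
  have hXt1 : X₁ S.t = S.x := by simpa using hX₁e S.t S.mem_t
  have hXt2 : X₂ S.t = S.x := by simpa using hX₂e S.t S.mem_t
  have hin0 : ⟪X₁ S.t - X₂ S.t, Y₁ S.t - Y₂ S.t⟫ = (0:ℝ) := by
    rw [hXt1, hXt2, sub_self]
    exact inner_zero_left _
  have hYT1 : Y₁ S.T = S.H α (X₁ S.T) + a₁ := by simpa using hY₁e S.T S.mem_T
  have hYT2 : Y₂ S.T = S.H α (X₂ S.T) + a₂ := by simpa using hY₂e S.T S.mem_T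
  have hdYT : Y₁ S.T - Y₂ S.T = (S.H α (X₁ S.T) - S.H α (X₂ S.T)) + (a₁ - a₂) := by
    rw [hYT1, hYT2]; abel
  -- lower bound for the terminal inner product
  have hlow : S.c * ‖X₁ S.T - X₂ S.T‖ ^ 2 - ‖X₁ S.T - X₂ S.T‖ * A
      ≤ ⟪X₁ S.T - X₂ S.T, Y₁ S.T - Y₂ S.T⟫ := by
    rw [hdYT, inner_add_right]
    have m1 : S.c * ‖X₁ S.T - X₂ S.T‖ ^ 2
        ≤ ⟪X₁ S.T - X₂ S.T, S.H α (X₁ S.T) - S.H α (X₂ S.T)⟫ := by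
      rw [real_inner_comm]
      exact S.H_mono hα (X₁ S.T) (X₂ S.T)
    have m2 : -(‖X₁ S.T - X₂ S.T‖ * A) ≤ ⟪X₁ S.T - X₂ S.T, a₁ - a₂⟫ := by
      have h1 := abs_real_inner_le_norm (X₁ S.T - X₂ S.T) (a₁ - a₂)
      have h2 : ‖X₁ S.T - X₂ S.T‖ * ‖a₁ - a₂‖ ≤ ‖X₁ S.T - X₂ S.T‖ * A :=
        mul_le_mul_of_nonneg_left hA (norm_nonneg _)
      have h3 := neg_abs_le (⟪X₁ S.T - X₂ S.T, a₁ - a₂⟫ : ℝ)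
      linarith
    linarith
  -- pointwise bound for D
  have hDb : ∀ r ∈ Icc S.t S.T,
      D r ≤ -S.c * (NX r ^ 2 + NY r ^ 2) + (P * NY r + Q * NX r) := by
    intro r hr
    have hmono := S.FG_mono hα (S.Icc_sub hr) (X₁ r) (X₂ r) (Y₁ r) (Y₂ r)
    have e : D r = (⟪-(Gd r), X₁ r - X₂ r⟫ + ⟪Fd r, Y₁ r - Y₂ r⟫)
        + (⟪φ₁ r - φ₂ r, Y₁ r - Y₂ r⟫ - ⟪X₁ r - X₂ r, ψ₁ r - ψ₂ r⟫) := by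
      simp only [hDdef, inner_neg_right, inner_add_right, inner_add_left, inner_neg_left,
        real_inner_comm (X₁ r - X₂ r) (Gd r)]
      ring
    have hin1 : ⟪φ₁ r - φ₂ r, Y₁ r - Y₂ r⟫ ≤ P * NY r :=
      le_trans (real_inner_le_norm _ _)
        (mul_le_mul_of_nonneg_right (hP r hr) (norm_nonneg _))
    have hin2 : -⟪X₁ r - X₂ r, ψ₁ r - ψ₂ r⟫ ≤ NX r * Q := by
      have h1 := abs_real_inner_le_norm (X₁ r - X₂ r) (ψ₁ r - ψ₂ r)
      have h2 : NX r * ‖ψ₁ r - ψ₂ r‖ ≤ NX r * Q :=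
        mul_le_mul_of_nonneg_left (hQ r hr) (norm_nonneg _)
      have h3 := neg_abs_le (⟪X₁ r - X₂ r, ψ₁ r - ψ₂ r⟫ : ℝ)
      linarith
    rw [e]
    have hmono' : ⟪-(Gd r), X₁ r - X₂ r⟫ + ⟪Fd r, Y₁ r - Y₂ r⟫
        ≤ -S.c * (NX r ^ 2 + NY r ^ 2) := by
      simp only [hFddef, hGddef, hNXdef, hNYdef]
      exact hmono
    linarith [hmono', hin1, hin2]
  -- integrate the bound
  set I2 : ℝ := ∫ r in S.t..S.T, (NX r ^ 2 + NY r ^ 2) with hI2def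
  have hsqc : ContinuousOn (fun r => NX r ^ 2 + NY r ^ 2) (Icc S.t S.T) :=
    (hNXc.pow 2).add (hNYc.pow 2)
  have hI2i : IntervalIntegrable (fun r => NX r ^ 2 + NY r ^ 2) volume S.t S.T :=
    interv_int S hsqc S.mem_t S.mem_T
  have hI2nn : 0 ≤ I2 := by
    apply intervalIntegral.integral_nonneg htT
    intro u hu; positivity
  -- Young constants
  set cst : ℝ := (P ^ 2 + Q ^ 2) / (2 * S.c) with hcstdef
  have hcst : 2 * S.c * cst = P ^ 2 + Q ^ 2 := by
    rw [hcstdef]; field_simp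
  have hIm : ∫ r in S.t..S.T, D r
      ≤ ∫ r in S.t..S.T, (-(S.c / 2) * (NX r ^ 2 + NY r ^ 2) + cst) := by
    apply le_trans (intervalIntegral.integral_mono_on htT hDi ?_ hDb)
    · apply intervalIntegral.integral_mono_on htT ?_ ?_
      · intro r hr
        exact young2 hc hcst
      · exact interv_int S ((continuousOn_const.mul hsqc).add
          ((continuousOn_const.mul hNYc).add (continuousOn_const.mul hNXc))) S.mem_t S.mem_T
      · exact interv_int S ((continuousOn_const.mul hsqc).add continuousOn_const)
          S.mem_t S.mem_T
    · exact interv_int S ((continuousOn_const.mul hsqc).add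
        ((continuousOn_const.mul hNYc).add (continuousOn_const.mul hNXc))) S.mem_t S.mem_T
  have hsplit2 : ∫ r in S.t..S.T, (-(S.c / 2) * (NX r ^ 2 + NY r ^ 2) + cst)
      = -(S.c / 2) * I2 + (S.T - S.t) * cst := by
    rw [intervalIntegral.integral_add ((hI2i).const_mul _) intervalIntegrable_const,
      intervalIntegral.integral_const_mul, intervalIntegral.integral_const, smul_eq_mul,
      hI2def]
  -- core inequality
  have hAyoung : ‖X₁ S.T - X₂ S.T‖ * A ≤ S.c / 2 * ‖X₁ S.T - X₂ S.T‖ ^ 2 + A ^ 2 / (2 * S.c) :=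
    young1 hc
  set M : ℝ := (A ^ 2 + S.T * (P ^ 2 + Q ^ 2)) / S.c ^ 2 with hMdef
  have hMc : S.c ^ 2 * M = A ^ 2 + S.T * (P ^ 2 + Q ^ 2) := by
    rw [hMdef]; field_simp
  have hcore : S.c / 2 * (‖X₁ S.T - X₂ S.T‖ ^ 2 + I2)
      ≤ A ^ 2 / (2 * S.c) + (S.T - S.t) * cst := by
    have h0 := hkey
    rw [hin0, sub_zero] at h0
    linarith [hlow, hIm, hsplit2, hAyoung]
  have hTt : S.T - S.t ≤ S.T := by linarith [S.ht0]
  have hcst0 : 0 ≤ cst := by rw [hcstdef]; positivity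
  have hMbound : ‖X₁ S.T - X₂ S.T‖ ^ 2 + I2 ≤ M := by
    rw [hMdef]
    exact arith1 hc hTt hT hP0 hQ0 hI2nn (sq_nonneg _) hcst hcst0 hcore
  have hM1 : ‖X₁ S.T - X₂ S.T‖ ^ 2 ≤ M := by linarith [hI2nn]
  have hM2 : I2 ≤ M := by linarith [sq_nonneg ‖X₁ S.T - X₂ S.T‖]
  -- B bound
  set B : ℝ := (A + Real.sqrt S.T * (P + Q)) / S.c with hBdef
  have hτ : 0 ≤ Real.sqrt S.T := Real.sqrt_nonneg _
  have hB0 : 0 ≤ B := by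
    apply div_nonneg _ hc.le
    positivity
  have hBc : S.c * B = A + Real.sqrt S.T * (P + Q) := by
    rw [hBdef]; field_simp
  have hMB : M ≤ B ^ 2 := by
    have hττ : Real.sqrt S.T * Real.sqrt S.T = S.T := Real.mul_self_sqrt hT.le
    have h1 : S.c ^ 2 * M ≤ S.c ^ 2 * B ^ 2 := by
      have h2 : S.c ^ 2 * B ^ 2 = (S.c * B) ^ 2 := by ring
      rw [h2, hBc, hMc]
      exact arith2 hA0 hP0 hQ0 hτ hττ
    exact le_of_mul_le_mul_left h1 (by positivity : (0:ℝ) < S.c ^ 2)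
  have hXT : ‖X₁ S.T - X₂ S.T‖ ≤ B :=
    sq_le_imp_le (norm_nonneg _) hB0 (le_trans hM1 hMB)
  -- "Cauchy-Schwarz" bound for the L¹ norm
  set SI : ℝ := ∫ r in S.t..S.T, (NX r + NY r) with hSIdef
  have hSIi : IntervalIntegrable (fun r => NX r + NY r) volume S.t S.T :=
    interv_int S (hNXc.add hNYc) S.mem_t S.mem_T
  have hSI : SI ≤ Real.sqrt (2 * S.T) * B := by
    apply eps_bound (by linarith) hB0
    intro ε hε
    have hpt : ∀ r ∈ Icc S.t S.T,
        NX r + NY r ≤ ε + (NX r ^ 2 + NY r ^ 2) * (1 / (2 * ε)) := by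
      intro r hr
      have h2ε : (0:ℝ) < 2 * ε := by linarith
      have key : (NX r + NY r) * (2 * ε) ≤ ε * (2 * ε) + (NX r ^ 2 + NY r ^ 2) := by
        nlinarith [sq_nonneg (NX r - ε), sq_nonneg (NY r - ε)]
      have e : ε + (NX r ^ 2 + NY r ^ 2) * (1 / (2 * ε))
          = (ε * (2 * ε) + (NX r ^ 2 + NY r ^ 2)) / (2 * ε) := by
        field_simp
      rw [e, le_div_iff₀ h2ε]
      exact key
    have h1 : SI ≤ ∫ r in S.t..S.T, (ε + (NX r ^ 2 + NY r ^ 2) * (1 / (2 * ε))) := by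
      rw [hSIdef]
      apply intervalIntegral.integral_mono_on htT hSIi ?_ hpt
      exact intervalIntegrable_const.add (hI2i.mul_const _)
    have h2 : ∫ r in S.t..S.T, (ε + (NX r ^ 2 + NY r ^ 2) * (1 / (2 * ε)))
        = (S.T - S.t) * ε + I2 * (1 / (2 * ε)) := by
      rw [intervalIntegral.integral_add intervalIntegrable_const (hI2i.mul_const _),
        intervalIntegral.integral_const, smul_eq_mul, intervalIntegral.integral_mul_const,
        hI2def]
    have h3 : (S.T - S.t) * ε ≤ S.T * ε := mul_le_mul_of_nonneg_right hTt hε.le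
    have h4 : I2 * (1 / (2 * ε)) ≤ B ^ 2 * (1 / (2 * ε)) := by
      apply mul_le_mul_of_nonneg_right (le_trans hM2 hMB)
      positivity
    have h5 : B ^ 2 * (1 / (2 * ε)) = B ^ 2 / (2 * ε) := by ring
    have h6 : 2 * S.T * ε / 2 = S.T * ε := by ring
    linarith
  -- driver difference bounds
  have hwb : ∀ r ∈ Icc S.t S.T, ‖Fd r + (φ₁ r - φ₂ r)‖ ≤ S.C * (NX r + NY r) + P := by
    intro r hr
    have h1 := norm_add_le (Fd r) (φ₁ r - φ₂ r)
    have h2 := S.F_lip hα (S.Icc_sub hr) (X₁ r) (X₂ r) (Y₁ r) (Y₂ r)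
    have h3 := hP r hr
    simp only [hFddef, hNXdef, hNYdef] at *
    linarith
  have hzb : ∀ r ∈ Icc S.t S.T, ‖Gd r + (ψ₁ r - ψ₂ r)‖ ≤ S.C * (NX r + NY r) + Q := by
    intro r hr
    have h1 := norm_add_le (Gd r) (ψ₁ r - ψ₂ r)
    have h2 := S.G_lip hα (S.Icc_sub hr) (X₁ r) (X₂ r) (Y₁ r) (Y₂ r)
    have h3 := hQ r hr
    simp only [hGddef, hNXdef, hNYdef] at *
    linarith
  have hIlin : ∫ r in S.t..S.T, (S.C * (NX r + NY r) + P)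
      = S.C * SI + (S.T - S.t) * P := by
    rw [intervalIntegral.integral_add (hSIi.const_mul _) intervalIntegrable_const,
      intervalIntegral.integral_const_mul, intervalIntegral.integral_const, smul_eq_mul,
      hSIdef]
  have hIlinQ : ∫ r in S.t..S.T, (S.C * (NX r + NY r) + Q)
      = S.C * SI + (S.T - S.t) * Q := by
    rw [intervalIntegral.integral_add (hSIi.const_mul _) intervalIntegrable_const,
      intervalIntegral.integral_const_mul, intervalIntegral.integral_const, smul_eq_mul,
      hSIdef]
  -- final constants
  set σ : ℝ := Real.sqrt (2 * S.T) with hσdef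
  have hσ : 0 ≤ σ := Real.sqrt_nonneg _
  have hE0 : 0 ≤ P + Q + A := by linarith
  have hKE : S.K * (P + Q + A) = (P + Q + A) + S.T * (P + Q + A)
      + S.C * ((1 + 2 * σ) * (1 + Real.sqrt S.T) * (P + Q + A)) / S.c := by
    unfold K
    rw [hσdef]
    ring
  have hnum2 : (1 + σ) * (A + Real.sqrt S.T * (P + Q))
      ≤ (1 + 2 * σ) * (1 + Real.sqrt S.T) * (P + Q + A) :=
    arith3 hσ hτ hA0 hP0 hQ0
  have hcne : S.c ≠ 0 := ne_of_gt hc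
  have hmain : (1 + σ) * B * S.C
      ≤ S.C * ((1 + 2 * σ) * (1 + Real.sqrt S.T) * (P + Q + A)) / S.c := by
    have e1 : (1 + σ) * B * S.C = S.C * ((1 + σ) * (S.c * B)) / S.c := by
      field_simp
    rw [e1]
    gcongr S.C * ?_ / S.c
    rw [hBc]; exact hnum2
  -- conclusion
  intro s hs
  constructor
  · -- X bound
    have hXe : X₁ s - X₂ s = ∫ r in S.t..s, (Fd r + (φ₁ r - φ₂ r)) := by
      have e2 : ∫ r in S.t..s, (Fd r + (φ₁ r - φ₂ r))
          = (∫ r in S.t..s, (S.F α r (X₁ r) (Y₁ r) + φ₁ r))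
            - ∫ r in S.t..s, (S.F α r (X₂ r) (Y₂ r) + φ₂ r) := by
        rw [← intervalIntegral.integral_sub (f := fun r => S.F α r (X₁ r) (Y₁ r) + φ₁ r)
          (g := fun r => S.F α r (X₂ r) (Y₂ r) + φ₂ r)
          (interv_int S ((S.F_comp_cont α hX₁c hY₁c).add hφ₁.continuousOn) S.mem_t hs)
          (interv_int S ((S.F_comp_cont α hX₂c hY₂c).add hφ₂.continuousOn) S.mem_t hs)]
        apply intervalIntegral.integral_congr
        intro r _
        simp only [hFddef]
        abel
      rw [hX₁e s hs, hX₂e s hs, e2]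
      abel
    have h1 : ‖X₁ s - X₂ s‖ ≤ ∫ r in S.t..s, ‖Fd r + (φ₁ r - φ₂ r)‖ := by
      rw [hXe]
      exact intervalIntegral.norm_integral_le_integral_norm hs.1
    have hnc : ContinuousOn (fun r => ‖Fd r + (φ₁ r - φ₂ r)‖) (Icc S.t S.T) :=
      (hFdc.add hdφc).norm
    have h2 : ∫ r in S.t..s, ‖Fd r + (φ₁ r - φ₂ r)‖
        ≤ ∫ r in S.t..S.T, ‖Fd r + (φ₁ r - φ₂ r)‖ := by
      apply intervalIntegral.integral_mono_interval le_rfl hs.1 hs.2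
      · exact Filter.Eventually.of_forall fun r => norm_nonneg _
      · exact interv_int S hnc S.mem_t S.mem_T
    have h3 : ∫ r in S.t..S.T, ‖Fd r + (φ₁ r - φ₂ r)‖
        ≤ ∫ r in S.t..S.T, (S.C * (NX r + NY r) + P) := by
      apply intervalIntegral.integral_mono_on htT (interv_int S hnc S.mem_t S.mem_T) ?_ hwb
      exact interv_int S ((continuousOn_const.mul (hNXc.add hNYc)).add continuousOn_const)
        S.mem_t S.mem_T
    have h4 : S.C * SI ≤ S.C * (σ * B) :=
      mul_le_mul_of_nonneg_left (by rw [hσdef]; exact hSI) hC.le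
    have h5 : (S.T - S.t) * P ≤ S.T * P := mul_le_mul_of_nonneg_right hTt hP0
    have h6 : S.C * (σ * B) ≤ (1 + σ) * B * S.C := by
      have e : (1 + σ) * B * S.C = S.C * B + S.C * (σ * B) := by ring
      rw [e]
      linarith [mul_nonneg hC.le hB0]
    have h7 := hmain
    have h8 : S.T * P ≤ S.T * (P + Q + A) :=
      mul_le_mul_of_nonneg_left (by linarith) hT.le
    rw [hKE]
    linarith
  · -- Y bound
    have hYe : Y₁ s - Y₂ s = (S.H α (X₁ S.T) - S.H α (X₂ S.T)) + (a₁ - a₂)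
        + ∫ r in s..S.T, (Gd r + (ψ₁ r - ψ₂ r)) := by
      have e2 : ∫ r in s..S.T, (Gd r + (ψ₁ r - ψ₂ r))
          = (∫ r in s..S.T, (S.G α r (X₁ r) (Y₁ r) + ψ₁ r))
            - ∫ r in s..S.T, (S.G α r (X₂ r) (Y₂ r) + ψ₂ r) := by
        rw [← intervalIntegral.integral_sub (f := fun r => S.G α r (X₁ r) (Y₁ r) + ψ₁ r)
          (g := fun r => S.G α r (X₂ r) (Y₂ r) + ψ₂ r)
          (interv_int S ((S.G_comp_cont α hX₁c hY₁c).add hψ₁.continuousOn) hs S.mem_T)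
          (interv_int S ((S.G_comp_cont α hX₂c hY₂c).add hψ₂.continuousOn) hs S.mem_T)]
        apply intervalIntegral.integral_congr
        intro r _
        simp only [hGddef]
        abel
      rw [hY₁e s hs, hY₂e s hs, e2]
      abel
    have hnc : ContinuousOn (fun r => ‖Gd r + (ψ₁ r - ψ₂ r)‖) (Icc S.t S.T) :=
      (hGdc.add hdψc).norm
    have h1 : ‖Y₁ s - Y₂ s‖ ≤ ‖S.H α (X₁ S.T) - S.H α (X₂ S.T)‖ + ‖a₁ - a₂‖
        + ‖∫ r in s..S.T, (Gd r + (ψ₁ r - ψ₂ r))‖ := by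
      rw [hYe]
      exact le_trans (norm_add_le _ _) (by linarith [norm_add_le (S.H α (X₁ S.T) - S.H α (X₂ S.T)) (a₁ - a₂)])
    have h2 : ‖S.H α (X₁ S.T) - S.H α (X₂ S.T)‖ ≤ S.C * B := by
      apply le_trans (S.H_lip hα (X₁ S.T) (X₂ S.T))
      exact mul_le_mul_of_nonneg_left hXT hC.le
    have h3 : ‖∫ r in s..S.T, (Gd r + (ψ₁ r - ψ₂ r))‖
        ≤ ∫ r in s..S.T, ‖Gd r + (ψ₁ r - ψ₂ r)‖ :=
      intervalIntegral.norm_integral_le_integral_norm hs.2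
    have h4 : ∫ r in s..S.T, ‖Gd r + (ψ₁ r - ψ₂ r)‖
        ≤ ∫ r in S.t..S.T, ‖Gd r + (ψ₁ r - ψ₂ r)‖ := by
      apply intervalIntegral.integral_mono_interval hs.1 hs.2 le_rfl
      · exact Filter.Eventually.of_forall fun r => norm_nonneg _
      · exact interv_int S hnc S.mem_t S.mem_T
    have h5 : ∫ r in S.t..S.T, ‖Gd r + (ψ₁ r - ψ₂ r)‖
        ≤ ∫ r in S.t..S.T, (S.C * (NX r + NY r) + Q) := by
      apply intervalIntegral.integral_mono_on htT (interv_int S hnc S.mem_t S.mem_T) ?_ hzb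
      exact interv_int S ((continuousOn_const.mul (hNXc.add hNYc)).add continuousOn_const)
        S.mem_t S.mem_T
    have h6 : S.C * SI ≤ S.C * (σ * B) :=
      mul_le_mul_of_nonneg_left (by rw [hσdef]; exact hSI) hC.le
    have h7 : (S.T - S.t) * Q ≤ S.T * Q := mul_le_mul_of_nonneg_right hTt hQ0
    have h8 : S.C * B + S.C * (σ * B) ≤ (1 + σ) * B * S.C := le_of_eq (by ring)
    have h9 := hmain
    have h10 : S.T * Q ≤ S.T * (P + Q + A) :=
      mul_le_mul_of_nonneg_left (by linarith) hT.le
    have h11 : A ≤ P + Q + A := by linarith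
    rw [hKE]
    linarith
  
end Setup

namespace Setup

lemma F_zero (S : Setup n) (s : ℝ) (u v : Vec n) : S.F 0 s u v = -v := by
  simp [F]

lemma G_zero (S : Setup n) (s : ℝ) (u v : Vec n) : S.G 0 s u v = u := by
  simp [G]

lemma H_zero (S : Setup n) (u : Vec n) : S.H 0 u = u := by
  simp [H]

set_option maxHeartbeats 1000000 in
/-- Base case of the continuation: the linear system at `α = 0` is solvable. -/
lemma base (S : Setup n) : S.AllSolv 0 := by
  intro φ ψ hφ hψ a
  set w₁ : ℝ → Vec n := fun r => φ r + ψ r with hw₁def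
  set w₂ : ℝ → Vec n := fun r => φ r - ψ r with hw₂def
  have hw₁c : Continuous w₁ := hφ.add hψ
  have hw₂c : Continuous w₂ := hφ.sub hψ
  have he₁c : Continuous (fun r => Real.exp (-r) • w₁ r) :=
    (Real.continuous_exp.comp continuous_neg).smul hw₁c
  have he₂c : Continuous (fun r => Real.exp r • w₂ r) := Real.continuous_exp.smul hw₂c
  set I : ℝ → Vec n := fun s => ∫ r in s..S.T, Real.exp (-r) • w₁ r with hIdef
  set J : ℝ → Vec n := fun s => ∫ r in S.t..s, Real.exp r • w₂ r with hJdef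
  have hI : ∀ s : ℝ, HasDerivAt I (-(Real.exp (-s) • w₁ s)) s := by
    intro s
    exact intervalIntegral.integral_hasDerivAt_left (he₁c.intervalIntegrable _ _)
      (he₁c.stronglyMeasurableAtFilter _ _) he₁c.continuousAt
  have hJ : ∀ s : ℝ, HasDerivAt J (Real.exp s • w₂ s) s := by
    intro s
    exact intervalIntegral.integral_hasDerivAt_right (he₂c.intervalIntegrable _ _)
      (he₂c.stronglyMeasurableAtFilter _ _) he₂c.continuousAt
  have hIc : Continuous I := by
    have : Differentiable ℝ I := fun s => (hI s).differentiableAt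
    exact this.continuous
  have hJc : Continuous J := by
    have : Differentiable ℝ J := fun s => (hJ s).differentiableAt
    exact this.continuous
  set V : ℝ → Vec n := fun s => -(Real.exp (s - S.T)) • a - Real.exp s • I s with hVdef
  set KK : Vec n := Real.exp S.t • ((2:ℝ) • S.x - V S.t) with hKKdef
  set U : ℝ → Vec n := fun s => Real.exp (-s) • (KK + J s) with hUdef
  have hexp1 : ∀ s : ℝ, HasDerivAt (fun s : ℝ => Real.exp (s - S.T)) (Real.exp (s - S.T)) s := by
    intro s
    have := ((hasDerivAt_id s).sub_const S.T).exp
    simpa using this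
  have hexp2 : ∀ s : ℝ, HasDerivAt (fun s : ℝ => Real.exp (-s)) (-(Real.exp (-s))) s := by
    intro s
    have := ((hasDerivAt_id s).neg).exp
    simpa using this
  have hV : ∀ s : ℝ, HasDerivAt V (V s + w₁ s) s := by
    intro s
    have h1 : HasDerivAt (fun s : ℝ => -(Real.exp (s - S.T)) • a)
        (-(Real.exp (s - S.T)) • a) s := by
      have := ((hexp1 s).neg).smul_const a
      simpa using this
    have h2 : HasDerivAt (fun s : ℝ => Real.exp s • I s)
        (Real.exp s • (-(Real.exp (-s) • w₁ s)) + Real.exp s • I s) s :=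
      (Real.hasDerivAt_exp s).smul (hI s)
    have hd := h1.sub h2
    have he : Real.exp s • (Real.exp (-s) • w₁ s) = w₁ s := by
      rw [smul_smul, ← Real.exp_add, add_neg_cancel, Real.exp_zero, one_smul]
    refine hd.congr_deriv ?_
    rw [smul_neg, he]
    simp only [hVdef]
    module
  have hU : ∀ s : ℝ, HasDerivAt U (-(U s) + w₂ s) s := by
    intro s
    have hd := (hexp2 s).smul ((hJ s).const_add KK)
    have he : Real.exp (-s) • (Real.exp s • w₂ s) = w₂ s := by
      rw [smul_smul, ← Real.exp_add, neg_add_cancel, Real.exp_zero, one_smul]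
    refine hd.congr_deriv ?_
    rw [he]
    simp only [hUdef]
    module
  set X : ℝ → Vec n := fun s => (2⁻¹:ℝ) • (U s + V s) with hXdef
  set Y : ℝ → Vec n := fun s => (2⁻¹:ℝ) • (U s - V s) with hYdef
  have hX' : ∀ s : ℝ, HasDerivAt X (-(Y s) + φ s) s := by
    intro s
    have hd := ((hU s).add (hV s)).const_smul (2⁻¹:ℝ)
    refine hd.congr_deriv ?_
    simp only [hYdef, hw₁def, hw₂def]
    module
  have hY' : ∀ s : ℝ, HasDerivAt Y (-(X s) - ψ s) s := by
    intro s
    have hd := ((hU s).sub (hV s)).const_smul (2⁻¹:ℝ)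
    refine hd.congr_deriv ?_
    simp only [hXdef, hw₁def, hw₂def]
    module
  have hXc : Continuous X := by
    have : Differentiable ℝ X := fun s => (hX' s).differentiableAt
    exact this.continuous
  have hYc : Continuous Y := by
    have : Differentiable ℝ Y := fun s => (hY' s).differentiableAt
    exact this.continuous
  -- boundary values
  have hUt : U S.t = (2:ℝ) • S.x - V S.t := by
    have hJt : J S.t = 0 := intervalIntegral.integral_same
    simp only [hUdef, hKKdef, hJt, add_zero, smul_smul, ← Real.exp_add, neg_add_cancel,
      Real.exp_zero, one_smul]
  have hXt : X S.t = S.x := by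
    rw [hXdef]
    simp only
    rw [hUt]
    module
  have hVT : V S.T = -a := by
    have hIT : I S.T = 0 := intervalIntegral.integral_same
    simp only [hVdef, hIT, smul_zero, sub_zero, sub_self, Real.exp_zero, neg_smul, one_smul]
  have hYT : Y S.T = X S.T + a := by
    rw [hXdef, hYdef]
    simp only
    rw [hVT]
    module
  refine ⟨X, Y, hXc.continuousOn, hYc.continuousOn, ?_, ?_⟩
  · intro s hs
    have hint : ∀ u₁ u₂ : ℝ, (∫ r in u₁..u₂, (-(Y r) + φ r)) = X u₂ - X u₁ := by
      intro u₁ u₂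
      exact intervalIntegral.integral_eq_sub_of_hasDerivAt (fun r _ => hX' r)
        ((hYc.neg.add hφ).intervalIntegrable _ _)
    have : (fun r => S.F 0 r (X r) (Y r) + φ r) = fun r => -(Y r) + φ r := by
      funext r
      rw [S.F_zero]
    rw [this, hint S.t s, hXt]
    abel
  · intro s hs
    have hint : ∀ u₁ u₂ : ℝ, (∫ r in u₁..u₂, (-(X r) - ψ r)) = Y u₂ - Y u₁ := by
      intro u₁ u₂
      exact intervalIntegral.integral_eq_sub_of_hasDerivAt (fun r _ => hY' r)
        ((hXc.neg.sub hψ).intervalIntegrable _ _)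
    have h2 : (fun r => S.G 0 r (X r) (Y r) + ψ r) = fun r => -(-(X r) - ψ r) := by
      funext r
      rw [S.G_zero]
      abel
    rw [S.H_zero, h2, intervalIntegral.integral_neg, hint s S.T, hYT]
    abel

end Setup

namespace Setup

/-- Step size for the continuation method. -/
def δ₀ (S : Setup n) : ℝ := 1 / (12 * S.K * S.C)

lemma δ₀_pos (S : Setup n) : 0 < S.δ₀ := by
  have h1 := S.K_pos; have h2 := S.C_pos
  unfold δ₀; positivity

set_option maxHeartbeats 2000000 in
/-- Continuation step: solvability propagates from `α` to `α + δ` for small `δ`. -/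
lemma step (S : Setup n) {α δ : ℝ} (hα : α ∈ Icc (0:ℝ) 1) (hα' : α + δ ∈ Icc (0:ℝ) 1)
    (hδ0 : 0 ≤ δ) (hδ : δ ≤ S.δ₀) (hsolv : S.AllSolv α) : S.AllSolv (α + δ) := by
  intro φ ψ hφ hψ a
  have htT := S.htT
  classical
  set θ : ℝ → ℝ := fun r => (projIcc S.t S.T htT r : ℝ) with hθdef
  have hθc : Continuous θ := continuous_subtype_val.comp continuous_projIcc
  have hθmem : ∀ r, θ r ∈ Icc S.t S.T := fun r => (projIcc S.t S.T htT r).2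
  set bx : C(Icc S.t S.T, Vec n × Vec n) → ℝ → Vec n :=
    fun Z r => (Z (projIcc S.t S.T htT r)).1 with hbxdef
  set byy : C(Icc S.t S.T, Vec n × Vec n) → ℝ → Vec n :=
    fun Z r => (Z (projIcc S.t S.T htT r)).2 with hbyydef
  have hbxc : ∀ Z, Continuous (bx Z) :=
    fun Z => (Z.continuous.comp continuous_projIcc).fst
  have hbyyc : ∀ Z, Continuous (byy Z) :=
    fun Z => (Z.continuous.comp continuous_projIcc).snd
  set Φf : C(Icc S.t S.T, Vec n × Vec n) → ℝ → Vec n :=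
    fun Z r => φ r + δ • (S.f (θ r) (bx Z r) (byy Z r) + byy Z r) with hΦfdef
  set Φg : C(Icc S.t S.T, Vec n × Vec n) → ℝ → Vec n :=
    fun Z r => ψ r + δ • (S.g (θ r) (bx Z r) (byy Z r) - bx Z r) with hΦgdef
  set Φa : C(Icc S.t S.T, Vec n × Vec n) → Vec n :=
    fun Z => a + δ • (S.h (bx Z S.T) - bx Z S.T) with hΦadef
  have hfZc : ∀ Z, Continuous (fun r => S.f (θ r) (bx Z r) (byy Z r)) := by
    intro Z
    have := S.hf_cont.comp_continuous (hθc.prodMk ((hbxc Z).prodMk (hbyyc Z)))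
      (fun r => ⟨S.Icc_sub (hθmem r), mem_univ _, mem_univ _⟩)
    exact this
  have hgZc : ∀ Z, Continuous (fun r => S.g (θ r) (bx Z r) (byy Z r)) := by
    intro Z
    have := S.hg_cont.comp_continuous (hθc.prodMk ((hbxc Z).prodMk (hbyyc Z)))
      (fun r => ⟨S.Icc_sub (hθmem r), mem_univ _, mem_univ _⟩)
    exact this
  have hΦfc : ∀ Z, Continuous (Φf Z) :=
    fun Z => by have := hfZc Z; have := hbyyc Z; fun_prop
  have hΦgc : ∀ Z, Continuous (Φg Z) :=
    fun Z => by have := hgZc Z; have := hbxc Z; fun_prop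
  have hex : ∀ Z : C(Icc S.t S.T, Vec n × Vec n), ∃ X Y : ℝ → Vec n,
      S.Sol α (Φf Z) (Φg Z) (Φa Z) X Y :=
    fun Z => hsolv (Φf Z) (Φg Z) (hΦfc Z) (hΦgc Z) (Φa Z)
  choose XF YF hsolF using hex
  have hrest : ∀ Z, Continuous (fun p : Icc S.t S.T => (XF Z ↑p, YF Z ↑p)) :=
    fun Z => ((hsolF Z).1.restrict).prodMk ((hsolF Z).2.1.restrict)
  set Θ : C(Icc S.t S.T, Vec n × Vec n) → C(Icc S.t S.T, Vec n × Vec n) :=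
    fun Z => ContinuousMap.mk _ (hrest Z) with hΘdef
  -- contraction estimate
  have hcontr : ∀ Z₁ Z₂, dist (Θ Z₁) (Θ Z₂) ≤ 2⁻¹ * dist Z₁ Z₂ := by
    intro Z₁ Z₂
    have hd0 : (0:ℝ) ≤ dist Z₁ Z₂ := dist_nonneg
    have hbxd : ∀ r, ‖bx Z₁ r - bx Z₂ r‖ ≤ dist Z₁ Z₂ := by
      intro r
      have h1 : dist (Z₁ (projIcc S.t S.T htT r)) (Z₂ (projIcc S.t S.T htT r)) ≤ dist Z₁ Z₂ :=
        ContinuousMap.dist_apply_le_dist _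
      calc ‖bx Z₁ r - bx Z₂ r‖
          ≤ ‖Z₁ (projIcc S.t S.T htT r) - Z₂ (projIcc S.t S.T htT r)‖ :=
            norm_fst_le (Z₁ (projIcc S.t S.T htT r) - Z₂ (projIcc S.t S.T htT r))
        _ = dist (Z₁ (projIcc S.t S.T htT r)) (Z₂ (projIcc S.t S.T htT r)) :=
            (dist_eq_norm _ _).symm
        _ ≤ dist Z₁ Z₂ := h1
    have hbyd : ∀ r, ‖byy Z₁ r - byy Z₂ r‖ ≤ dist Z₁ Z₂ := by
      intro r
      have h1 : dist (Z₁ (projIcc S.t S.T htT r)) (Z₂ (projIcc S.t S.T htT r)) ≤ dist Z₁ Z₂ :=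
        ContinuousMap.dist_apply_le_dist _
      calc ‖byy Z₁ r - byy Z₂ r‖
          ≤ ‖Z₁ (projIcc S.t S.T htT r) - Z₂ (projIcc S.t S.T htT r)‖ :=
            norm_snd_le (Z₁ (projIcc S.t S.T htT r) - Z₂ (projIcc S.t S.T htT r))
        _ = dist (Z₁ (projIcc S.t S.T htT r)) (Z₂ (projIcc S.t S.T htT r)) :=
            (dist_eq_norm _ _).symm
        _ ≤ dist Z₁ Z₂ := h1
    have hC₁ := S.hC₁
    have hCdef : S.C = S.C₁ + 1 := rfl
    have hPf : ∀ r ∈ Icc S.t S.T, ‖Φf Z₁ r - Φf Z₂ r‖ ≤ 2 * S.C * δ * dist Z₁ Z₂ := by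
      intro r hr
      have e1 : Φf Z₁ r - Φf Z₂ r
          = δ • ((S.f (θ r) (bx Z₁ r) (byy Z₁ r) - S.f (θ r) (bx Z₂ r) (byy Z₂ r))
            + (byy Z₁ r - byy Z₂ r)) := by
        simp only [hΦfdef]
        module
      rw [e1, norm_smul, Real.norm_eq_abs, abs_of_nonneg hδ0]
      have h2 := norm_add_le (S.f (θ r) (bx Z₁ r) (byy Z₁ r) - S.f (θ r) (bx Z₂ r) (byy Z₂ r))
        (byy Z₁ r - byy Z₂ r)
      have h3 := S.hf_lip (θ r) (S.Icc_sub (hθmem r)) (bx Z₁ r) (bx Z₂ r) (byy Z₁ r) (byy Z₂ r)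
      have h4 := hbxd r
      have h5 := hbyd r
      have h6 : (0:ℝ) ≤ ‖bx Z₁ r - bx Z₂ r‖ := norm_nonneg _
      have h7 : (0:ℝ) ≤ ‖byy Z₁ r - byy Z₂ r‖ := norm_nonneg _
      have h8 : ‖S.f (θ r) (bx Z₁ r) (byy Z₁ r) - S.f (θ r) (bx Z₂ r) (byy Z₂ r)
          + (byy Z₁ r - byy Z₂ r)‖ ≤ 2 * S.C * dist Z₁ Z₂ := by
        rw [hCdef]
        nlinarith [hC₁]
      calc δ * ‖S.f (θ r) (bx Z₁ r) (byy Z₁ r) - S.f (θ r) (bx Z₂ r) (byy Z₂ r)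
          + (byy Z₁ r - byy Z₂ r)‖ ≤ δ * (2 * S.C * dist Z₁ Z₂) :=
            mul_le_mul_of_nonneg_left h8 hδ0
        _ = 2 * S.C * δ * dist Z₁ Z₂ := by ring
    have hQg : ∀ r ∈ Icc S.t S.T, ‖Φg Z₁ r - Φg Z₂ r‖ ≤ 2 * S.C * δ * dist Z₁ Z₂ := by
      intro r hr
      have e1 : Φg Z₁ r - Φg Z₂ r
          = δ • ((S.g (θ r) (bx Z₁ r) (byy Z₁ r) - S.g (θ r) (bx Z₂ r) (byy Z₂ r))
            - (bx Z₁ r - bx Z₂ r)) := by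
        simp only [hΦgdef]
        module
      rw [e1, norm_smul, Real.norm_eq_abs, abs_of_nonneg hδ0]
      have h2 := norm_sub_le (S.g (θ r) (bx Z₁ r) (byy Z₁ r) - S.g (θ r) (bx Z₂ r) (byy Z₂ r))
        (bx Z₁ r - bx Z₂ r)
      have h3 := S.hg_lip (θ r) (S.Icc_sub (hθmem r)) (bx Z₁ r) (bx Z₂ r) (byy Z₁ r) (byy Z₂ r)
      have h4 := hbxd r
      have h5 := hbyd r
      have h6 : (0:ℝ) ≤ ‖bx Z₁ r - bx Z₂ r‖ := norm_nonneg _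
      have h7 : (0:ℝ) ≤ ‖byy Z₁ r - byy Z₂ r‖ := norm_nonneg _
      have h8 : ‖S.g (θ r) (bx Z₁ r) (byy Z₁ r) - S.g (θ r) (bx Z₂ r) (byy Z₂ r)
          - (bx Z₁ r - bx Z₂ r)‖ ≤ 2 * S.C * dist Z₁ Z₂ := by
        rw [hCdef]
        nlinarith [hC₁]
      calc δ * ‖S.g (θ r) (bx Z₁ r) (byy Z₁ r) - S.g (θ r) (bx Z₂ r) (byy Z₂ r)
          - (bx Z₁ r - bx Z₂ r)‖ ≤ δ * (2 * S.C * dist Z₁ Z₂) :=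
            mul_le_mul_of_nonneg_left h8 hδ0
        _ = 2 * S.C * δ * dist Z₁ Z₂ := by ring
    have hAa : ‖Φa Z₁ - Φa Z₂‖ ≤ 2 * S.C * δ * dist Z₁ Z₂ := by
      have e1 : Φa Z₁ - Φa Z₂
          = δ • ((S.h (bx Z₁ S.T) - S.h (bx Z₂ S.T)) - (bx Z₁ S.T - bx Z₂ S.T)) := by
        simp only [hΦadef]
        module
      rw [e1, norm_smul, Real.norm_eq_abs, abs_of_nonneg hδ0]
      have h2 := norm_sub_le (S.h (bx Z₁ S.T) - S.h (bx Z₂ S.T)) (bx Z₁ S.T - bx Z₂ S.T)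
      have h3 := S.hh_lip (bx Z₁ S.T) (bx Z₂ S.T)
      have h4 := hbxd S.T
      have h6 : (0:ℝ) ≤ ‖bx Z₁ S.T - bx Z₂ S.T‖ := norm_nonneg _
      have h8 : ‖(S.h (bx Z₁ S.T) - S.h (bx Z₂ S.T)) - (bx Z₁ S.T - bx Z₂ S.T)‖
          ≤ 2 * S.C * dist Z₁ Z₂ := by
        rw [hCdef]
        nlinarith [hC₁]
      calc δ * ‖(S.h (bx Z₁ S.T) - S.h (bx Z₂ S.T)) - (bx Z₁ S.T - bx Z₂ S.T)‖
          ≤ δ * (2 * S.C * dist Z₁ Z₂) := mul_le_mul_of_nonneg_left h8 hδ0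
        _ = 2 * S.C * δ * dist Z₁ Z₂ := by ring
    have hstab := S.stab hα (hΦfc Z₁) (hΦgc Z₁) (hΦfc Z₂) (hΦgc Z₂)
      (hsolF Z₁) (hsolF Z₂) hPf hQg hAa
    have hsum : S.K * (2 * S.C * δ * dist Z₁ Z₂ + 2 * S.C * δ * dist Z₁ Z₂
        + 2 * S.C * δ * dist Z₁ Z₂) ≤ 2⁻¹ * dist Z₁ Z₂ := by
      have hK := S.K_pos
      have hC := S.C_pos
      have h1 : S.K * (2 * S.C * δ * dist Z₁ Z₂ + 2 * S.C * δ * dist Z₁ Z₂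
          + 2 * S.C * δ * dist Z₁ Z₂) = 6 * S.K * S.C * δ * dist Z₁ Z₂ := by ring
      have h2 : 6 * S.K * S.C * S.δ₀ = 2⁻¹ := by
        unfold δ₀
        field_simp
        ring
      have h3 : 6 * S.K * S.C * δ ≤ 6 * S.K * S.C * S.δ₀ :=
        mul_le_mul_of_nonneg_left hδ (by positivity)
      have h4 : 6 * S.K * S.C * δ * dist Z₁ Z₂ ≤ 2⁻¹ * dist Z₁ Z₂ := by
        rw [← h2]
        exact mul_le_mul_of_nonneg_right h3 hd0
      linarith
    apply (ContinuousMap.dist_le (by positivity)).2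
    intro p
    have hp := p.2
    have hXb := (hstab ↑p hp).1
    have hYb := (hstab ↑p hp).2
    have hθp : Θ Z₁ p = (XF Z₁ ↑p, YF Z₁ ↑p) := rfl
    have hθp2 : Θ Z₂ p = (XF Z₂ ↑p, YF Z₂ ↑p) := rfl
    rw [hθp, hθp2, Prod.dist_eq]
    apply max_le
    · rw [dist_eq_norm]; linarith
    · rw [dist_eq_norm]; linarith
  -- Banach fixed point
  have hCW : ContractingWith (2⁻¹ : NNReal) Θ := by
    constructor
    · rw [← NNReal.coe_lt_coe]
      push_cast
      norm_num
    · apply LipschitzWith.of_dist_le_mul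
      intro x y
      have := hcontr x y
      have hcc : ((2⁻¹ : NNReal) : ℝ) = 2⁻¹ := by norm_num
      rw [hcc]
      exact this
  have hne : Nonempty C(Icc S.t S.T, Vec n × Vec n) := ⟨ContinuousMap.const _ 0⟩
  set Zfix := ContractingWith.fixedPoint Θ hCW with hZfixdef
  have hfix : Θ Zfix = Zfix := hCW.fixedPoint_isFixedPt
  obtain ⟨hXc, hYc, hXe, hYe⟩ := hsolF Zfix
  have hagree : ∀ r, r ∈ Icc S.t S.T →
      Zfix (projIcc S.t S.T htT r) = (XF Zfix r, YF Zfix r) := by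
    intro r hr
    have h1 : Θ Zfix (projIcc S.t S.T htT r) = Zfix (projIcc S.t S.T htT r) := by rw [hfix]
    rw [← h1]
    show (XF Zfix ↑(projIcc S.t S.T htT r), YF Zfix ↑(projIcc S.t S.T htT r)) = _
    rw [projIcc_of_mem htT hr]
  refine ⟨XF Zfix, YF Zfix, hXc, hYc, ?_, ?_⟩
  · intro s hs
    rw [hXe s hs]
    congr 1
    apply intervalIntegral.integral_congr
    intro r hr'
    have hrI : r ∈ Icc S.t S.T := by
      rw [uIcc_of_le hs.1] at hr'
      exact Icc_subset_Icc le_rfl hs.2 hr'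
    have hbx1 : bx Zfix r = XF Zfix r := by
      rw [hbxdef]; simp only; rw [hagree r hrI]
    have hby1 : byy Zfix r = YF Zfix r := by
      rw [hbyydef]; simp only; rw [hagree r hrI]
    have hθr : θ r = r := by
      rw [hθdef]; simp only; rw [projIcc_of_mem htT hrI]
    show S.F α r (XF Zfix r) (YF Zfix r) + Φf Zfix r
        = S.F (α + δ) r (XF Zfix r) (YF Zfix r) + φ r
    rw [hΦfdef]
    simp only
    rw [hθr, hbx1, hby1]
    unfold F
    module
  · intro s hs
    rw [hYe s hs]
    have hbxT : bx Zfix S.T = XF Zfix S.T := by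
      rw [hbxdef]; simp only; rw [hagree S.T S.mem_T]
    have hHa : S.H α (XF Zfix S.T) + Φa Zfix = S.H (α + δ) (XF Zfix S.T) + a := by
      rw [hΦadef]
      simp only
      rw [hbxT]
      unfold H
      module
    rw [hHa]
    congr 1
    apply intervalIntegral.integral_congr
    intro r hr'
    have hrI : r ∈ Icc S.t S.T := by
      rw [uIcc_of_le hs.2] at hr'
      exact Icc_subset_Icc hs.1 le_rfl hr'
    have hbx1 : bx Zfix r = XF Zfix r := by
      rw [hbxdef]; simp only; rw [hagree r hrI]
    have hby1 : byy Zfix r = YF Zfix r := by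
      rw [hbyydef]; simp only; rw [hagree r hrI]
    have hθr : θ r = r := by
      rw [hθdef]; simp only; rw [projIcc_of_mem htT hrI]
    show S.G α r (XF Zfix r) (YF Zfix r) + Φg Zfix r
        = S.G (α + δ) r (XF Zfix r) (YF Zfix r) + ψ r
    rw [hΦgdef]
    simp only
    rw [hθr, hbx1, hby1]
    unfold G
    module

end Setup

namespace Setup

/-- Solvability at `α = 1` by iterating the continuation step. -/
lemma allSolv_one (S : Setup n) : S.AllSolv 1 := by
  have main : ∀ k : ℕ, ∀ α : ℝ, 0 ≤ α → α ≤ 1 → α ≤ k * S.δ₀ → S.AllSolv α := by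
    intro k
    induction k with
    | zero =>
      intro α h0 h1 hk
      norm_num at hk
      have hα0 : α = 0 := le_antisymm hk h0
      rw [hα0]
      exact S.base
    | succ k ih =>
      intro α h0 h1 hk
      by_cases hle : α ≤ k * S.δ₀
      · exact ih α h0 h1 hle
      · push_neg at hle
        have hδp := S.δ₀_pos
        set β := max 0 (α - S.δ₀) with hβdef
        have hβ0 : 0 ≤ β := le_max_left _ _
        have hβα : β ≤ α := max_le h0 (by linarith)
        have hβ1 : β ≤ 1 := le_trans hβα h1
        have hk' : α ≤ k * S.δ₀ + S.δ₀ := by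
          push_cast at hk
          linarith
        have hβk : β ≤ k * S.δ₀ := by
          apply max_le
          · positivity
          · linarith
        have hδb : α - β ≤ S.δ₀ := by
          rcases le_total (α - S.δ₀) 0 with h | h
          · have : β = 0 := max_eq_left h
            rw [this]
            linarith
          · have : β = α - S.δ₀ := max_eq_right h
            rw [this]
            linarith
        have hsβ := ih β hβ0 hβ1 hβk
        have hstep := S.step (δ := α - β) ⟨hβ0, hβ1⟩
          (by constructor <;> [linarith; linarith] : β + (α - β) ∈ Icc (0:ℝ) 1)
          (by linarith) hδb hsβ
        rw [show β + (α - β) = α by ring] at hstep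
        exact hstep
  apply main ⌈1 / S.δ₀⌉₊ 1 (by norm_num) le_rfl
  have h := Nat.le_ceil (1 / S.δ₀)
  have hp := S.δ₀_pos
  calc (1:ℝ) = (1 / S.δ₀) * S.δ₀ := by field_simp
    _ ≤ (⌈1 / S.δ₀⌉₊ : ℝ) * S.δ₀ := mul_le_mul_of_nonneg_right h hp.le

lemma F_one (S : Setup n) (s : ℝ) (u v : Vec n) : S.F 1 s u v = S.f s u v := by
  simp [F]

lemma G_one (S : Setup n) (s : ℝ) (u v : Vec n) : S.G 1 s u v = S.g s u v := by
  simp [G]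

lemma H_one (S : Setup n) (u : Vec n) : S.H 1 u = S.h u := by
  simp [H]

/-- Translation between `Sol 1 0 0 0` and `IsFBSol`. -/
lemma sol_iff (S : Setup n) (X Y : ℝ → Vec n) :
    S.Sol 1 (fun _ => 0) (fun _ => 0) 0 X Y ↔ IsFBSol S.T S.f S.g S.h S.t S.x X Y := by
  have e1 : (fun r => S.F 1 r (X r) (Y r) + (fun _ : ℝ => (0 : Vec n)) r)
      = fun r => S.f r (X r) (Y r) := by
    funext r
    rw [S.F_one]
    simp
  have e2 : (fun r => S.G 1 r (X r) (Y r) + (fun _ : ℝ => (0 : Vec n)) r)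
      = fun r => S.g r (X r) (Y r) := by
    funext r
    rw [S.G_one]
    simp
  unfold Sol IsFBSol
  rw [e1, e2, S.H_one]
  simp only [add_zero]

/-- Uniqueness of solutions of the original system. -/
lemma uniq (S : Setup n) {X₁ Y₁ X₂ Y₂ : ℝ → Vec n}
    (h1 : IsFBSol S.T S.f S.g S.h S.t S.x X₁ Y₁)
    (h2 : IsFBSol S.T S.f S.g S.h S.t S.x X₂ Y₂) :
    EqOn X₁ X₂ (Icc S.t S.T) ∧ EqOn Y₁ Y₂ (Icc S.t S.T) := by
  have hs1 := (S.sol_iff X₁ Y₁).2 h1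
  have hs2 := (S.sol_iff X₂ Y₂).2 h2
  have hstab := S.stab (α := 1) ⟨zero_le_one, le_rfl⟩
    continuous_const continuous_const continuous_const continuous_const hs1 hs2
    (P := 0) (Q := 0) (A := 0)
    (fun r _ => by simp) (fun r _ => by simp) (by simp)
  constructor
  · intro s hs
    have := (hstab s hs).1
    norm_num at this
    exact sub_eq_zero.1 this
  · intro s hs
    have := (hstab s hs).2
    norm_num at this
    exact sub_eq_zero.1 this

/-- Existence of solutions of the original system. -/
lemma exists_sol (S : Setup n) : ∃ X Y : ℝ → Vec n, IsFBSol S.T S.f S.g S.h S.t S.x X Y := by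
  obtain ⟨X, Y, hsol⟩ := S.allSolv_one (fun _ => 0) (fun _ => 0)
    continuous_const continuous_const 0
  exact ⟨X, Y, (S.sol_iff X Y).1 hsol⟩

end Setup

end FBSDEProof

/-- Deterministic forward–backward existence and uniqueness (Lemma 5 of the paper):
under the Lipschitz and monotonicity assumptions, for every `t ∈ [0,T]` and every `x ∈ ℝⁿ`
there is exactly one solution (as a pair of continuous maps on `[t,T]`) of the
forward–backward system with data `(t, x)`. -/
theorem fbsde_deterministic_exists_unique
    (n : ℕ) (hn : 1 ≤ n) (T : ℝ) (hT : 0 < T)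
    (f g : ℝ → Vec n → Vec n → Vec n) (h : Vec n → Vec n)
    (hf_cont : ContinuousOn (fun p : ℝ × Vec n × Vec n => f p.1 p.2.1 p.2.2)
      (Icc 0 T ×ˢ (univ ×ˢ univ)))
    (hg_cont : ContinuousOn (fun p : ℝ × Vec n × Vec n => g p.1 p.2.1 p.2.2)
      (Icc 0 T ×ˢ (univ ×ˢ univ)))
    (hh_cont : Continuous h)
    (C₁ : ℝ) (hC₁ : 0 < C₁)
    (hf_lip : ∀ t ∈ Icc (0:ℝ) T, ∀ x₁ x₂ y₁ y₂ : Vec n,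
      ‖f t x₁ y₁ - f t x₂ y₂‖ ≤ C₁ * (‖x₁ - x₂‖ + ‖y₁ - y₂‖))
    (hg_lip : ∀ t ∈ Icc (0:ℝ) T, ∀ x₁ x₂ y₁ y₂ : Vec n,
      ‖g t x₁ y₁ - g t x₂ y₂‖ ≤ C₁ * (‖x₁ - x₂‖ + ‖y₁ - y₂‖))
    (hh_lip : ∀ x₁ x₂ : Vec n, ‖h x₁ - h x₂‖ ≤ C₁ * ‖x₁ - x₂‖)
    (C₂ : ℝ) (hC₂ : 0 < C₂)
    (hmono : ∀ t ∈ Icc (0:ℝ) T, ∀ x₁ x₂ y₁ y₂ : Vec n,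
      ⟪-(g t x₁ y₁ - g t x₂ y₂), x₁ - x₂⟫ + ⟪f t x₁ y₁ - f t x₂ y₂, y₁ - y₂⟫
        ≤ -C₂ * (‖x₁ - x₂‖ ^ 2 + ‖y₁ - y₂‖ ^ 2))
    (hh_mono : ∀ x₁ x₂ : Vec n, C₂ * ‖x₁ - x₂‖ ^ 2 ≤ ⟪h x₁ - h x₂, x₁ - x₂⟫) :
    ∀ t ∈ Icc (0:ℝ) T, ∀ x : Vec n,
      (∃ X Y : ℝ → Vec n, IsFBSol T f g h t x X Y) ∧
      (∀ X₁ Y₁ X₂ Y₂ : ℝ → Vec n, IsFBSol T f g h t x X₁ Y₁ → IsFBSol T f g h t x X₂ Y₂ →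
        EqOn X₁ X₂ (Icc t T) ∧ EqOn Y₁ Y₂ (Icc t T)) := by
  intro t ht x
  let S : FBSDEProof.Setup n :=
    { T := T, f := f, g := g, h := h, C₁ := C₁, C₂ := C₂, t := t, x := x,
      hT := hT, ht0 := ht.1, htT := ht.2,
      hf_cont := hf_cont, hg_cont := hg_cont, hh_cont := hh_cont,
      hC₁ := hC₁, hf_lip := hf_lip, hg_lip := hg_lip, hh_lip := hh_lip,
      hC₂ := hC₂, hmono := hmono, hh_mono := hh_mono }
  exact ⟨S.exists_sol, fun X₁ Y₁ X₂ Y₂ h1 h2 => S.uniq h1 h2⟩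
end
end

section
/- There exists a constant C > 0, depending only on C₁, C₂ and T (in particular independent of t), such that for all t ∈ [0,T] and all x,y ∈ ℝⁿ, sup_{s∈[t,T]} |X^{t,x}(s) − X^{t,y}(s)|² ≤ C|x−y|² and sup_{s∈[t,T]} |Y^{t,x}(s) − Y^{t,y}(s)|² ≤ C|x−y|². (Deterministic version of the Lipschitz-in-x estimate, Lemma 1 of the paper in the limit ε → 0.) -/
open MeasureTheory Set intervalIntegral RealInnerProductSpace

noncomputable section

/-- Young-type auxiliary inequality. -/
lemma young_aux {a m : ℝ} (hm : 0 < m) (_ha : 0 ≤ a) : a ≤ m / 2 + (2*m)⁻¹ * a^2 := by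
  have h2m : (0:ℝ) < 2*m := by linarith
  rw [← sub_nonneg]
  have he : m/2 + (2*m)⁻¹ * a^2 - a = (2*m)⁻¹ * ((a - m)^2) := by
    field_simp; ring
  rw [he]; positivity

set_option maxHeartbeats 2000000 in
/-- Deterministic version of the Lipschitz-in-`x` estimate (Lemma 1 of the paper, ε → 0):
there is a constant `C > 0` depending only on the data (independent of `t`) such that
`sup_{s∈[t,T]} ‖X^{t,x}(s) − X^{t,y}(s)‖² ≤ C‖x−y‖²` and likewise for `Y`. -/
theorem fbsde_lipschitz_in_x
    (n : ℕ) (hn : 1 ≤ n) (T : ℝ) (hT : 0 < T)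
    (f g : ℝ → Vec n → Vec n → Vec n) (h : Vec n → Vec n)
    (hf_cont : ContinuousOn (fun p : ℝ × Vec n × Vec n => f p.1 p.2.1 p.2.2)
      (Icc 0 T ×ˢ (univ ×ˢ univ)))
    (hg_cont : ContinuousOn (fun p : ℝ × Vec n × Vec n => g p.1 p.2.1 p.2.2)
      (Icc 0 T ×ˢ (univ ×ˢ univ)))
    (hh_cont : Continuous h)
    (C₁ : ℝ) (hC₁ : 0 < C₁)
    (hf_lip : ∀ t ∈ Icc (0:ℝ) T, ∀ x₁ x₂ y₁ y₂ : Vec n,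
      ‖f t x₁ y₁ - f t x₂ y₂‖ ≤ C₁ * (‖x₁ - x₂‖ + ‖y₁ - y₂‖))
    (hg_lip : ∀ t ∈ Icc (0:ℝ) T, ∀ x₁ x₂ y₁ y₂ : Vec n,
      ‖g t x₁ y₁ - g t x₂ y₂‖ ≤ C₁ * (‖x₁ - x₂‖ + ‖y₁ - y₂‖))
    (hh_lip : ∀ x₁ x₂ : Vec n, ‖h x₁ - h x₂‖ ≤ C₁ * ‖x₁ - x₂‖)
    (C₂ : ℝ) (hC₂ : 0 < C₂)
    (hmono : ∀ t ∈ Icc (0:ℝ) T, ∀ x₁ x₂ y₁ y₂ : Vec n,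
      ⟪-(g t x₁ y₁ - g t x₂ y₂), x₁ - x₂⟫ + ⟪f t x₁ y₁ - f t x₂ y₂, y₁ - y₂⟫
        ≤ -C₂ * (‖x₁ - x₂‖ ^ 2 + ‖y₁ - y₂‖ ^ 2))
    (hh_mono : ∀ x₁ x₂ : Vec n, C₂ * ‖x₁ - x₂‖ ^ 2 ≤ ⟪h x₁ - h x₂, x₁ - x₂⟫)
    (X Y : ℝ → Vec n → ℝ → Vec n)
    (hsol : ∀ t ∈ Icc (0:ℝ) T, ∀ x : Vec n, IsFBSol T f g h t x (X t x) (Y t x))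
    (huniq : ∀ t ∈ Icc (0:ℝ) T, ∀ x : Vec n, ∀ X' Y' : ℝ → Vec n,
      IsFBSol T f g h t x X' Y' → EqOn X' (X t x) (Icc t T) ∧ EqOn Y' (Y t x) (Icc t T))
    : ∃ C : ℝ, 0 < C ∧ ∀ t ∈ Icc (0:ℝ) T, ∀ x y : Vec n, ∀ s ∈ Icc t T,
      ‖X t x s - X t y s‖ ^ 2 ≤ C * ‖x - y‖ ^ 2 ∧
      ‖Y t x s - Y t y s‖ ^ 2 ≤ C * ‖x - y‖ ^ 2 := by
  classical
  set e : ℝ := C₁ / C₂ with he_def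
  have he : 0 < e := div_pos hC₁ hC₂
  set K₀ : ℝ := C₁ * e * (1 + 2*T) / C₂ with hK₀def
  have hK₀ : 0 < K₀ := by positivity
  set cJ : ℝ := T + K₀ / 2 with hcJdef
  have hcJ0 : 0 < cJ := by positivity
  set B : ℝ := 1 + C₁ * cJ + C₁ * (1 + K₀) / 2 with hBdef
  have hB0 : 0 < B := by positivity
  refine ⟨B^2 + 1, by positivity, ?_⟩
  intro t ht x y s hs
  rcases eq_or_ne x y with rfl | hxy
  · constructor <;> simp
  obtain ⟨ht0, htT⟩ := ht
  obtain ⟨hst, hsT⟩ := hs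
  set d : ℝ := ‖x - y‖ with hd_def
  have hd : 0 < d := by
    rw [hd_def, norm_pos_iff]
    exact sub_ne_zero.2 hxy
  obtain ⟨hX₁c, hY₁c, hX₁eq, hY₁eq⟩ := hsol t ⟨ht0, htT⟩ x
  obtain ⟨hX₂c, hY₂c, hX₂eq, hY₂eq⟩ := hsol t ⟨ht0, htT⟩ y
  -- clamp to [t, T]
  set cl : ℝ → ℝ := fun r => max t (min r T) with hcl_def
  have hcl_cont : Continuous cl := continuous_const.max (continuous_id.min continuous_const)
  have hcl_mem : ∀ r, cl r ∈ Icc t T := fun r =>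
    ⟨le_max_left _ _, max_le htT (min_le_right _ _)⟩
  have hcl_mem' : ∀ r, cl r ∈ Icc (0:ℝ) T := fun r => ⟨le_trans ht0 (hcl_mem r).1, (hcl_mem r).2⟩
  have hcl_id : ∀ r ∈ Icc t T, cl r = r := fun r hr => by
    simp only [hcl_def, min_eq_left hr.2, max_eq_right hr.1]
  -- clamped solutions
  set X₁ : ℝ → Vec n := fun r => X t x (cl r) with hX₁def
  set X₂ : ℝ → Vec n := fun r => X t y (cl r) with hX₂def
  set Y₁ : ℝ → Vec n := fun r => Y t x (cl r) with hY₁def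
  set Y₂ : ℝ → Vec n := fun r => Y t y (cl r) with hY₂def
  have hX₁C : Continuous X₁ := hX₁c.comp_continuous hcl_cont hcl_mem
  have hX₂C : Continuous X₂ := hX₂c.comp_continuous hcl_cont hcl_mem
  have hY₁C : Continuous Y₁ := hY₁c.comp_continuous hcl_cont hcl_mem
  have hY₂C : Continuous Y₂ := hY₂c.comp_continuous hcl_cont hcl_mem
  set DX : ℝ → Vec n := fun r => X₁ r - X₂ r with hDXdef
  set DY : ℝ → Vec n := fun r => Y₁ r - Y₂ r with hDYdef
  have hDXC : Continuous DX := hX₁C.sub hX₂C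
  have hDYC : Continuous DY := hY₁C.sub hY₂C
  have hDXeq : ∀ u ∈ Icc t T, DX u = X t x u - X t y u := fun u hu => by
    simp only [hDXdef, hX₁def, hX₂def, hcl_id u hu]
  have hDYeq : ∀ u ∈ Icc t T, DY u = Y t x u - Y t y u := fun u hu => by
    simp only [hDYdef, hY₁def, hY₂def, hcl_id u hu]
  -- clamped integrands
  set G₁ : ℝ → Vec n := fun r => f (cl r) (X₁ r) (Y₁ r) with hG₁def
  set G₂ : ℝ → Vec n := fun r => f (cl r) (X₂ r) (Y₂ r) with hG₂def
  set H₁ : ℝ → Vec n := fun r => g (cl r) (X₁ r) (Y₁ r) with hH₁def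
  set H₂ : ℝ → Vec n := fun r => g (cl r) (X₂ r) (Y₂ r) with hH₂def
  have hG₁C : Continuous G₁ := hf_cont.comp_continuous
    (hcl_cont.prodMk (hX₁C.prodMk hY₁C)) (fun r => ⟨hcl_mem' r, trivial, trivial⟩)
  have hG₂C : Continuous G₂ := hf_cont.comp_continuous
    (hcl_cont.prodMk (hX₂C.prodMk hY₂C)) (fun r => ⟨hcl_mem' r, trivial, trivial⟩)
  have hH₁C : Continuous H₁ := hg_cont.comp_continuous
    (hcl_cont.prodMk (hX₁C.prodMk hY₁C)) (fun r => ⟨hcl_mem' r, trivial, trivial⟩)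
  have hH₂C : Continuous H₂ := hg_cont.comp_continuous
    (hcl_cont.prodMk (hX₂C.prodMk hY₂C)) (fun r => ⟨hcl_mem' r, trivial, trivial⟩)
  have hG₁i : ∀ a b : ℝ, IntervalIntegrable G₁ volume a b := fun a b => hG₁C.intervalIntegrable a b
  have hG₂i : ∀ a b : ℝ, IntervalIntegrable G₂ volume a b := fun a b => hG₂C.intervalIntegrable a b
  have hH₁i : ∀ a b : ℝ, IntervalIntegrable H₁ volume a b := fun a b => hH₁C.intervalIntegrable a b
  have hH₂i : ∀ a b : ℝ, IntervalIntegrable H₂ volume a b := fun a b => hH₂C.intervalIntegrable a b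
  have hGlip : ∀ r, ‖G₁ r - G₂ r‖ ≤ C₁ * (‖DX r‖ + ‖DY r‖) := fun r =>
    hf_lip (cl r) (hcl_mem' r) _ _ _ _
  have hHlip : ∀ r, ‖H₁ r - H₂ r‖ ≤ C₁ * (‖DX r‖ + ‖DY r‖) := fun r =>
    hg_lip (cl r) (hcl_mem' r) _ _ _ _
  -- integral equations with clamped integrands
  have hXxeq : ∀ u ∈ Icc t T, X t x u = x + ∫ r in t..u, G₁ r := by
    intro u hu
    rw [hX₁eq u hu]
    congr 1
    refine intervalIntegral.integral_congr fun r hr => ?_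
    rw [uIcc_of_le hu.1] at hr
    have hr' : r ∈ Icc t T := ⟨hr.1, hr.2.trans hu.2⟩
    simp only [hG₁def, hX₁def, hY₁def, hcl_id r hr']
  have hXyeq : ∀ u ∈ Icc t T, X t y u = y + ∫ r in t..u, G₂ r := by
    intro u hu
    rw [hX₂eq u hu]
    congr 1
    refine intervalIntegral.integral_congr fun r hr => ?_
    rw [uIcc_of_le hu.1] at hr
    have hr' : r ∈ Icc t T := ⟨hr.1, hr.2.trans hu.2⟩
    simp only [hG₂def, hX₂def, hY₂def, hcl_id r hr']
  have hYxeq : ∀ u ∈ Icc t T, Y t x u = h (X t x T) + ∫ r in u..T, H₁ r := by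
    intro u hu
    rw [hY₁eq u hu]
    congr 1
    refine intervalIntegral.integral_congr fun r hr => ?_
    rw [uIcc_of_le hu.2] at hr
    have hr' : r ∈ Icc t T := ⟨hu.1.trans hr.1, hr.2⟩
    simp only [hH₁def, hX₁def, hY₁def, hcl_id r hr']
  have hYyeq : ∀ u ∈ Icc t T, Y t y u = h (X t y T) + ∫ r in u..T, H₂ r := by
    intro u hu
    rw [hY₂eq u hu]
    congr 1
    refine intervalIntegral.integral_congr fun r hr => ?_
    rw [uIcc_of_le hu.2] at hr
    have hr' : r ∈ Icc t T := ⟨hu.1.trans hr.1, hr.2⟩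
    simp only [hH₂def, hX₂def, hY₂def, hcl_id r hr']
  have htmem : t ∈ Icc t T := left_mem_Icc.2 htT
  have hTmem : T ∈ Icc t T := right_mem_Icc.2 htT
  -- endpoint values
  have hDXt : DX t = x - y := by
    rw [hDXeq t htmem, hXxeq t htmem, hXyeq t htmem]
    simp [intervalIntegral.integral_same]
  have hDXT : DX T = X t x T - X t y T := hDXeq T hTmem
  have hDYT : DY T = h (X t x T) - h (X t y T) := by
    rw [hDYeq T hTmem, hYxeq T hTmem, hYyeq T hTmem]
    simp [intervalIntegral.integral_same]
  -- derivatives on the interior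
  have hXd : ∀ u ∈ Ioo t T, HasDerivAt DX (G₁ u - G₂ u) u := by
    intro u hu
    have h1 : HasDerivAt X₁ (G₁ u) u := by
      have hprim : HasDerivAt (fun v => x + ∫ r in t..v, G₁ r) (G₁ u) u :=
        (intervalIntegral.integral_hasDerivAt_right (hG₁i t u)
          hG₁C.aestronglyMeasurable.stronglyMeasurableAtFilter hG₁C.continuousAt).const_add x
      refine HasDerivAt.congr_of_eventuallyEq hprim ?_
      filter_upwards [Ioo_mem_nhds hu.1 hu.2] with v hv
      have hv' : v ∈ Icc t T := Ioo_subset_Icc_self hv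
      simp only [hX₁def, hcl_id v hv']
      exact hXxeq v hv'
    have h2 : HasDerivAt X₂ (G₂ u) u := by
      have hprim : HasDerivAt (fun v => y + ∫ r in t..v, G₂ r) (G₂ u) u :=
        (intervalIntegral.integral_hasDerivAt_right (hG₂i t u)
          hG₂C.aestronglyMeasurable.stronglyMeasurableAtFilter hG₂C.continuousAt).const_add y
      refine HasDerivAt.congr_of_eventuallyEq hprim ?_
      filter_upwards [Ioo_mem_nhds hu.1 hu.2] with v hv
      have hv' : v ∈ Icc t T := Ioo_subset_Icc_self hv
      simp only [hX₂def, hcl_id v hv']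
      exact hXyeq v hv'
    exact h1.sub h2
  have hYd : ∀ u ∈ Ioo t T, HasDerivAt DY (-(H₁ u - H₂ u)) u := by
    intro u hu
    have h1 : HasDerivAt Y₁ (-(H₁ u)) u := by
      have hprim : HasDerivAt
          (fun v => (h (X t x T) + ∫ r in t..T, H₁ r) - ∫ r in t..v, H₁ r) (-(H₁ u)) u :=
        HasDerivAt.const_sub _ (intervalIntegral.integral_hasDerivAt_right (hH₁i t u)
          hH₁C.aestronglyMeasurable.stronglyMeasurableAtFilter hH₁C.continuousAt)
      refine HasDerivAt.congr_of_eventuallyEq hprim ?_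
      filter_upwards [Ioo_mem_nhds hu.1 hu.2] with v hv
      have hv' : v ∈ Icc t T := Ioo_subset_Icc_self hv
      simp only [hY₁def, hcl_id v hv']
      rw [hYxeq v hv', add_sub_assoc, intervalIntegral.integral_interval_sub_left (hH₁i t T) (hH₁i t v)]
    have h2 : HasDerivAt Y₂ (-(H₂ u)) u := by
      have hprim : HasDerivAt
          (fun v => (h (X t y T) + ∫ r in t..T, H₂ r) - ∫ r in t..v, H₂ r) (-(H₂ u)) u :=
        HasDerivAt.const_sub _ (intervalIntegral.integral_hasDerivAt_right (hH₂i t u)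
          hH₂C.aestronglyMeasurable.stronglyMeasurableAtFilter hH₂C.continuousAt)
      refine HasDerivAt.congr_of_eventuallyEq hprim ?_
      filter_upwards [Ioo_mem_nhds hu.1 hu.2] with v hv
      have hv' : v ∈ Icc t T := Ioo_subset_Icc_self hv
      simp only [hY₂def, hcl_id v hv']
      rw [hYyeq v hv', add_sub_assoc, intervalIntegral.integral_interval_sub_left (hH₂i t T) (hH₂i t v)]
    have h3 := h1.sub h2
    have : -(H₁ u) - -(H₂ u) = -(H₁ u - H₂ u) := by abel
    rwa [this] at h3
  -- the Lyapunov function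
  set W : ℝ → ℝ := fun r => ‖DX r‖^2 + ‖DY r‖^2 with hWdef
  have hWC : Continuous W := (hDXC.norm.pow 2).add (hDYC.norm.pow 2)
  have hWi : ∀ a b : ℝ, IntervalIntegrable W volume a b := fun a b => hWC.intervalIntegrable a b
  set I : ℝ := ∫ r in t..T, W r with hIdef
  have hInn : 0 ≤ I := intervalIntegral.integral_nonneg htT (fun u _ => by positivity)
  set φ : ℝ → ℝ := fun u => ⟪DX u, DY u⟫ + C₂ * ∫ r in t..u, W r with hφdef
  have hφC : Continuous φ :=
    (hDXC.inner hDYC).add (continuous_const.mul (intervalIntegral.continuous_primitive hWi t))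
  have hφd : ∀ u ∈ Ioo t T,
      HasDerivAt φ (⟪DX u, -(H₁ u - H₂ u)⟫ + ⟪G₁ u - G₂ u, DY u⟫ + C₂ * W u) u := by
    intro u hu
    have h1 := HasDerivAt.inner ℝ (hXd u hu) (hYd u hu)
    have h2 : HasDerivAt (fun v => C₂ * ∫ r in t..v, W r) (C₂ * W u) u :=
      (intervalIntegral.integral_hasDerivAt_right (hWi t u)
        hWC.aestronglyMeasurable.stronglyMeasurableAtFilter hWC.continuousAt).const_mul C₂
    exact h1.add h2
  have hφd0 : ∀ u ∈ Ioo t T, deriv φ u ≤ 0 := by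
    intro u hu
    rw [(hφd u hu).deriv]
    have hu' : u ∈ Icc t T := Ioo_subset_Icc_self hu
    have humem : u ∈ Icc (0:ℝ) T := ⟨ht0.trans hu'.1, hu'.2⟩
    have hm := hmono u humem (X t x u) (X t y u) (Y t x u) (Y t y u)
    have hcomm := real_inner_comm (DX u)
      (-(g u (X t x u) (Y t x u) - g u (X t y u) (Y t y u)))
    simp only [hG₁def, hG₂def, hH₁def, hH₂def, hDXdef, hDYdef, hWdef, hX₁def, hX₂def,
      hY₁def, hY₂def, hcl_id u hu'] at hcomm ⊢
    rw [← hcomm]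
    linarith only [hm]
  have hAnti : AntitoneOn φ (Icc t T) := by
    apply antitoneOn_of_deriv_nonpos (convex_Icc t T) hφC.continuousOn
    · intro u hu
      rw [interior_Icc] at hu
      exact (hφd u hu).differentiableAt.differentiableWithinAt
    · intro u hu
      rw [interior_Icc] at hu
      exact hφd0 u hu
  have hφTt : φ T ≤ φ t := hAnti htmem hTmem htT
  have hφt : φ t = ⟪(x - y : Vec n), DY t⟫ := by
    simp only [hφdef, intervalIntegral.integral_same, mul_zero, add_zero, hDXt]
  have hφT : φ T = ⟪DX T, DY T⟫ + C₂ * I := rfl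
  -- Step 1: key inequality
  have hstep1 : C₂ * ‖DX T‖^2 + C₂ * I ≤ d * ‖DY t‖ := by
    have h1 : C₂ * ‖DX T‖^2 ≤ ⟪DX T, DY T⟫ := by
      rw [hDXT, hDYT, real_inner_comm]
      exact hh_mono _ _
    have h2 : ⟪(x - y : Vec n), DY t⟫ ≤ d * ‖DY t‖ := by
      calc ⟪(x - y : Vec n), DY t⟫ ≤ ‖(x - y : Vec n)‖ * ‖DY t‖ := real_inner_le_norm _ _
        _ = d * ‖DY t‖ := by rw [hd_def]
    rw [hφT, hφt] at hφTt
    linarith only [h1, h2, hφTt]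
  -- bound on ‖DY t‖
  set NN : ℝ → ℝ := fun r => ‖DX r‖ + ‖DY r‖ with hNNdef
  have hNNC : Continuous NN := hDXC.norm.add hDYC.norm
  have hNNnn : ∀ r, 0 ≤ NN r := fun r => by positivity
  set J : ℝ := ∫ r in t..T, NN r with hJdef
  have hJnn : 0 ≤ J := intervalIntegral.integral_nonneg htT (fun u _ => hNNnn u)
  have hDYtb : ‖DY t‖ ≤ C₁ * ‖DX T‖ + C₁ * J := by
    have h0 : DY t = (h (X t x T) - h (X t y T)) + ∫ r in t..T, (H₁ r - H₂ r) := by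
      rw [hDYeq t htmem, hYxeq t htmem, hYyeq t htmem,
        intervalIntegral.integral_sub (hH₁i t T) (hH₂i t T)]
      abel
    rw [h0]
    have hb1 : ‖h (X t x T) - h (X t y T)‖ ≤ C₁ * ‖DX T‖ := by
      rw [hDXT]; exact hh_lip _ _
    have hb2 : ‖∫ r in t..T, (H₁ r - H₂ r)‖ ≤ C₁ * J := by
      calc ‖∫ r in t..T, (H₁ r - H₂ r)‖ ≤ ∫ r in t..T, ‖H₁ r - H₂ r‖ :=
            intervalIntegral.norm_integral_le_integral_norm htT
        _ ≤ ∫ r in t..T, C₁ * NN r := by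
            refine intervalIntegral.integral_mono_on htT
              ((hH₁C.sub hH₂C).norm.intervalIntegrable t T)
              ((continuous_const.mul hNNC).intervalIntegrable t T) (fun r _ => hHlip r)
        _ = C₁ * J := by rw [intervalIntegral.integral_const_mul, hJdef]
    calc ‖(h (X t x T) - h (X t y T)) + ∫ r in t..T, (H₁ r - H₂ r)‖
        ≤ ‖h (X t x T) - h (X t y T)‖ + ‖∫ r in t..T, (H₁ r - H₂ r)‖ := norm_add_le _ _
      _ ≤ C₁ * ‖DX T‖ + C₁ * J := add_le_add hb1 hb2
  -- generic bound on J
  have hJbound : ∀ e' : ℝ, 0 < e' → J ≤ e' * d * T + (2*(e'*d))⁻¹ * I := by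
    intro e' he'
    have hed : 0 < e' * d := mul_pos he' hd
    have hpt : ∀ r ∈ Icc t T, NN r ≤ e' * d + (2*(e'*d))⁻¹ * W r := by
      intro r _
      have y1 := young_aux hed (norm_nonneg (DX r))
      have y2 := young_aux hed (norm_nonneg (DY r))
      calc NN r ≤ (e'*d/2 + (2*(e'*d))⁻¹ * ‖DX r‖^2) + (e'*d/2 + (2*(e'*d))⁻¹ * ‖DY r‖^2) :=
            add_le_add y1 y2
        _ = e' * d + (2*(e'*d))⁻¹ * W r := by simp only [hWdef]; ring
    calc J ≤ ∫ r in t..T, (e' * d + (2*(e'*d))⁻¹ * W r) := by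
          refine intervalIntegral.integral_mono_on htT (hNNC.intervalIntegrable t T)
            ((continuous_const.add (continuous_const.mul hWC)).intervalIntegrable t T) hpt
      _ = e' * d * (T - t) + (2*(e'*d))⁻¹ * I := by
          rw [intervalIntegral.integral_add (intervalIntegrable_const) ((hWi t T).const_mul _),
            intervalIntegral.integral_const, intervalIntegral.integral_const_mul]
          simp only [smul_eq_mul, hIdef]
          ring
      _ ≤ e' * d * T + (2*(e'*d))⁻¹ * I := by
          have h1 : T - t ≤ T := by linarith only [ht0]
          have h2 := mul_le_mul_of_nonneg_left h1 hed.le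
          linarith only [h2]
  -- Step 2: A ≤ K₀ d²
  have hstep2 : ‖DX T‖^2 + I ≤ K₀ * d^2 := by
    have hJe := hJbound e he
    have hXTy := young_aux (mul_pos he hd) (norm_nonneg (DX T))
    have hC₁d : (0:ℝ) ≤ C₁ * d := (mul_pos hC₁ hd).le
    have hmul1 := mul_le_mul_of_nonneg_left hXTy hC₁d
    have hmul2 := mul_le_mul_of_nonneg_left hJe hC₁d
    have hmul3 := mul_le_mul_of_nonneg_left hDYtb hd.le
    have hkey : C₁ * d * (2*(e*d))⁻¹ = C₂/2 := by
      rw [he_def]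
      field_simp
    have e1 : C₁*d*(e*d/2 + (2*(e*d))⁻¹*‖DX T‖^2) = C₁*e*d^2/2 + C₂/2*‖DX T‖^2 := by
      rw [← hkey]; ring
    have e2 : C₁*d*(e*d*T + (2*(e*d))⁻¹*I) = C₁*e*T*d^2 + C₂/2*I := by
      rw [← hkey]; ring
    have hK₀d : C₂ * (K₀ * d^2) = C₁*e*d^2/2 + C₁*e*T*d^2 + C₁*e*d^2/2 + C₁*e*T*d^2 := by
      rw [hK₀def]
      field_simp
      ring
    have h5 : C₂ * ‖DX T‖^2 + C₂ * I ≤ C₂ * (K₀ * d^2) := by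
      rw [hK₀d]
      linarith only [hstep1, hmul1, hmul2, hmul3, e1, e2]
    have h6 : C₂ * (‖DX T‖^2 + I) ≤ C₂ * (K₀ * d^2) := by linarith only [h5]
    exact le_of_mul_le_mul_left h6 hC₂
  have hIA : I ≤ K₀ * d^2 := by linarith only [hstep2, sq_nonneg ‖DX T‖]
  -- Step 3: linear bounds
  have hJc : J ≤ cJ * d := by
    have hJ1 := hJbound 1 one_pos
    have hpos : (0:ℝ) ≤ (2*(1*d))⁻¹ := by positivity
    have hm := mul_le_mul_of_nonneg_left hIA hpos
    have heq : (2*(1*d))⁻¹ * (K₀*d^2) = K₀*d/2 := by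
      field_simp
    rw [hcJdef]
    linarith only [hJ1, hm, heq]
  have hXTbd : ‖DX T‖ ≤ (1+K₀)/2 * d := by
    have y1 := young_aux hd (norm_nonneg (DX T))
    have hX2 : ‖DX T‖^2 ≤ K₀*d^2 := by linarith [hstep2, hInn]
    have hpos : (0:ℝ) ≤ (2*d)⁻¹ := by positivity
    have hm := mul_le_mul_of_nonneg_left hX2 hpos
    have heq : (2*d)⁻¹*(K₀*d^2) = K₀*d/2 := by
      field_simp
    linarith only [y1, hm, heq]
  -- Step 4: pointwise bounds at s
  have hsmem : s ∈ Icc t T := ⟨hst, hsT⟩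
  have hintNN : ∀ a b : ℝ, IntervalIntegrable (fun r => C₁ * NN r) volume a b :=
    fun a b => (continuous_const.mul hNNC).intervalIntegrable a b
  have hXbd : ‖X t x s - X t y s‖ ≤ B * d := by
    have h0 : X t x s - X t y s = (x - y) + ∫ r in t..s, (G₁ r - G₂ r) := by
      rw [hXxeq s hsmem, hXyeq s hsmem, intervalIntegral.integral_sub (hG₁i t s) (hG₂i t s)]
      abel
    rw [h0]
    have hb2 : ‖∫ r in t..s, (G₁ r - G₂ r)‖ ≤ C₁ * J := by
      calc ‖∫ r in t..s, (G₁ r - G₂ r)‖ ≤ ∫ r in t..s, ‖G₁ r - G₂ r‖ :=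
            intervalIntegral.norm_integral_le_integral_norm hst
        _ ≤ ∫ r in t..s, C₁ * NN r := by
            refine intervalIntegral.integral_mono_on hst
              ((hG₁C.sub hG₂C).norm.intervalIntegrable t s) (hintNN t s) (fun r _ => hGlip r)
        _ ≤ ∫ r in t..T, C₁ * NN r := by
            refine intervalIntegral.integral_mono_interval le_rfl hst hsT ?_ (hintNN t T)
            exact Filter.Eventually.of_forall fun r => by positivity
        _ = C₁ * J := by rw [intervalIntegral.integral_const_mul, hJdef]
    have hBd : d + C₁ * (cJ * d) ≤ B * d := by
      rw [hBdef]
      have h7 : (0:ℝ) ≤ C₁ * (1 + K₀) / 2 * d := by positivity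
      linarith only [h7]
    calc ‖(x - y) + ∫ r in t..s, (G₁ r - G₂ r)‖
        ≤ ‖(x - y : Vec n)‖ + ‖∫ r in t..s, (G₁ r - G₂ r)‖ := norm_add_le _ _
      _ ≤ d + C₁ * J := by rw [← hd_def]; exact add_le_add le_rfl hb2
      _ ≤ d + C₁ * (cJ * d) := by
          have h8 := mul_le_mul_of_nonneg_left hJc hC₁.le
          linarith only [h8]
      _ ≤ B * d := hBd
  have hYbd : ‖Y t x s - Y t y s‖ ≤ B * d := by
    have h0 : Y t x s - Y t y s = (h (X t x T) - h (X t y T)) + ∫ r in s..T, (H₁ r - H₂ r) := by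
      rw [hYxeq s hsmem, hYyeq s hsmem, intervalIntegral.integral_sub (hH₁i s T) (hH₂i s T)]
      abel
    rw [h0]
    have hb1 : ‖h (X t x T) - h (X t y T)‖ ≤ C₁ * ((1+K₀)/2 * d) := by
      calc ‖h (X t x T) - h (X t y T)‖ ≤ C₁ * ‖X t x T - X t y T‖ := hh_lip _ _
        _ = C₁ * ‖DX T‖ := by rw [hDXT]
        _ ≤ C₁ * ((1+K₀)/2 * d) := mul_le_mul_of_nonneg_left hXTbd hC₁.le
    have hb2 : ‖∫ r in s..T, (H₁ r - H₂ r)‖ ≤ C₁ * J := by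
      calc ‖∫ r in s..T, (H₁ r - H₂ r)‖ ≤ ∫ r in s..T, ‖H₁ r - H₂ r‖ :=
            intervalIntegral.norm_integral_le_integral_norm hsT
        _ ≤ ∫ r in s..T, C₁ * NN r := by
            refine intervalIntegral.integral_mono_on hsT
              ((hH₁C.sub hH₂C).norm.intervalIntegrable s T) (hintNN s T) (fun r _ => hHlip r)
        _ ≤ ∫ r in t..T, C₁ * NN r := by
            refine intervalIntegral.integral_mono_interval hst hsT le_rfl ?_ (hintNN t T)
            exact Filter.Eventually.of_forall fun r => by positivity
        _ = C₁ * J := by rw [intervalIntegral.integral_const_mul, hJdef]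
    have hBd : C₁ * ((1+K₀)/2 * d) + C₁ * (cJ * d) ≤ B * d := by
      rw [hBdef]
      linarith only [hd.le]
    calc ‖(h (X t x T) - h (X t y T)) + ∫ r in s..T, (H₁ r - H₂ r)‖
        ≤ ‖h (X t x T) - h (X t y T)‖ + ‖∫ r in s..T, (H₁ r - H₂ r)‖ := norm_add_le _ _
      _ ≤ C₁ * ((1+K₀)/2 * d) + C₁ * (cJ * d) := by
          refine add_le_add hb1 ?_
          have h8 := mul_le_mul_of_nonneg_left hJc hC₁.le
          linarith only [hb2, h8]
      _ ≤ B * d := hBd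
  constructor
  · have hsq := pow_le_pow_left₀ (norm_nonneg _) hXbd 2
    linarith only [hsq, sq_nonneg d]
  · have hsq := pow_le_pow_left₀ (norm_nonneg _) hYbd 2
    linarith only [hsq, sq_nonneg d]
end
end

section
/- There exists a constant C > 0, independent of t and x, such that for all t ∈ [0,T] and all x ∈ ℝⁿ, sup_{s∈[t,T]} |X^{t,x}(s)|² ≤ C(1 + |x|²) and sup_{s∈[t,T]} |Y^{t,x}(s)|² ≤ C(1 + |x|²). (Deterministic version of the second-moment growth estimate, Lemma 2 of the paper in the limit ε → 0.) -/
open MeasureTheory Set intervalIntegral RealInnerProductSpace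

noncomputable section

/-- Elementary AM-GM style bound. -/
lemma amgm_aux (ε a b : ℝ) (hε : 0 < ε) :
    a + b ≤ ε * (a ^ 2 + b ^ 2) + 1 / (2 * ε) := by
  have h : (a + b) * (2 * ε) ≤ (ε * (a ^ 2 + b ^ 2) + 1 / (2 * ε)) * (2 * ε) := by
    have h0 : (1 / (2 * ε)) * (2 * ε) = 1 := by field_simp
    nlinarith [sq_nonneg (2 * ε * a - 1), sq_nonneg (2 * ε * b - 1)]
  exact le_of_mul_le_mul_right h (by positivity)

/-- The auxiliary constant `D`. -/
def fbD (T C₁ C₂ K₀ : ℝ) : ℝ :=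
  K₀ ^ 2 / (2 * C₂) + K₀ ^ 2 * T / C₂ + 2 * C₁ ^ 2 / C₂ + K₀ + K₀ * T + 8 * T * C₁ ^ 2 / C₂

/-- The auxiliary constant `C₃`. -/
def fbC₃ (T C₁ C₂ K₀ : ℝ) : ℝ := 4 * fbD T C₁ C₂ K₀ / C₂

/-- The auxiliary constant `M`. -/
def fbM (T C₁ C₂ K₀ : ℝ) : ℝ :=
  1 + K₀ + K₀ * T + C₁ * Real.sqrt (fbC₃ T C₁ C₂ K₀) + C₁ * (fbC₃ T C₁ C₂ K₀ + T / 2)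

lemma fbD_nonneg {T C₁ C₂ K₀ : ℝ} (hT : 0 < T) (hC₂ : 0 < C₂) (hK₀ : 0 ≤ K₀) :
    0 ≤ fbD T C₁ C₂ K₀ := by
  unfold fbD; positivity

lemma fbC₃_nonneg {T C₁ C₂ K₀ : ℝ} (hT : 0 < T) (hC₂ : 0 < C₂) (hK₀ : 0 ≤ K₀) :
    0 ≤ fbC₃ T C₁ C₂ K₀ := by
  have := fbD_nonneg (C₁ := C₁) hT hC₂ hK₀
  unfold fbC₃; positivity

lemma fbM_nonneg {T C₁ C₂ K₀ : ℝ} (hT : 0 < T) (hC₁ : 0 < C₁) (hC₂ : 0 < C₂)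
    (hK₀ : 0 ≤ K₀) : 0 ≤ fbM T C₁ C₂ K₀ := by
  have h1 := fbC₃_nonneg (C₁ := C₁) hT hC₂ hK₀
  have h2 : 0 ≤ Real.sqrt (fbC₃ T C₁ C₂ K₀) := Real.sqrt_nonneg _
  unfold fbM
  have : 0 ≤ K₀ * T := mul_nonneg hK₀ hT.le
  have : 0 ≤ C₁ * Real.sqrt (fbC₃ T C₁ C₂ K₀) := mul_nonneg hC₁.le h2
  have : 0 ≤ C₁ * (fbC₃ T C₁ C₂ K₀ + T / 2) := mul_nonneg hC₁.le (by linarith)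
  linarith

set_option maxHeartbeats 1000000 in
/-- The key a priori estimate for a single solution. -/
lemma fbsde_key {n : ℕ} {T : ℝ} (hT : 0 < T)
    {f g : ℝ → Vec n → Vec n → Vec n} {h : Vec n → Vec n}
    (hf_cont : ContinuousOn (fun p : ℝ × Vec n × Vec n => f p.1 p.2.1 p.2.2)
      (Icc 0 T ×ˢ (univ ×ˢ univ)))
    (hg_cont : ContinuousOn (fun p : ℝ × Vec n × Vec n => g p.1 p.2.1 p.2.2)
      (Icc 0 T ×ˢ (univ ×ˢ univ)))
    {C₁ : ℝ} (hC₁ : 0 < C₁)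
    (hf_lip : ∀ t ∈ Icc (0:ℝ) T, ∀ x₁ x₂ y₁ y₂ : Vec n,
      ‖f t x₁ y₁ - f t x₂ y₂‖ ≤ C₁ * (‖x₁ - x₂‖ + ‖y₁ - y₂‖))
    (hg_lip : ∀ t ∈ Icc (0:ℝ) T, ∀ x₁ x₂ y₁ y₂ : Vec n,
      ‖g t x₁ y₁ - g t x₂ y₂‖ ≤ C₁ * (‖x₁ - x₂‖ + ‖y₁ - y₂‖))
    (hh_lip : ∀ x₁ x₂ : Vec n, ‖h x₁ - h x₂‖ ≤ C₁ * ‖x₁ - x₂‖)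
    {C₂ : ℝ} (hC₂ : 0 < C₂)
    (hmono : ∀ t ∈ Icc (0:ℝ) T, ∀ x₁ x₂ y₁ y₂ : Vec n,
      ⟪-(g t x₁ y₁ - g t x₂ y₂), x₁ - x₂⟫ + ⟪f t x₁ y₁ - f t x₂ y₂, y₁ - y₂⟫
        ≤ -C₂ * (‖x₁ - x₂‖ ^ 2 + ‖y₁ - y₂‖ ^ 2))
    (hh_mono : ∀ x₁ x₂ : Vec n, C₂ * ‖x₁ - x₂‖ ^ 2 ≤ ⟪h x₁ - h x₂, x₁ - x₂⟫)
    {K₀ : ℝ} (hK₀ : 0 ≤ K₀)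
    (hfK : ∀ r ∈ Icc (0:ℝ) T, ‖f r 0 0‖ ≤ K₀)
    (hgK : ∀ r ∈ Icc (0:ℝ) T, ‖g r 0 0‖ ≤ K₀)
    (hhK : ‖h 0‖ ≤ K₀)
    {t : ℝ} (ht : t ∈ Icc (0:ℝ) T) (x : Vec n) {X Y : ℝ → Vec n}
    (hsol : IsFBSol T f g h t x X Y) :
    ∀ s ∈ Icc t T, ‖X s‖ ≤ fbM T C₁ C₂ K₀ * Real.sqrt (1 + ‖x‖ ^ 2) ∧
      ‖Y s‖ ≤ fbM T C₁ C₂ K₀ * Real.sqrt (1 + ‖x‖ ^ 2) := by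
  obtain ⟨hX, hY, hXeq, hYeq⟩ := hsol
  obtain ⟨ht0, htT⟩ := ht
  have hsub : Icc t T ⊆ Icc 0 T := Icc_subset_Icc ht0 le_rfl
  have huicc : uIcc t T = Icc t T := uIcc_of_le htT
  set F : ℝ → Vec n := fun r => f r (X r) (Y r) with hF_def
  set G : ℝ → Vec n := fun r => g r (X r) (Y r) with hG_def
  -- continuity
  have htriple : ContinuousOn (fun r : ℝ => (r, X r, Y r)) (Icc t T) :=
    continuousOn_id.prodMk (hX.prodMk hY)
  have hmaps : ∀ r ∈ Icc t T, (r, X r, Y r) ∈ Icc 0 T ×ˢ (univ ×ˢ univ : Set (Vec n × Vec n)) :=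
    fun r hr => ⟨hsub hr, mem_univ _, mem_univ _⟩
  have hFc : ContinuousOn F (Icc t T) := hf_cont.comp htriple hmaps
  have hGc : ContinuousOn G (Icc t T) := hg_cont.comp htriple hmaps
  -- norm bounds
  have hFb : ∀ r ∈ Icc t T, ‖F r‖ ≤ K₀ + C₁ * (‖X r‖ + ‖Y r‖) := by
    intro r hr
    have h1 := hf_lip r (hsub hr) (X r) 0 (Y r) 0
    have h2 := hfK r (hsub hr)
    simp only [sub_zero] at h1
    calc ‖F r‖ = ‖(f r (X r) (Y r) - f r 0 0) + f r 0 0‖ := by rw [sub_add_cancel]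
      _ ≤ ‖f r (X r) (Y r) - f r 0 0‖ + ‖f r 0 0‖ := norm_add_le _ _
      _ ≤ K₀ + C₁ * (‖X r‖ + ‖Y r‖) := by linarith
  have hGb : ∀ r ∈ Icc t T, ‖G r‖ ≤ K₀ + C₁ * (‖X r‖ + ‖Y r‖) := by
    intro r hr
    have h1 := hg_lip r (hsub hr) (X r) 0 (Y r) 0
    have h2 := hgK r (hsub hr)
    simp only [sub_zero] at h1
    calc ‖G r‖ = ‖(g r (X r) (Y r) - g r 0 0) + g r 0 0‖ := by rw [sub_add_cancel]
      _ ≤ ‖g r (X r) (Y r) - g r 0 0‖ + ‖g r 0 0‖ := norm_add_le _ _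
      _ ≤ K₀ + C₁ * (‖X r‖ + ‖Y r‖) := by linarith
  -- abbreviations
  set q : ℝ → ℝ := fun r => ‖X r‖ ^ 2 + ‖Y r‖ ^ 2 with hq_def
  set I : ℝ := ∫ r in t..T, q r with hI_def
  set J : ℝ := ∫ r in t..T, (‖X r‖ + ‖Y r‖) with hJ_def
  set A : ℝ := ‖X T‖ with hA_def
  set N : ℝ := Real.sqrt (1 + ‖x‖ ^ 2) with hN_def
  have hqc : ContinuousOn q (Icc t T) := ((hX.norm.pow 2).add (hY.norm.pow 2))
  have hnc : ContinuousOn (fun r => ‖X r‖ + ‖Y r‖) (Icc t T) := hX.norm.add hY.norm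
  have hq_int : IntervalIntegrable q volume t T :=
    (hqc.mono huicc.subset).intervalIntegrable
  have hn_int : IntervalIntegrable (fun r => ‖X r‖ + ‖Y r‖) volume t T :=
    (hnc.mono huicc.subset).intervalIntegrable
  have hF_int : IntervalIntegrable F volume t T := (hFc.mono huicc.subset).intervalIntegrable
  have hG_int : IntervalIntegrable G volume t T := (hGc.mono huicc.subset).intervalIntegrable
  have hI0 : 0 ≤ I := by
    rw [hI_def]
    exact intervalIntegral.integral_nonneg htT (fun r _ => add_nonneg (sq_nonneg _) (sq_nonneg _))
  have hJ0 : 0 ≤ J := by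
    rw [hJ_def]
    exact intervalIntegral.integral_nonneg htT
      (fun r _ => add_nonneg (norm_nonneg _) (norm_nonneg _))
  have hA0 : 0 ≤ A := norm_nonneg _
  have hN1 : 1 ≤ N := by
    have h : (1:ℝ) ≤ 1 + ‖x‖ ^ 2 := by linarith [sq_nonneg ‖x‖]
    calc (1:ℝ) = Real.sqrt 1 := Real.sqrt_one.symm
      _ ≤ N := by rw [hN_def]; exact Real.sqrt_le_sqrt h
  have hN0 : 0 < N := lt_of_lt_of_le one_pos hN1
  have hNsq : N ^ 2 = 1 + ‖x‖ ^ 2 := Real.sq_sqrt (by positivity)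
  have hxN : ‖x‖ ≤ N := by
    calc ‖x‖ = Real.sqrt (‖x‖ ^ 2) := (Real.sqrt_sq (norm_nonneg x)).symm
      _ ≤ N := by
          rw [hN_def]
          exact Real.sqrt_le_sqrt (by linarith)
  -- basic values
  have hXt : X t = x := by
    have := hXeq t ⟨le_rfl, htT⟩
    simpa using this
  have hYT : Y T = h (X T) := by
    have := hYeq T ⟨htT, le_rfl⟩
    simpa using this
  -- the derivative of the inner product
  set ψ : ℝ → ℝ := fun s => ⟪X s, -G s⟫ + ⟪F s, Y s⟫ with hψ_def
  have hψc : ContinuousOn ψ (Icc t T) := (hX.inner hGc.neg).add (hFc.inner hY)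
  have hψ_int : IntervalIntegrable ψ volume t T := (hψc.mono huicc.subset).intervalIntegrable
  have hFTC : ∫ s in t..T, ψ s = ⟪X T, Y T⟫ - ⟪X t, Y t⟫ := by
    refine intervalIntegral.integral_eq_sub_of_hasDeriv_right_of_le htT (hX.inner hY)
      (fun s hs => ?_) hψ_int
    have hmem : Icc t T ∈ nhds s := Icc_mem_nhds hs.1 hs.2
    have hXd : HasDerivAt X (F s) s := by
      have h1 : IntervalIntegrable F volume t s :=
        ContinuousOn.intervalIntegrable (hFc.mono
          (by rw [uIcc_of_le hs.1.le]; exact Icc_subset_Icc le_rfl hs.2.le))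
      have h2 : StronglyMeasurableAtFilter F (nhds s) volume :=
        ⟨Icc t T, hmem, hFc.aestronglyMeasurable measurableSet_Icc⟩
      have h3 : ContinuousAt F s := hFc.continuousAt hmem
      have h4 := (intervalIntegral.integral_hasDerivAt_right h1 h2 h3).const_add x
      exact h4.congr_of_eventuallyEq (Filter.eventuallyEq_of_mem hmem (fun r hr => hXeq r hr))
    have hYd : HasDerivAt Y (-G s) s := by
      have h1 : IntervalIntegrable G volume T s :=
        ContinuousOn.intervalIntegrable (hGc.mono
          (by rw [uIcc_comm, uIcc_of_le hs.2.le]; exact Icc_subset_Icc hs.1.le le_rfl))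
      have h2 : StronglyMeasurableAtFilter G (nhds s) volume :=
        ⟨Icc t T, hmem, hGc.aestronglyMeasurable measurableSet_Icc⟩
      have h3 : ContinuousAt G s := hGc.continuousAt hmem
      have h4 : HasDerivAt (fun u => h (X T) - ∫ r in T..u, G r) (-G s) s :=
        (intervalIntegral.integral_hasDerivAt_right h1 h2 h3).const_sub (h (X T))
      apply h4.congr_of_eventuallyEq (Filter.eventuallyEq_of_mem hmem (fun r hr => ?_))
      rw [hYeq r hr, intervalIntegral.integral_symm T r, ← sub_eq_add_neg]
    exact (hXd.inner ℝ hYd).hasDerivWithinAt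
  -- pointwise bound on ψ
  have hψb : ∀ s ∈ Icc t T, ψ s ≤ -(C₂/2) * q s + K₀ ^ 2 / C₂ := by
    intro s hs
    have hm : ⟪-(G s - g s 0 0), X s⟫ + ⟪F s - f s 0 0, Y s⟫
        ≤ -C₂ * (‖X s‖ ^ 2 + ‖Y s‖ ^ 2) := by
      have hm0 := hmono s (hsub hs) (X s) 0 (Y s) 0
      simp only [sub_zero] at hm0
      exact hm0
    have hexp : ⟪-(G s - g s 0 0), X s⟫ + ⟪F s - f s 0 0, Y s⟫
        = (⟪X s, -G s⟫ + ⟪F s, Y s⟫) + ⟪g s 0 0, X s⟫ - ⟪f s 0 0, Y s⟫ := by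
      simp only [inner_neg_left, inner_sub_left, inner_neg_right]
      rw [real_inner_comm (X s) (G s)]
      ring
    rw [hexp] at hm
    have b1 : -(K₀ * ‖X s‖) ≤ ⟪g s 0 0, X s⟫ := by
      have k1 := abs_real_inner_le_norm (g s 0 0) (X s)
      have k2 : ‖g s 0 0‖ * ‖X s‖ ≤ K₀ * ‖X s‖ :=
        mul_le_mul_of_nonneg_right (hgK s (hsub hs)) (norm_nonneg _)
      have k3 := neg_abs_le (⟪g s 0 0, X s⟫)
      linarith
    have b2 : ⟪f s 0 0, Y s⟫ ≤ K₀ * ‖Y s‖ := by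
      have k1 := real_inner_le_norm (f s 0 0) (Y s)
      have k2 : ‖f s 0 0‖ * ‖Y s‖ ≤ K₀ * ‖Y s‖ :=
        mul_le_mul_of_nonneg_right (hfK s (hsub hs)) (norm_nonneg _)
      linarith
    have habs : K₀ * ‖X s‖ + K₀ * ‖Y s‖
        ≤ (C₂/2) * (‖X s‖ ^ 2 + ‖Y s‖ ^ 2) + K₀ ^ 2 / C₂ := by
      have k1 : 0 ≤ (C₂ * ‖X s‖ - K₀) ^ 2 := sq_nonneg _
      have k2 : 0 ≤ (C₂ * ‖Y s‖ - K₀) ^ 2 := sq_nonneg _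
      have e : (C₂/2) * (‖X s‖ ^ 2 + ‖Y s‖ ^ 2) + K₀ ^ 2 / C₂
            - (K₀ * ‖X s‖ + K₀ * ‖Y s‖)
          = ((C₂ * ‖X s‖ - K₀) ^ 2 + (C₂ * ‖Y s‖ - K₀) ^ 2) / (2 * C₂) := by
        field_simp
        ring
      have k3 : 0 ≤ ((C₂ * ‖X s‖ - K₀) ^ 2 + (C₂ * ‖Y s‖ - K₀) ^ 2) / (2 * C₂) :=
        div_nonneg (add_nonneg k1 k2) (by linarith)
      linarith
    show ⟪X s, -G s⟫ + ⟪F s, Y s⟫ ≤ -(C₂/2) * (‖X s‖ ^ 2 + ‖Y s‖ ^ 2) + K₀ ^ 2 / C₂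
    linarith
  -- integrate the bound
  have hstep3 : ⟪X T, Y T⟫ - ⟪X t, Y t⟫ ≤ -(C₂/2) * I + (K₀ ^ 2 / C₂) * T := by
    rw [← hFTC]
    have hrhs_int : IntervalIntegrable (fun s => -(C₂/2) * q s + K₀ ^ 2 / C₂) volume t T :=
      (hq_int.const_mul _).add intervalIntegrable_const
    have h1 : ∫ s in t..T, ψ s ≤ ∫ s in t..T, (-(C₂/2) * q s + K₀ ^ 2 / C₂) :=
      intervalIntegral.integral_mono_on htT hψ_int hrhs_int hψb
    have h2 : ∫ s in t..T, (-(C₂/2) * q s + K₀ ^ 2 / C₂)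
        = -(C₂/2) * I + (K₀ ^ 2 / C₂) * (T - t) := by
      rw [intervalIntegral.integral_add (hq_int.const_mul _) intervalIntegrable_const,
        intervalIntegral.integral_const_mul, intervalIntegral.integral_const]
      rw [hI_def]
      simp only [smul_eq_mul]
      ring
    have h3 : (K₀ ^ 2 / C₂) * (T - t) ≤ (K₀ ^ 2 / C₂) * T := by
      have hk : 0 ≤ K₀ ^ 2 / C₂ := by positivity
      nlinarith
    linarith
  -- step 4: lower bound on the terminal inner product
  have hstep4 : (C₂/2) * A ^ 2 - K₀ ^ 2 / (2 * C₂) ≤ ⟪X T, Y T⟫ := by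
    have h6 : C₂ * A ^ 2 ≤ ⟪h (X T) - h 0, X T⟫ := by
      have := hh_mono (X T) 0
      simpa using this
    have e : ⟪h (X T) - h 0, X T⟫ = ⟪h (X T), X T⟫ - ⟪h 0, X T⟫ := by
      simp [inner_sub_left]
    rw [e] at h6
    have h7 : -(‖h 0‖ * A) ≤ ⟪h 0, X T⟫ := by
      have k1 : |⟪h 0, X T⟫| ≤ ‖h 0‖ * A := abs_real_inner_le_norm (h 0) (X T)
      have k3 := neg_abs_le (⟪h 0, X T⟫)
      linarith
    have h8 : ‖h 0‖ * A ≤ K₀ * A :=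
      mul_le_mul_of_nonneg_right hhK (norm_nonneg (X T))
    have h9 : ⟪X T, Y T⟫ = ⟪h (X T), X T⟫ := by
      rw [hYT, real_inner_comm]
    rw [h9]
    have key : (C₂/2) * A ^ 2 - K₀ ^ 2 / (2 * C₂) ≤ C₂ * A ^ 2 - K₀ * A := by
      have k : 0 ≤ (C₂ * A - K₀) ^ 2 := sq_nonneg _
      have e2 : C₂ * A ^ 2 - K₀ * A - ((C₂/2) * A ^ 2 - K₀ ^ 2 / (2 * C₂))
          = (C₂ * A - K₀) ^ 2 / (2 * C₂) := by
        field_simp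
        ring
      have k3 : 0 ≤ (C₂ * A - K₀) ^ 2 / (2 * C₂) := div_nonneg k (by linarith)
      linarith
    linarith
  -- raw bounds
  have hGnorm_int : IntervalIntegrable (fun r => ‖G r‖) volume t T :=
    (hGc.norm.mono huicc.subset).intervalIntegrable
  have hFnorm_int : IntervalIntegrable (fun r => ‖F r‖) volume t T :=
    (hFc.norm.mono huicc.subset).intervalIntegrable
  have hbound_int : IntervalIntegrable (fun r => K₀ + C₁ * (‖X r‖ + ‖Y r‖)) volume t T :=
    intervalIntegrable_const.add (hn_int.const_mul _)
  have hbound_eval : ∫ r in t..T, (K₀ + C₁ * (‖X r‖ + ‖Y r‖)) = K₀ * (T - t) + C₁ * J := by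
    rw [intervalIntegral.integral_add intervalIntegrable_const (hn_int.const_mul _),
      intervalIntegral.integral_const_mul, intervalIntegral.integral_const]
    rw [hJ_def]
    simp only [smul_eq_mul]
    ring
  have hGint_le : ∀ s ∈ Icc t T, (∫ r in s..T, ‖G r‖) ≤ K₀ * T + C₁ * J := by
    intro s hs
    have h1 : (∫ r in s..T, ‖G r‖) ≤ ∫ r in t..T, ‖G r‖ :=
      intervalIntegral.integral_mono_interval hs.1 hs.2 le_rfl
        (Filter.Eventually.of_forall fun r => norm_nonneg _) hGnorm_int
    have h2 : (∫ r in t..T, ‖G r‖) ≤ ∫ r in t..T, (K₀ + C₁ * (‖X r‖ + ‖Y r‖)) :=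
      intervalIntegral.integral_mono_on htT hGnorm_int hbound_int hGb
    rw [hbound_eval] at h2
    have h3 : K₀ * (T - t) ≤ K₀ * T := by nlinarith
    linarith
  have hFint_le : ∀ s ∈ Icc t T, (∫ r in t..s, ‖F r‖) ≤ K₀ * T + C₁ * J := by
    intro s hs
    have h1 : (∫ r in t..s, ‖F r‖) ≤ ∫ r in t..T, ‖F r‖ :=
      intervalIntegral.integral_mono_interval le_rfl hs.1 hs.2
        (Filter.Eventually.of_forall fun r => norm_nonneg _) hFnorm_int
    have h2 : (∫ r in t..T, ‖F r‖) ≤ ∫ r in t..T, (K₀ + C₁ * (‖X r‖ + ‖Y r‖)) :=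
      intervalIntegral.integral_mono_on htT hFnorm_int hbound_int hFb
    rw [hbound_eval] at h2
    have h3 : K₀ * (T - t) ≤ K₀ * T := by nlinarith
    linarith
  have hYraw : ∀ s ∈ Icc t T, ‖Y s‖ ≤ C₁ * A + K₀ + K₀ * T + C₁ * J := by
    intro s hs
    have h1 : ‖Y s‖ ≤ ‖h (X T)‖ + ‖∫ r in s..T, G r‖ := by
      rw [hYeq s hs]; exact norm_add_le _ _
    have h2 : ‖∫ r in s..T, G r‖ ≤ ∫ r in s..T, ‖G r‖ :=
      intervalIntegral.norm_integral_le_integral_norm hs.2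
    have h3 : ‖h (X T)‖ ≤ C₁ * A + K₀ := by
      have k1 : ‖h (X T) - h 0‖ ≤ C₁ * ‖X T‖ := by
        have := hh_lip (X T) 0
        simpa using this
      calc ‖h (X T)‖ = ‖(h (X T) - h 0) + h 0‖ := by rw [sub_add_cancel]
        _ ≤ ‖h (X T) - h 0‖ + ‖h 0‖ := norm_add_le _ _
        _ ≤ C₁ * A + K₀ := by rw [hA_def]; linarith
    have h4 := hGint_le s hs
    linarith
  have hXraw : ∀ s ∈ Icc t T, ‖X s‖ ≤ ‖x‖ + K₀ * T + C₁ * J := by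
    intro s hs
    have h1 : ‖X s‖ ≤ ‖x‖ + ‖∫ r in t..s, F r‖ := by
      rw [hXeq s hs]; exact norm_add_le _ _
    have h2 : ‖∫ r in t..s, F r‖ ≤ ∫ r in t..s, ‖F r‖ :=
      intervalIntegral.norm_integral_le_integral_norm hs.1
    have h4 := hFint_le s hs
    linarith
  -- J bound for arbitrary ε
  have hJle : ∀ ε : ℝ, 0 < ε → J ≤ ε * I + T / (2 * ε) := by
    intro ε hε
    have hrhs_int : IntervalIntegrable (fun r => ε * q r + 1 / (2 * ε)) volume t T :=
      (hq_int.const_mul _).add intervalIntegrable_const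
    have h1 : J ≤ ∫ r in t..T, (ε * q r + 1 / (2 * ε)) := by
      rw [hJ_def]
      exact intervalIntegral.integral_mono_on htT hn_int hrhs_int
        (fun r _ => amgm_aux ε ‖X r‖ ‖Y r‖ hε)
    have h2 : ∫ r in t..T, (ε * q r + 1 / (2 * ε)) = ε * I + (T - t) * (1 / (2 * ε)) := by
      rw [intervalIntegral.integral_add (hq_int.const_mul _) intervalIntegrable_const,
        intervalIntegral.integral_const_mul, intervalIntegral.integral_const]
      rw [hI_def]
      simp only [smul_eq_mul]
    have h3 : (T - t) * (1 / (2 * ε)) ≤ T / (2 * ε) := by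
      have hk : 0 ≤ 1 / (2 * ε) := by positivity
      calc (T - t) * (1 / (2 * ε)) ≤ T * (1 / (2 * ε)) :=
            mul_le_mul_of_nonneg_right (by linarith) hk
        _ = T / (2 * ε) := by ring
    linarith
  -- step 5: upper bound on the initial inner product
  set ε₁ : ℝ := C₂ / (16 * C₁ * N) with hε₁_def
  have hε₁ : 0 < ε₁ := by rw [hε₁_def]; positivity
  have hstep5 : ⟪X t, Y t⟫ ≤ (C₂/8) * A ^ 2 + (2 * C₁ ^ 2 / C₂) * N ^ 2
      + (K₀ + K₀ * T) * N + (C₂/16) * I + (8 * T * C₁ ^ 2 / C₂) * N ^ 2 := by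
    have h1 : ⟪X t, Y t⟫ ≤ ‖x‖ * ‖Y t‖ := by
      rw [hXt]; exact real_inner_le_norm _ _
    have h2 := hYraw t ⟨le_rfl, htT⟩
    have h3 : ‖x‖ * ‖Y t‖ ≤ N * (C₁ * A + K₀ + K₀ * T + C₁ * J) :=
      mul_le_mul hxN h2 (norm_nonneg _) hN0.le
    have h4 := hJle ε₁ hε₁
    have h5 : N * (C₁ * J) ≤ (C₂/16) * I + (8 * T * C₁ ^ 2 / C₂) * N ^ 2 := by
      have e1 : N * (C₁ * ε₁) = C₂ / 16 := by
        rw [hε₁_def]; field_simp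
      have e2 : N * (C₁ * (T / (2 * ε₁))) = (8 * T * C₁ ^ 2 / C₂) * N ^ 2 := by
        rw [hε₁_def]; field_simp; ring
      have h6 : N * (C₁ * J) ≤ N * (C₁ * (ε₁ * I + T / (2 * ε₁))) :=
        mul_le_mul_of_nonneg_left (mul_le_mul_of_nonneg_left h4 hC₁.le) hN0.le
      calc N * (C₁ * J) ≤ N * (C₁ * (ε₁ * I + T / (2 * ε₁))) := h6
        _ = N * (C₁ * ε₁) * I + N * (C₁ * (T / (2 * ε₁))) := by ring
        _ = (C₂/16) * I + (8 * T * C₁ ^ 2 / C₂) * N ^ 2 := by rw [e1, e2]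
    have h7 : N * (C₁ * A) ≤ (C₂/8) * A ^ 2 + (2 * C₁ ^ 2 / C₂) * N ^ 2 := by
      have k : 0 ≤ (C₂ * A - 4 * C₁ * N) ^ 2 := sq_nonneg _
      have e : (C₂/8) * A ^ 2 + (2 * C₁ ^ 2 / C₂) * N ^ 2 - N * (C₁ * A)
          = (C₂ * A - 4 * C₁ * N) ^ 2 / (8 * C₂) := by
        field_simp
        ring
      have k3 : 0 ≤ (C₂ * A - 4 * C₁ * N) ^ 2 / (8 * C₂) := div_nonneg k (by linarith)
      linarith
    nlinarith [h1, h3, h5, h7]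
  -- combine: energy bound
  have hD := fbD_nonneg (C₁ := C₁) hT hC₂ hK₀
  have hDN : 0 ≤ fbD T C₁ C₂ K₀ * N ^ 2 := mul_nonneg hD (sq_nonneg _)
  have hcomb : (3 * C₂ / 8) * A ^ 2 + (7 * C₂ / 16) * I ≤ fbD T C₁ C₂ K₀ * N ^ 2 := by
    have hN2 : (1:ℝ) ≤ N ^ 2 := by rw [hNsq]; linarith [sq_nonneg ‖x‖]
    have hNN : N ≤ N ^ 2 := by
      have hk := mul_le_mul_of_nonneg_left hN1 hN0.le
      have he : N * N = N ^ 2 := by ring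
      linarith [hk]
    have hKN : (K₀ + K₀ * T) * N ≤ (K₀ + K₀ * T) * N ^ 2 := by
      have hk : 0 ≤ K₀ + K₀ * T := by positivity
      exact mul_le_mul_of_nonneg_left hNN hk
    have hTK : (K₀ ^ 2 / C₂) * T ≤ (K₀ ^ 2 * T / C₂) * N ^ 2 := by
      have hk : 0 ≤ K₀ ^ 2 * T / C₂ := by positivity
      have hm := mul_le_mul_of_nonneg_left hN2 hk
      have he : (K₀ ^ 2 / C₂) * T = K₀ ^ 2 * T / C₂ := by ring
      linarith [hm, he]
    have hKc : K₀ ^ 2 / (2 * C₂) ≤ (K₀ ^ 2 / (2 * C₂)) * N ^ 2 := by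
      have hk : 0 ≤ K₀ ^ 2 / (2 * C₂) := by positivity
      have hm := mul_le_mul_of_nonneg_left hN2 hk
      linarith [hm]
    unfold fbD
    linarith [hstep3, hstep4, hstep5, hKN, hTK, hKc]
  have hA2 : A ^ 2 ≤ fbC₃ T C₁ C₂ K₀ * N ^ 2 := by
    have hIC : 0 ≤ (7 * C₂ / 16) * I := by positivity
    have h1 : C₂ * A ^ 2 ≤ 4 * (fbD T C₁ C₂ K₀ * N ^ 2) := by
      linarith [hcomb, hIC, hDN]
    unfold fbC₃
    rw [show 4 * fbD T C₁ C₂ K₀ / C₂ * N ^ 2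
      = 4 * (fbD T C₁ C₂ K₀ * N ^ 2) / C₂ by ring, le_div_iff₀ hC₂]
    linarith
  have hI2 : I ≤ fbC₃ T C₁ C₂ K₀ * N ^ 2 := by
    have hAC : 0 ≤ (3 * C₂ / 8) * A ^ 2 := by positivity
    have h1 : C₂ * I ≤ 4 * (fbD T C₁ C₂ K₀ * N ^ 2) := by
      linarith [hcomb, hAC, hDN]
    unfold fbC₃
    rw [show 4 * fbD T C₁ C₂ K₀ / C₂ * N ^ 2
      = 4 * (fbD T C₁ C₂ K₀ * N ^ 2) / C₂ by ring, le_div_iff₀ hC₂]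
    linarith
  -- final bounds
  have hC₃0 : 0 ≤ fbC₃ T C₁ C₂ K₀ := fbC₃_nonneg (C₁ := C₁) hT hC₂ hK₀
  have hA_le : A ≤ Real.sqrt (fbC₃ T C₁ C₂ K₀) * N := by
    have h1 : A ≤ Real.sqrt (fbC₃ T C₁ C₂ K₀ * N ^ 2) := Real.le_sqrt_of_sq_le hA2
    rwa [Real.sqrt_mul hC₃0, Real.sqrt_sq hN0.le] at h1
  have hJ_le : J ≤ (fbC₃ T C₁ C₂ K₀ + T / 2) * N := by
    have h1 := hJle (1 / N) (by positivity)
    have h2 : (1 / N) * I ≤ fbC₃ T C₁ C₂ K₀ * N := by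
      rw [one_div, inv_mul_eq_div, div_le_iff₀ hN0]
      calc I ≤ fbC₃ T C₁ C₂ K₀ * N ^ 2 := hI2
        _ = fbC₃ T C₁ C₂ K₀ * N * N := by ring
    have h3 : T / (2 * (1 / N)) = T * N / 2 := by
      field_simp
    have h4 : J ≤ fbC₃ T C₁ C₂ K₀ * N + T * N / 2 := by
      rw [h3] at h1; linarith
    linarith [h4, show (fbC₃ T C₁ C₂ K₀ + T / 2) * N
      = fbC₃ T C₁ C₂ K₀ * N + T * N / 2 from by ring]
  -- conclusion
  intro s hs
  have t1 : K₀ * T ≤ K₀ * T * N := by nlinarith [mul_nonneg hK₀ hT.le]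
  have t2 : C₁ * J ≤ C₁ * ((fbC₃ T C₁ C₂ K₀ + T / 2) * N) :=
    mul_le_mul_of_nonneg_left hJ_le hC₁.le
  have t3 : 0 ≤ K₀ * N := mul_nonneg hK₀ hN0.le
  have t4 : 0 ≤ C₁ * Real.sqrt (fbC₃ T C₁ C₂ K₀) * N := by positivity
  have hMN : fbM T C₁ C₂ K₀ * N = N + K₀ * N + K₀ * T * N
      + C₁ * Real.sqrt (fbC₃ T C₁ C₂ K₀) * N + C₁ * ((fbC₃ T C₁ C₂ K₀ + T / 2) * N) := by
    unfold fbM; ring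
  constructor
  · have hx1 := hXraw s hs
    rw [hMN]
    linarith
  · have hy1 := hYraw s hs
    have t5 : C₁ * A ≤ C₁ * (Real.sqrt (fbC₃ T C₁ C₂ K₀) * N) :=
      mul_le_mul_of_nonneg_left hA_le hC₁.le
    have t6 : K₀ ≤ K₀ * N := by
      have := mul_le_mul_of_nonneg_left hN1 hK₀
      linarith
    rw [hMN]
    linarith [hy1, t5, t1, t2, t6, hN0.le]

set_option maxHeartbeats 1000000 in
/-- Deterministic version of the second-moment growth estimate (Lemma 2 of the paper, ε → 0):
there is a constant `C > 0` independent of `t` and `x` such that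
`sup_{s∈[t,T]} ‖X^{t,x}(s)‖² ≤ C(1+‖x‖²)` and likewise for `Y`. -/
theorem fbsde_growth_estimate
    (n : ℕ) (hn : 1 ≤ n) (T : ℝ) (hT : 0 < T)
    (f g : ℝ → Vec n → Vec n → Vec n) (h : Vec n → Vec n)
    (hf_cont : ContinuousOn (fun p : ℝ × Vec n × Vec n => f p.1 p.2.1 p.2.2)
      (Icc 0 T ×ˢ (univ ×ˢ univ)))
    (hg_cont : ContinuousOn (fun p : ℝ × Vec n × Vec n => g p.1 p.2.1 p.2.2)
      (Icc 0 T ×ˢ (univ ×ˢ univ)))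
    (hh_cont : Continuous h)
    (C₁ : ℝ) (hC₁ : 0 < C₁)
    (hf_lip : ∀ t ∈ Icc (0:ℝ) T, ∀ x₁ x₂ y₁ y₂ : Vec n,
      ‖f t x₁ y₁ - f t x₂ y₂‖ ≤ C₁ * (‖x₁ - x₂‖ + ‖y₁ - y₂‖))
    (hg_lip : ∀ t ∈ Icc (0:ℝ) T, ∀ x₁ x₂ y₁ y₂ : Vec n,
      ‖g t x₁ y₁ - g t x₂ y₂‖ ≤ C₁ * (‖x₁ - x₂‖ + ‖y₁ - y₂‖))
    (hh_lip : ∀ x₁ x₂ : Vec n, ‖h x₁ - h x₂‖ ≤ C₁ * ‖x₁ - x₂‖)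
    (C₂ : ℝ) (hC₂ : 0 < C₂)
    (hmono : ∀ t ∈ Icc (0:ℝ) T, ∀ x₁ x₂ y₁ y₂ : Vec n,
      ⟪-(g t x₁ y₁ - g t x₂ y₂), x₁ - x₂⟫ + ⟪f t x₁ y₁ - f t x₂ y₂, y₁ - y₂⟫
        ≤ -C₂ * (‖x₁ - x₂‖ ^ 2 + ‖y₁ - y₂‖ ^ 2))
    (hh_mono : ∀ x₁ x₂ : Vec n, C₂ * ‖x₁ - x₂‖ ^ 2 ≤ ⟪h x₁ - h x₂, x₁ - x₂⟫)
    (X Y : ℝ → Vec n → ℝ → Vec n)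
    (hsol : ∀ t ∈ Icc (0:ℝ) T, ∀ x : Vec n, IsFBSol T f g h t x (X t x) (Y t x))
    (huniq : ∀ t ∈ Icc (0:ℝ) T, ∀ x : Vec n, ∀ X' Y' : ℝ → Vec n,
      IsFBSol T f g h t x X' Y' → EqOn X' (X t x) (Icc t T) ∧ EqOn Y' (Y t x) (Icc t T))
    : ∃ C : ℝ, 0 < C ∧ ∀ t ∈ Icc (0:ℝ) T, ∀ x : Vec n, ∀ s ∈ Icc t T,
      ‖X t x s‖ ^ 2 ≤ C * (1 + ‖x‖ ^ 2) ∧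
      ‖Y t x s‖ ^ 2 ≤ C * (1 + ‖x‖ ^ 2) := by
  -- bound the data at the origin
  have hf0c : ContinuousOn (fun r : ℝ => f r 0 0) (Icc 0 T) := by
    have htriple : ContinuousOn (fun r : ℝ => (r, (0 : Vec n), (0 : Vec n))) (Icc 0 T) :=
      continuousOn_id.prodMk (continuousOn_const.prodMk continuousOn_const)
    exact hf_cont.comp htriple (fun r hr => ⟨hr, mem_univ _, mem_univ _⟩)
  have hg0c : ContinuousOn (fun r : ℝ => g r 0 0) (Icc 0 T) := by
    have htriple : ContinuousOn (fun r : ℝ => (r, (0 : Vec n), (0 : Vec n))) (Icc 0 T) :=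
      continuousOn_id.prodMk (continuousOn_const.prodMk continuousOn_const)
    exact hg_cont.comp htriple (fun r hr => ⟨hr, mem_univ _, mem_univ _⟩)
  obtain ⟨Kf, hKf⟩ := isCompact_Icc.exists_bound_of_continuousOn hf0c
  obtain ⟨Kg, hKg⟩ := isCompact_Icc.exists_bound_of_continuousOn hg0c
  set K₀ : ℝ := max (max Kf Kg) ‖h 0‖ with hK₀_def
  have hK₀ : 0 ≤ K₀ := le_trans (norm_nonneg _) (le_max_right _ _)
  have hfK : ∀ r ∈ Icc (0:ℝ) T, ‖f r 0 0‖ ≤ K₀ :=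
    fun r hr => le_trans (hKf r hr) (le_trans (le_max_left _ _) (le_max_left _ _))
  have hgK : ∀ r ∈ Icc (0:ℝ) T, ‖g r 0 0‖ ≤ K₀ :=
    fun r hr => le_trans (hKg r hr) (le_trans (le_max_right _ _) (le_max_left _ _))
  have hhK : ‖h 0‖ ≤ K₀ := le_max_right _ _
  set M : ℝ := fbM T C₁ C₂ K₀ with hM_def
  have hM0 : 0 ≤ M := fbM_nonneg hT hC₁ hC₂ hK₀
  refine ⟨M ^ 2 + 1, by positivity, ?_⟩
  intro t ht x s hs
  have hkey := fbsde_key hT hf_cont hg_cont hC₁ hf_lip hg_lip hh_lip hC₂ hmono hh_mono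
    hK₀ hfK hgK hhK ht x (hsol t ht x) s hs
  have hNsq : Real.sqrt (1 + ‖x‖ ^ 2) ^ 2 = 1 + ‖x‖ ^ 2 := Real.sq_sqrt (by positivity)
  have hxx : (0:ℝ) ≤ 1 + ‖x‖ ^ 2 := by positivity
  constructor
  · have h1 : ‖X t x s‖ ^ 2 ≤ (M * Real.sqrt (1 + ‖x‖ ^ 2)) ^ 2 :=
      pow_le_pow_left₀ (norm_nonneg _) hkey.1 2
    calc ‖X t x s‖ ^ 2 ≤ (M * Real.sqrt (1 + ‖x‖ ^ 2)) ^ 2 := h1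
      _ = M ^ 2 * (1 + ‖x‖ ^ 2) := by rw [mul_pow, hNsq]
      _ ≤ (M ^ 2 + 1) * (1 + ‖x‖ ^ 2) := by nlinarith
  · have h1 : ‖Y t x s‖ ^ 2 ≤ (M * Real.sqrt (1 + ‖x‖ ^ 2)) ^ 2 :=
      pow_le_pow_left₀ (norm_nonneg _) hkey.2 2
    calc ‖Y t x s‖ ^ 2 ≤ (M * Real.sqrt (1 + ‖x‖ ^ 2)) ^ 2 := h1
      _ = M ^ 2 * (1 + ‖x‖ ^ 2) := by rw [mul_pow, hNsq]
      _ ≤ (M ^ 2 + 1) * (1 + ‖x‖ ^ 2) := by nlinarith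
end
end

section
/- There exists a constant C > 0, independent of t₁, t₂ and x, such that for all t₁, t₂ ∈ [0,T] and all x ∈ ℝⁿ, sup_{s∈[t₁∨t₂, T]} |X^{t₁,x}(s) − X^{t₂,x}(s)|² ≤ C|t₁−t₂|(1+|x|²) and sup_{s∈[t₁∨t₂, T]} |Y^{t₁,x}(s) − Y^{t₂,x}(s)|² ≤ C|t₁−t₂|(1+|x|²). (Deterministic version of the continuity-in-t estimate, Lemma 3 of the paper in the limit ε → 0.) -/
open MeasureTheory Set intervalIntegral RealInnerProductSpace

noncomputable section

lemma fwd_hasDerivAt {n : ℕ} {t T : ℝ} {F : ℝ → Vec n} (hF : ContinuousOn F (Icc t T))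
    {W : ℝ → Vec n} {w : Vec n} (hW : ∀ s ∈ Icc t T, W s = w + ∫ r in t..s, F r)
    {s : ℝ} (hs : s ∈ Ioo t T) : HasDerivAt W (F s) s := by
  have hmem : Icc t T ∈ nhds s := Icc_mem_nhds hs.1 hs.2
  have hFi : IntervalIntegrable F volume t s :=
    (hF.mono (by rw [uIcc_of_le hs.1.le]; exact Icc_subset_Icc le_rfl hs.2.le)).intervalIntegrable
  have hmeas : StronglyMeasurableAtFilter F (nhds s) volume :=
    ⟨Ioo t T, Ioo_mem_nhds hs.1 hs.2,
      (hF.mono Ioo_subset_Icc_self).aestronglyMeasurable measurableSet_Ioo⟩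
  have h1 : HasDerivAt (fun u => w + ∫ r in t..u, F r) (F s) s :=
    (intervalIntegral.integral_hasDerivAt_right hFi hmeas (hF.continuousAt hmem)).const_add w
  exact h1.congr_of_eventuallyEq (Filter.eventuallyEq_of_mem hmem hW)

lemma bwd_hasDerivAt {n : ℕ} {t T : ℝ} (htT : t ≤ T) {G : ℝ → Vec n} (hG : ContinuousOn G (Icc t T))
    {W : ℝ → Vec n} {w : Vec n} (hW : ∀ s ∈ Icc t T, W s = w + ∫ r in s..T, G r)
    {s : ℝ} (hs : s ∈ Ioo t T) : HasDerivAt W (-(G s)) s := by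
  have hmem : Icc t T ∈ nhds s := Icc_mem_nhds hs.1 hs.2
  have hGi : ∀ u ∈ Icc t T, IntervalIntegrable G volume t u := fun u hu =>
    (hG.mono (by rw [uIcc_of_le hu.1]; exact Icc_subset_Icc le_rfl hu.2)).intervalIntegrable
  have hW' : ∀ u ∈ Icc t T, W u = (w + ∫ r in t..T, G r) - ∫ r in t..u, G r := by
    intro u hu
    rw [hW u hu]
    have := intervalIntegral.integral_interval_sub_left (hGi T ⟨htT, le_rfl⟩) (hGi u hu)
    rw [← this]; abel
  have hFi : IntervalIntegrable G volume t s := hGi s (Ioo_subset_Icc_self hs)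
  have hmeas : StronglyMeasurableAtFilter G (nhds s) volume :=
    ⟨Ioo t T, Ioo_mem_nhds hs.1 hs.2,
      (hG.mono Ioo_subset_Icc_self).aestronglyMeasurable measurableSet_Ioo⟩
  have h1 : HasDerivAt (fun u => (w + ∫ r in t..T, G r) - ∫ r in t..u, G r) (-(G s)) s :=
    (intervalIntegral.integral_hasDerivAt_right hFi hmeas (hG.continuousAt hmem)).const_sub _
  exact h1.congr_of_eventuallyEq (Filter.eventuallyEq_of_mem hmem hW')

lemma ftc_inner {n : ℕ} {t T : ℝ} (htT : t ≤ T) {P Q FP GQ : ℝ → Vec n}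
    (hPc : ContinuousOn P (Icc t T)) (hQc : ContinuousOn Q (Icc t T))
    (hFPc : ContinuousOn FP (Icc t T)) (hGQc : ContinuousOn GQ (Icc t T))
    (hP : ∀ s ∈ Ioo t T, HasDerivAt P (FP s) s)
    (hQ : ∀ s ∈ Ioo t T, HasDerivAt Q (GQ s) s)
    {ρ : ℝ → ℝ} (hρc : ContinuousOn ρ (Icc t T))
    (hbound : ∀ s ∈ Icc t T, ⟪P s, GQ s⟫ + ⟪FP s, Q s⟫ ≤ ρ s) :
    ⟪P T, Q T⟫ - ⟪P t, Q t⟫ ≤ ∫ s in t..T, ρ s := by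
  set d : ℝ → ℝ := fun s => ⟪P s, GQ s⟫ + ⟪FP s, Q s⟫ with hd
  have hdc : ContinuousOn d (Icc t T) := ((hPc.inner hGQc).add (hFPc.inner hQc))
  have hdi : IntervalIntegrable d volume t T :=
    (hdc.mono (by rw [uIcc_of_le htT])).intervalIntegrable
  have hφc : ContinuousOn (fun s => ⟪P s, Q s⟫) (Icc t T) := hPc.inner hQc
  have heq : ∫ s in t..T, d s = ⟪P T, Q T⟫ - ⟪P t, Q t⟫ := by
    apply intervalIntegral.integral_eq_sub_of_hasDeriv_right_of_le htT hφc _ hdi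
    intro s hs
    exact (((hP s hs).inner ℝ (hQ s hs))).hasDerivWithinAt
  rw [← heq]
  apply intervalIntegral.integral_mono_on htT hdi
    ((hρc.mono (by rw [uIcc_of_le htT])).intervalIntegrable) hbound

lemma int_amgm {t T lam : ℝ} (htT : t ≤ T) (hlam : 0 < lam) {u v : ℝ → ℝ}
    (huc : ContinuousOn u (Icc t T)) (hvc : ContinuousOn v (Icc t T)) :
    2 * lam * ∫ s in t..T, (u s + v s) ≤
      2 * lam ^ 2 * (T - t) + ∫ s in t..T, (u s ^ 2 + v s ^ 2) := by
  have hui : IntervalIntegrable (fun s => u s + v s) volume t T :=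
    ((huc.add hvc).mono (by rw [uIcc_of_le htT])).intervalIntegrable
  have hsqc : ContinuousOn (fun s => u s ^ 2 + v s ^ 2) (Icc t T) :=
    (huc.pow 2).add (hvc.pow 2)
  have hsqi : IntervalIntegrable (fun s => u s ^ 2 + v s ^ 2) volume t T :=
    (hsqc.mono (by rw [uIcc_of_le htT])).intervalIntegrable
  have hmono : ∫ s in t..T, (2 * lam * (u s + v s)) ≤
      ∫ s in t..T, (2 * lam ^ 2 + (u s ^ 2 + v s ^ 2)) := by
    apply intervalIntegral.integral_mono_on htT (hui.const_mul _)
      (IntervalIntegrable.add intervalIntegrable_const hsqi)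
    intro s hs
    nlinarith [sq_nonneg (u s + v s - 2 * lam), sq_nonneg (u s - v s)]
  rw [intervalIntegral.integral_const_mul] at hmono
  rw [intervalIntegral.integral_add intervalIntegrable_const hsqi,
    intervalIntegral.integral_const, smul_eq_mul, mul_comm (T - t)] at hmono
  linarith

lemma int_mono_ext {t T s : ℝ} (hs : s ∈ Icc t T) {ρ : ℝ → ℝ}
    (hρ : ContinuousOn ρ (Icc t T)) (h0 : ∀ r ∈ Icc t T, 0 ≤ ρ r) :
    ∫ r in t..s, ρ r ≤ ∫ r in t..T, ρ r := by
  have h1 : IntervalIntegrable ρ volume t s :=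
    (hρ.mono (by rw [uIcc_of_le hs.1]; exact Icc_subset_Icc le_rfl hs.2)).intervalIntegrable
  have h2 : IntervalIntegrable ρ volume s T :=
    (hρ.mono (by rw [uIcc_of_le hs.2]; exact Icc_subset_Icc hs.1 le_rfl)).intervalIntegrable
  have h3 : 0 ≤ ∫ r in s..T, ρ r :=
    intervalIntegral.integral_nonneg hs.2 (fun r hr => h0 r ⟨hs.1.trans hr.1, hr.2⟩)
  have h4 := intervalIntegral.integral_add_adjacent_intervals h1 h2
  linarith [h4]

lemma int_mono_ext' {t T s : ℝ} (hs : s ∈ Icc t T) {ρ : ℝ → ℝ}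
    (hρ : ContinuousOn ρ (Icc t T)) (h0 : ∀ r ∈ Icc t T, 0 ≤ ρ r) :
    ∫ r in s..T, ρ r ≤ ∫ r in t..T, ρ r := by
  have h1 : IntervalIntegrable ρ volume t s :=
    (hρ.mono (by rw [uIcc_of_le hs.1]; exact Icc_subset_Icc le_rfl hs.2)).intervalIntegrable
  have h2 : IntervalIntegrable ρ volume s T :=
    (hρ.mono (by rw [uIcc_of_le hs.2]; exact Icc_subset_Icc hs.1 le_rfl)).intervalIntegrable
  have h3 : 0 ≤ ∫ r in t..s, ρ r :=
    intervalIntegral.integral_nonneg hs.1 (fun r hr => h0 r ⟨hr.1, hr.2.trans hs.2⟩)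
  have h4 := intervalIntegral.integral_add_adjacent_intervals h1 h2
  linarith [h4]

lemma double_le_add_of_sq_le_mul {e a b : ℝ} (he : 0 ≤ e) (ha : 0 ≤ a) (hb : 0 ≤ b)
    (h : e ^ 2 ≤ a * b) : 2 * e ≤ a + b := by
  nlinarith [sq_nonneg (a - b), sq_nonneg (a + b - 2 * e)]

lemma arith_I {θ C₂ Dd II Qq R T t : ℝ} (hC₂ : 0 ≤ C₂) (hD : 0 ≤ Dd) (hθ : 0 ≤ θ)
    (ht0 : 0 ≤ t) (h4 : 2 * (θ * Dd) * II ≤ 2 * (θ * Dd) ^ 2 * (T - t) + Qq)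
    (hQR : C₂ * Qq ≤ R * Dd) :
    (2 * (θ * C₂) * II) * Dd ≤ (2 * θ ^ 2 * C₂ * Dd * T + R) * Dd := by
  nlinarith [mul_le_mul_of_nonneg_right h4 hC₂,
    mul_nonneg (mul_nonneg (mul_nonneg (mul_nonneg hθ hθ) hC₂) (mul_nonneg hD hD)) ht0]

lemma amgm_M {M C₂ K w : ℝ} (hC₂ : 0 < C₂) (hK : C₂ * K = M ^ 2) :
    2 * (M * w) ≤ C₂ * w ^ 2 + K := by
  nlinarith [sq_nonneg (C₂ * w - M), hC₂]

lemma sq_est {a w d T e : ℝ} (ha : 0 ≤ a) (hw : 0 ≤ w) (hd : 0 ≤ d) (hdT : d ≤ T)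
    (he : 0 ≤ e) (hbound : e ≤ a * (1 + w) * d) :
    e ^ 2 ≤ 2 * T * a ^ 2 * d * (1 + w ^ 2) := by
  have hb0 : 0 ≤ a * (1 + w) * d := mul_nonneg (mul_nonneg ha (by linarith)) hd
  have h1 : e ^ 2 ≤ (a * (1 + w) * d) ^ 2 := by
    nlinarith [mul_nonneg (sub_nonneg.2 hbound) (add_nonneg hb0 he)]
  have h2 : (1 + w) ^ 2 ≤ 2 * (1 + w ^ 2) := by nlinarith [sq_nonneg (1 - w)]
  have h4 : (1 + w) ^ 2 * d ≤ 2 * (1 + w ^ 2) * T := by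
    nlinarith [mul_nonneg (sub_nonneg.2 h2) hd,
      mul_nonneg (by positivity : (0:ℝ) ≤ 2 * (1 + w ^ 2)) (sub_nonneg.2 hdT)]
  have h5 : a ^ 2 * d * ((1 + w) ^ 2 * d) ≤ a ^ 2 * d * (2 * (1 + w ^ 2) * T) :=
    mul_le_mul_of_nonneg_left h4 (by positivity)
  nlinarith [h1, h5]

set_option maxHeartbeats 4000000 in
/-- Deterministic version of the continuity-in-`t` estimate (Lemma 3 of the paper, ε → 0):
there is a constant `C > 0` independent of `t₁, t₂, x` such that
`sup_{s∈[t₁∨t₂,T]} ‖X^{t₁,x}(s) − X^{t₂,x}(s)‖² ≤ C|t₁−t₂|(1+‖x‖²)` and likewise for `Y`. -/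
theorem fbsde_continuity_in_t
    (n : ℕ) (hn : 1 ≤ n) (T : ℝ) (hT : 0 < T)
    (f g : ℝ → Vec n → Vec n → Vec n) (h : Vec n → Vec n)
    (hf_cont : ContinuousOn (fun p : ℝ × Vec n × Vec n => f p.1 p.2.1 p.2.2)
      (Icc 0 T ×ˢ (univ ×ˢ univ)))
    (hg_cont : ContinuousOn (fun p : ℝ × Vec n × Vec n => g p.1 p.2.1 p.2.2)
      (Icc 0 T ×ˢ (univ ×ˢ univ)))
    (hh_cont : Continuous h)
    (C₁ : ℝ) (hC₁ : 0 < C₁)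
    (hf_lip : ∀ t ∈ Icc (0:ℝ) T, ∀ x₁ x₂ y₁ y₂ : Vec n,
      ‖f t x₁ y₁ - f t x₂ y₂‖ ≤ C₁ * (‖x₁ - x₂‖ + ‖y₁ - y₂‖))
    (hg_lip : ∀ t ∈ Icc (0:ℝ) T, ∀ x₁ x₂ y₁ y₂ : Vec n,
      ‖g t x₁ y₁ - g t x₂ y₂‖ ≤ C₁ * (‖x₁ - x₂‖ + ‖y₁ - y₂‖))
    (hh_lip : ∀ x₁ x₂ : Vec n, ‖h x₁ - h x₂‖ ≤ C₁ * ‖x₁ - x₂‖)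
    (C₂ : ℝ) (hC₂ : 0 < C₂)
    (hmono : ∀ t ∈ Icc (0:ℝ) T, ∀ x₁ x₂ y₁ y₂ : Vec n,
      ⟪-(g t x₁ y₁ - g t x₂ y₂), x₁ - x₂⟫ + ⟪f t x₁ y₁ - f t x₂ y₂, y₁ - y₂⟫
        ≤ -C₂ * (‖x₁ - x₂‖ ^ 2 + ‖y₁ - y₂‖ ^ 2))
    (hh_mono : ∀ x₁ x₂ : Vec n, C₂ * ‖x₁ - x₂‖ ^ 2 ≤ ⟪h x₁ - h x₂, x₁ - x₂⟫)
    (X Y : ℝ → Vec n → ℝ → Vec n)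
    (hsol : ∀ t ∈ Icc (0:ℝ) T, ∀ x : Vec n, IsFBSol T f g h t x (X t x) (Y t x))
    (huniq : ∀ t ∈ Icc (0:ℝ) T, ∀ x : Vec n, ∀ X' Y' : ℝ → Vec n,
      IsFBSol T f g h t x X' Y' → EqOn X' (X t x) (Icc t T) ∧ EqOn Y' (Y t x) (Icc t T))
    : ∃ C : ℝ, 0 < C ∧ ∀ t₁ ∈ Icc (0:ℝ) T, ∀ t₂ ∈ Icc (0:ℝ) T, ∀ x : Vec n,
      ∀ s ∈ Icc (max t₁ t₂) T,
      ‖X t₁ x s - X t₂ x s‖ ^ 2 ≤ C * |t₁ - t₂| * (1 + ‖x‖ ^ 2) ∧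
      ‖Y t₁ x s - Y t₂ x s‖ ^ 2 ≤ C * |t₁ - t₂| * (1 + ‖x‖ ^ 2) := by
  have hIccsub : ∀ t ∈ Icc (0:ℝ) T, Icc t T ⊆ Icc 0 T := fun t ht => Icc_subset_Icc ht.1 le_rfl
  -- bound on f, g, h at 0
  obtain ⟨M, hM1, hMf, hMg, hMh⟩ : ∃ M : ℝ, 1 ≤ M ∧ (∀ s ∈ Icc (0:ℝ) T, ‖f s 0 0‖ ≤ M) ∧
      (∀ s ∈ Icc (0:ℝ) T, ‖g s 0 0‖ ≤ M) ∧ ‖h 0‖ ≤ M := by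
    have hc0 : ContinuousOn (fun s : ℝ => ((s, ((0:Vec n), (0:Vec n))) : ℝ × Vec n × Vec n))
        (Icc (0:ℝ) T) := (continuousOn_id.prodMk continuousOn_const)
    have hc1 : ContinuousOn (fun s : ℝ => f s 0 0) (Icc (0:ℝ) T) :=
      hf_cont.comp hc0 (fun s hs => ⟨hs, mem_univ _, mem_univ _⟩)
    have hc2 : ContinuousOn (fun s : ℝ => g s 0 0) (Icc (0:ℝ) T) :=
      hg_cont.comp hc0 (fun s hs => ⟨hs, mem_univ _, mem_univ _⟩)
    obtain ⟨M₁, hM₁⟩ := isCompact_Icc.exists_bound_of_continuousOn hc1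
    obtain ⟨M₂, hM₂⟩ := isCompact_Icc.exists_bound_of_continuousOn hc2
    refine ⟨max 1 (max M₁ (max M₂ ‖h 0‖)), le_max_left _ _, fun s hs => ?_, fun s hs => ?_, ?_⟩
    · exact (hM₁ s hs).trans (le_max_of_le_right (le_max_left _ _))
    · exact (hM₂ s hs).trans (le_max_of_le_right (le_max_of_le_right (le_max_left _ _)))
    · exact le_max_of_le_right (le_max_of_le_right (le_max_right _ _))
  -- continuity of compositions
  have hcompf : ∀ t ∈ Icc (0:ℝ) T, ∀ (Xc Yc : ℝ → Vec n), ContinuousOn Xc (Icc t T) →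
      ContinuousOn Yc (Icc t T) → ContinuousOn (fun r => f r (Xc r) (Yc r)) (Icc t T) :=
    fun t ht Xc Yc hXc hYc => hf_cont.comp (continuousOn_id.prodMk (hXc.prodMk hYc))
      (fun r hr => ⟨hIccsub t ht hr, mem_univ _, mem_univ _⟩)
  have hcompg : ∀ t ∈ Icc (0:ℝ) T, ∀ (Xc Yc : ℝ → Vec n), ContinuousOn Xc (Icc t T) →
      ContinuousOn Yc (Icc t T) → ContinuousOn (fun r => g r (Xc r) (Yc r)) (Icc t T) :=
    fun t ht Xc Yc hXc hYc => hg_cont.comp (continuousOn_id.prodMk (hXc.prodMk hYc))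
      (fun r hr => ⟨hIccsub t ht hr, mem_univ _, mem_univ _⟩)
  -- value facts
  have hXt : ∀ t ∈ Icc (0:ℝ) T, ∀ x : Vec n, X t x t = x := by
    intro t ht x
    have := (hsol t ht x).2.2.1 t ⟨le_rfl, ht.2⟩
    simpa using this
  have hYT : ∀ t ∈ Icc (0:ℝ) T, ∀ x : Vec n, Y t x T = h (X t x T) := by
    intro t ht x
    have := (hsol t ht x).2.2.2 T ⟨ht.2, le_rfl⟩
    simpa using this
  -- derivatives of solutions
  have hXD : ∀ t ∈ Icc (0:ℝ) T, ∀ x : Vec n, ∀ s ∈ Ioo t T,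
      HasDerivAt (X t x) (f s (X t x s) (Y t x s)) s := fun t ht x s hs =>
    fwd_hasDerivAt (hcompf t ht _ _ (hsol t ht x).1 (hsol t ht x).2.1) (hsol t ht x).2.2.1 hs
  have hYD : ∀ t ∈ Icc (0:ℝ) T, ∀ x : Vec n, ∀ s ∈ Ioo t T,
      HasDerivAt (Y t x) (-(g s (X t x s) (Y t x s))) s := fun t ht x s hs =>
    bwd_hasDerivAt ht.2 (hcompg t ht _ _ (hsol t ht x).1 (hsol t ht x).2.1) (hsol t ht x).2.2.2 hs
  -- the auxiliary constant θ
  obtain ⟨θ, hθ0, hθC₂⟩ : ∃ θ : ℝ, 0 < θ ∧ θ * C₂ = 2 * C₁ + 2 :=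
    ⟨(2 * C₁ + 2) / C₂, by positivity, by field_simp⟩
  have hθC₂0 : (0:ℝ) < 2 * (θ * C₂) := by positivity
  -- Step A : stability in x
  obtain ⟨cA, hcA0, hA⟩ : ∃ cA : ℝ, 0 < cA ∧ ∀ t ∈ Icc (0:ℝ) T, ∀ x₁ x₂ : Vec n, ∀ s ∈ Icc t T,
      ‖X t x₁ s - X t x₂ s‖ ≤ cA * ‖x₁ - x₂‖ ∧ ‖Y t x₁ s - Y t x₂ s‖ ≤ cA * ‖x₁ - x₂‖ := by
    set cJ : ℝ := C₁ * θ ^ 2 * C₂ * (1 + 2 * T) with hcJ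
    have hcJ0 : 0 < cJ :=
      mul_pos (mul_pos (mul_pos hC₁ (pow_pos hθ0 2)) hC₂) (by linarith only [hT])
    set cE : ℝ := (θ ^ 2 * C₂ + cJ) / (2 * (θ * C₂)) with hcE
    set cI : ℝ := (2 * θ ^ 2 * C₂ * T + cJ) / (2 * (θ * C₂)) with hcI
    have hcE0 : 0 < cE := div_pos (by positivity) hθC₂0
    have hcI0 : 0 < cI := div_pos
      (add_pos (mul_pos (mul_pos (mul_pos two_pos (pow_pos hθ0 2)) hC₂) hT) hcJ0) hθC₂0
    refine ⟨1 + C₁ * (cE + cI), by positivity, fun t ht x₁ x₂ => ?_⟩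
    rcases eq_or_ne x₁ x₂ with rfl | hne
    · intro s hs; simp
    have hD : 0 < ‖x₁ - x₂‖ := by rwa [norm_pos_iff, sub_ne_zero]
    obtain ⟨hX₁c, hY₁c, hX₁e, hY₁e⟩ := hsol t ht x₁
    obtain ⟨hX₂c, hY₂c, hX₂e, hY₂e⟩ := hsol t ht x₂
    have hF₁c := hcompf t ht _ _ hX₁c hY₁c
    have hG₁c := hcompg t ht _ _ hX₁c hY₁c
    have hF₂c := hcompf t ht _ _ hX₂c hY₂c
    have hG₂c := hcompg t ht _ _ hX₂c hY₂c
    have huc : ContinuousOn (fun r => ‖X t x₁ r - X t x₂ r‖) (Icc t T) := (hX₁c.sub hX₂c).norm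
    have hvc : ContinuousOn (fun r => ‖Y t x₁ r - Y t x₂ r‖) (Icc t T) := (hY₁c.sub hY₂c).norm
    set Qq : ℝ := ∫ r in t..T, (‖X t x₁ r - X t x₂ r‖ ^ 2 + ‖Y t x₁ r - Y t x₂ r‖ ^ 2) with hQq
    set II : ℝ := ∫ r in t..T, (‖X t x₁ r - X t x₂ r‖ + ‖Y t x₁ r - Y t x₂ r‖) with hII
    have hQ0 : 0 ≤ Qq := by
      rw [hQq]
      exact intervalIntegral.integral_nonneg ht.2 (fun r _ => by positivity)
    have hI0 : 0 ≤ II := by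
      rw [hII]
      exact intervalIntegral.integral_nonneg ht.2
        (fun r _ => add_nonneg (norm_nonneg _) (norm_nonneg _))
    -- Step 1 : the monotonicity estimate
    have hstep1 : C₂ * ‖X t x₁ T - X t x₂ T‖ ^ 2 + C₂ * Qq ≤
        ‖x₁ - x₂‖ * ‖Y t x₁ t - Y t x₂ t‖ := by
      have hρc : ContinuousOn (fun r : ℝ =>
          -C₂ * (‖X t x₁ r - X t x₂ r‖ ^ 2 + ‖Y t x₁ r - Y t x₂ r‖ ^ 2)) (Icc t T) :=
        continuousOn_const.mul ((huc.pow 2).add (hvc.pow 2))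
      have hkey := ftc_inner (n := n) ht.2
        (P := fun r => X t x₁ r - X t x₂ r) (Q := fun r => Y t x₁ r - Y t x₂ r)
        (FP := fun r => f r (X t x₁ r) (Y t x₁ r) - f r (X t x₂ r) (Y t x₂ r))
        (GQ := fun r => -(g r (X t x₁ r) (Y t x₁ r) - g r (X t x₂ r) (Y t x₂ r)))
        (hX₁c.sub hX₂c) (hY₁c.sub hY₂c) (hF₁c.sub hF₂c) ((hG₁c.sub hG₂c).neg)
        (fun s hs => (hXD t ht x₁ s hs).sub (hXD t ht x₂ s hs))
        (fun s hs => by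
          have hYD12 := (hYD t ht x₁ s hs).sub (hYD t ht x₂ s hs)
          simp only [neg_sub, sub_neg_eq_add, neg_add_eq_sub] at hYD12 ⊢
          exact hYD12)
        (ρ := fun r =>
          -C₂ * (‖X t x₁ r - X t x₂ r‖ ^ 2 + ‖Y t x₁ r - Y t x₂ r‖ ^ 2))
        hρc
        (fun s hs => by
          have hm := hmono s (hIccsub t ht hs) (X t x₁ s) (X t x₂ s) (Y t x₁ s) (Y t x₂ s)
          simpa only [real_inner_comm (X t x₁ s - X t x₂ s)] using hm)
      have hρint : (∫ r in t..T,
          -C₂ * (‖X t x₁ r - X t x₂ r‖ ^ 2 + ‖Y t x₁ r - Y t x₂ r‖ ^ 2)) = -C₂ * Qq := by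
        rw [intervalIntegral.integral_const_mul, hQq]
      rw [hρint] at hkey
      have hPT : C₂ * ‖X t x₁ T - X t x₂ T‖ ^ 2 ≤
          ⟪X t x₁ T - X t x₂ T, Y t x₁ T - Y t x₂ T⟫ := by
        rw [hYT t ht x₁, hYT t ht x₂, real_inner_comm]
        exact hh_mono _ _
      have hPt : ⟪X t x₁ t - X t x₂ t, Y t x₁ t - Y t x₂ t⟫ ≤
          ‖x₁ - x₂‖ * ‖Y t x₁ t - Y t x₂ t‖ := by
        rw [hXt t ht x₁, hXt t ht x₂]
        exact real_inner_le_norm _ _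
      linarith only [hkey, hPT, hPt]
    -- Step 2 : forward bound
    have hstep2 : ∀ s ∈ Icc t T, ‖X t x₁ s - X t x₂ s‖ ≤ ‖x₁ - x₂‖ + C₁ * II := by
      intro s hs
      have hsub : Icc t s ⊆ Icc t T := Icc_subset_Icc le_rfl hs.2
      have hmonoI : uIcc t s ⊆ Icc t T := by rw [uIcc_of_le hs.1]; exact hsub
      have hF₁i : IntervalIntegrable (fun r => f r (X t x₁ r) (Y t x₁ r)) volume t s :=
        (hF₁c.mono hmonoI).intervalIntegrable
      have hF₂i : IntervalIntegrable (fun r => f r (X t x₂ r) (Y t x₂ r)) volume t s :=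
        (hF₂c.mono hmonoI).intervalIntegrable
      have heq : X t x₁ s - X t x₂ s = (x₁ - x₂) +
          ∫ r in t..s, (f r (X t x₁ r) (Y t x₁ r) - f r (X t x₂ r) (Y t x₂ r)) := by
        rw [hX₁e s hs, hX₂e s hs, intervalIntegral.integral_sub hF₁i hF₂i]
        abel
      rw [heq]
      refine (norm_add_le _ _).trans ?_
      have h1 : ‖∫ r in t..s, (f r (X t x₁ r) (Y t x₁ r) - f r (X t x₂ r) (Y t x₂ r))‖ ≤
          ∫ r in t..s, ‖f r (X t x₁ r) (Y t x₁ r) - f r (X t x₂ r) (Y t x₂ r)‖ :=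
        intervalIntegral.norm_integral_le_integral_norm hs.1
      have h2 : (∫ r in t..s, ‖f r (X t x₁ r) (Y t x₁ r) - f r (X t x₂ r) (Y t x₂ r)‖) ≤
          ∫ r in t..s, C₁ * (‖X t x₁ r - X t x₂ r‖ + ‖Y t x₁ r - Y t x₂ r‖) := by
        apply intervalIntegral.integral_mono_on hs.1
          (((hF₁c.sub hF₂c).norm.mono hmonoI).intervalIntegrable)
          (((continuousOn_const.mul (huc.add hvc)).mono hmonoI).intervalIntegrable)
        intro r hr
        exact hf_lip r (hIccsub t ht (hsub hr)) _ _ _ _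
      have h3 : (∫ r in t..s, C₁ * (‖X t x₁ r - X t x₂ r‖ + ‖Y t x₁ r - Y t x₂ r‖)) =
          C₁ * ∫ r in t..s, (‖X t x₁ r - X t x₂ r‖ + ‖Y t x₁ r - Y t x₂ r‖) :=
        intervalIntegral.integral_const_mul _ _
      have h4 : (∫ r in t..s, (‖X t x₁ r - X t x₂ r‖ + ‖Y t x₁ r - Y t x₂ r‖)) ≤ II := by
        rw [hII]
        exact int_mono_ext hs (huc.add hvc)
          (fun r _ => add_nonneg (norm_nonneg _) (norm_nonneg _))
      have h5 := mul_le_mul_of_nonneg_left h4 hC₁.le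
      linarith only [h1, h2, h3, h5]
    -- Step 3 : backward bound
    have hstep3 : ∀ s ∈ Icc t T, ‖Y t x₁ s - Y t x₂ s‖ ≤
        C₁ * ‖X t x₁ T - X t x₂ T‖ + C₁ * II := by
      intro s hs
      have hsub : Icc s T ⊆ Icc t T := Icc_subset_Icc hs.1 le_rfl
      have hmonoI : uIcc s T ⊆ Icc t T := by rw [uIcc_of_le hs.2]; exact hsub
      have hG₁i : IntervalIntegrable (fun r => g r (X t x₁ r) (Y t x₁ r)) volume s T :=
        (hG₁c.mono hmonoI).intervalIntegrable
      have hG₂i : IntervalIntegrable (fun r => g r (X t x₂ r) (Y t x₂ r)) volume s T :=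
        (hG₂c.mono hmonoI).intervalIntegrable
      have heq : Y t x₁ s - Y t x₂ s = (h (X t x₁ T) - h (X t x₂ T)) +
          ∫ r in s..T, (g r (X t x₁ r) (Y t x₁ r) - g r (X t x₂ r) (Y t x₂ r)) := by
        rw [hY₁e s hs, hY₂e s hs, intervalIntegral.integral_sub hG₁i hG₂i]
        abel
      rw [heq]
      refine (norm_add_le _ _).trans ?_
      have h1 : ‖∫ r in s..T, (g r (X t x₁ r) (Y t x₁ r) - g r (X t x₂ r) (Y t x₂ r))‖ ≤
          ∫ r in s..T, ‖g r (X t x₁ r) (Y t x₁ r) - g r (X t x₂ r) (Y t x₂ r)‖ :=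
        intervalIntegral.norm_integral_le_integral_norm hs.2
      have h2 : (∫ r in s..T, ‖g r (X t x₁ r) (Y t x₁ r) - g r (X t x₂ r) (Y t x₂ r)‖) ≤
          ∫ r in s..T, C₁ * (‖X t x₁ r - X t x₂ r‖ + ‖Y t x₁ r - Y t x₂ r‖) := by
        apply intervalIntegral.integral_mono_on hs.2
          (((hG₁c.sub hG₂c).norm.mono hmonoI).intervalIntegrable)
          (((continuousOn_const.mul (huc.add hvc)).mono hmonoI).intervalIntegrable)
        intro r hr
        exact hg_lip r (hIccsub t ht (hsub hr)) _ _ _ _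
      have h3 : (∫ r in s..T, C₁ * (‖X t x₁ r - X t x₂ r‖ + ‖Y t x₁ r - Y t x₂ r‖)) =
          C₁ * ∫ r in s..T, (‖X t x₁ r - X t x₂ r‖ + ‖Y t x₁ r - Y t x₂ r‖) :=
        intervalIntegral.integral_const_mul _ _
      have h4 : (∫ r in s..T, (‖X t x₁ r - X t x₂ r‖ + ‖Y t x₁ r - Y t x₂ r‖)) ≤ II := by
        rw [hII]
        exact int_mono_ext' hs (huc.add hvc)
          (fun r _ => add_nonneg (norm_nonneg _) (norm_nonneg _))
      have h5 := mul_le_mul_of_nonneg_left h4 hC₁.le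
      have h6 := hh_lip (X t x₁ T) (X t x₂ T)
      linarith only [h1, h2, h3, h5, h6]
    -- Step 4 : AM-GM for the integral
    have hstep4 : 2 * (θ * ‖x₁ - x₂‖) * II ≤ 2 * (θ * ‖x₁ - x₂‖) ^ 2 * (T - t) + Qq := by
      rw [hII, hQq]
      exact int_amgm ht.2 (mul_pos hθ0 hD) huc hvc
    -- arithmetic
    have hE0 : (0:ℝ) ≤ ‖X t x₁ T - X t x₂ T‖ := norm_nonneg _
    have hvt0 : (0:ℝ) ≤ ‖Y t x₁ t - Y t x₂ t‖ := norm_nonneg _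
    set E : ℝ := ‖X t x₁ T - X t x₂ T‖
    set vt : ℝ := ‖Y t x₁ t - Y t x₂ t‖
    set Dd : ℝ := ‖x₁ - x₂‖
    have h2 : vt ≤ C₁ * E + C₁ * II := hstep3 t ⟨le_rfl, ht.2⟩
    have hkeyE : (θ * C₂ * E) ^ 2 ≤ (θ ^ 2 * C₂ * Dd) * vt := by
      have hh := mul_le_mul_of_nonneg_left hstep1 (mul_pos (pow_pos hθ0 2) hC₂).le
      have hQnn : 0 ≤ θ ^ 2 * C₂ * (C₂ * Qq) :=
        mul_nonneg (mul_nonneg (sq_nonneg θ) hC₂.le) (mul_nonneg hC₂.le hQ0)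
      calc (θ * C₂ * E) ^ 2 = θ ^ 2 * C₂ * (C₂ * E ^ 2) := by ring
        _ ≤ θ ^ 2 * C₂ * (C₂ * E ^ 2) + θ ^ 2 * C₂ * (C₂ * Qq) := le_add_of_nonneg_right hQnn
        _ = θ ^ 2 * C₂ * (C₂ * E ^ 2 + C₂ * Qq) := by ring
        _ ≤ θ ^ 2 * C₂ * (Dd * vt) := hh
        _ = (θ ^ 2 * C₂ * Dd) * vt := by ring
    have hE' : 2 * (θ * C₂) * E ≤ θ ^ 2 * C₂ * Dd + vt := by
      have := double_le_add_of_sq_le_mul (e := θ * C₂ * E) (by positivity) (by positivity)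
        hvt0 hkeyE
      linarith only [this]
    have hI' : 2 * (θ * C₂) * II ≤ 2 * θ ^ 2 * C₂ * Dd * T + vt := by
      have hQR : C₂ * Qq ≤ vt * Dd := by
        have hEnn : 0 ≤ C₂ * E ^ 2 := mul_nonneg hC₂.le (sq_nonneg E)
        linarith only [hstep1, hEnn]
      exact le_of_mul_le_mul_right (arith_I hC₂.le hD.le hθ0.le ht.1 hstep4 hQR) hD
    have hvtD : vt ≤ cJ * Dd := by
      have hs2 := mul_le_mul_of_nonneg_left h2 hθC₂0.le
      have hE'' := mul_le_mul_of_nonneg_left hE' hC₁.le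
      have hI'' := mul_le_mul_of_nonneg_left hI' hC₁.le
      have hrw : (θ * C₂) * vt = (2 * C₁ + 2) * vt := by rw [hθC₂]
      have hcJDd : cJ * Dd = C₁ * θ ^ 2 * C₂ * Dd + 2 * C₁ * θ ^ 2 * C₂ * Dd * T := by
        rw [hcJ]; ring
      have hCvt : 0 ≤ C₁ * vt := mul_nonneg hC₁.le hvt0
      have hcJD : 0 ≤ cJ * Dd := (mul_pos hcJ0 hD).le
      linarith only [hs2, hE'', hI'', hrw, hcJDd, hCvt, hcJD, hvt0]
    have hED : E ≤ cE * Dd := by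
      rw [hcE, div_mul_eq_mul_div, le_div_iff₀ hθC₂0]
      linarith only [hE', hvtD]
    have hID : II ≤ cI * Dd := by
      rw [hcI, div_mul_eq_mul_div, le_div_iff₀ hθC₂0]
      linarith only [hI', hvtD]
    intro s hs
    have hu := hstep2 s hs
    have hv := hstep3 s hs
    have hCE := mul_le_mul_of_nonneg_left hED hC₁.le
    have hCI := mul_le_mul_of_nonneg_left hID hC₁.le
    constructor
    · linarith only [hu, hCI, mul_nonneg (mul_nonneg hC₁.le hcE0.le) hD.le]
    · linarith only [hv, hCE, hCI, hD.le]
  -- Step B : growth bound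
  obtain ⟨cB, hcB0, hB⟩ : ∃ cB : ℝ, 0 < cB ∧ ∀ t ∈ Icc (0:ℝ) T, ∀ x : Vec n, ∀ s ∈ Icc t T,
      ‖X t x s‖ + ‖Y t x s‖ ≤ cB * (1 + ‖x‖) := by
    obtain ⟨K, hK0, hKC₂⟩ : ∃ K : ℝ, 0 < K ∧ C₂ * K = M ^ 2 :=
      ⟨M ^ 2 / C₂, div_pos (pow_pos (by linarith only [hM1]) 2) hC₂, by field_simp⟩
    set K' : ℝ := K * (2 * T + 1) with hK'
    have hK'0 : 0 < K' := mul_pos hK0 (by linarith only [hT])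
    set cJB : ℝ := 2 * (θ * C₂) * (M * (1 + T)) + C₁ * θ ^ 2 * C₂ * (1 + 2 * T) + 2 * C₁ * K'
      with hcJB
    have hcJB0 : 0 < cJB := by
      have h1 : 0 < 2 * (θ * C₂) * (M * (1 + T)) :=
        mul_pos hθC₂0 (mul_pos (by linarith only [hM1]) (by linarith only [hT]))
      have h2 : 0 < C₁ * θ ^ 2 * C₂ * (1 + 2 * T) :=
        mul_pos (mul_pos (mul_pos hC₁ (pow_pos hθ0 2)) hC₂) (by linarith only [hT])
      have h3 : 0 < 2 * C₁ * K' := mul_pos (by linarith only [hC₁]) hK'0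
      rw [hcJB]; linarith only [h1, h2, h3]
    set cEB : ℝ := (θ ^ 2 * C₂ + 2 * cJB + K') / (2 * (θ * C₂)) with hcEB
    set cIB : ℝ := (2 * θ ^ 2 * C₂ * T + 2 * cJB + K') / (2 * (θ * C₂)) with hcIB
    have hcEB0 : 0 < cEB := div_pos (by positivity) hθC₂0
    have hcIB0 : 0 < cIB := div_pos
      (by linarith only [mul_pos (mul_pos (pow_pos hθ0 2) hC₂) hT, hcJB0, hK'0]) hθC₂0
    refine ⟨1 + M + 2 * M * T + C₁ * cEB + 2 * C₁ * cIB, by positivity, fun t ht x => ?_⟩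
    have hDd1 : (1:ℝ) ≤ 1 + ‖x‖ := by linarith only [norm_nonneg x]
    have hDd0 : (0:ℝ) < 1 + ‖x‖ := by linarith only [hDd1]
    obtain ⟨hXc, hYc, hXe, hYe⟩ := hsol t ht x
    have hFc := hcompf t ht _ _ hXc hYc
    have hGc := hcompg t ht _ _ hXc hYc
    have huc : ContinuousOn (fun r => ‖X t x r‖) (Icc t T) := hXc.norm
    have hvc : ContinuousOn (fun r => ‖Y t x r‖) (Icc t T) := hYc.norm
    set Qq : ℝ := ∫ r in t..T, (‖X t x r‖ ^ 2 + ‖Y t x r‖ ^ 2) with hQq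
    set II : ℝ := ∫ r in t..T, (‖X t x r‖ + ‖Y t x r‖) with hII
    have hQ0 : 0 ≤ Qq := by
      rw [hQq]
      exact intervalIntegral.integral_nonneg ht.2 (fun r _ => by positivity)
    have hI0 : 0 ≤ II := by
      rw [hII]
      exact intervalIntegral.integral_nonneg ht.2
        (fun r _ => add_nonneg (norm_nonneg _) (norm_nonneg _))
    -- pointwise bound on the vector fields
    have hFb : ∀ r ∈ Icc t T, ‖f r (X t x r) (Y t x r)‖ ≤ M + C₁ * (‖X t x r‖ + ‖Y t x r‖) := by
      intro r hr
      have h1 := hf_lip r (hIccsub t ht hr) (X t x r) 0 (Y t x r) 0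
      simp only [sub_zero] at h1
      have h2 : ‖f r (X t x r) (Y t x r)‖ ≤
          ‖f r 0 0‖ + ‖f r (X t x r) (Y t x r) - f r 0 0‖ := norm_le_norm_add_norm_sub' _ _
      linarith only [hMf r (hIccsub t ht hr), h2, h1]
    have hGb : ∀ r ∈ Icc t T, ‖g r (X t x r) (Y t x r)‖ ≤ M + C₁ * (‖X t x r‖ + ‖Y t x r‖) := by
      intro r hr
      have h1 := hg_lip r (hIccsub t ht hr) (X t x r) 0 (Y t x r) 0
      simp only [sub_zero] at h1
      have h2 : ‖g r (X t x r) (Y t x r)‖ ≤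
          ‖g r 0 0‖ + ‖g r (X t x r) (Y t x r) - g r 0 0‖ := norm_le_norm_add_norm_sub' _ _
      linarith only [hMg r (hIccsub t ht hr), h2, h1]
    have hρ0c : ContinuousOn (fun r => M + C₁ * (‖X t x r‖ + ‖Y t x r‖)) (Icc t T) :=
      continuousOn_const.add (continuousOn_const.mul (huc.add hvc))
    have hρ0nn : ∀ r ∈ Icc t T, 0 ≤ M + C₁ * (‖X t x r‖ + ‖Y t x r‖) := fun r _ => by positivity
    have hρ0int : (∫ r in t..T, (M + C₁ * (‖X t x r‖ + ‖Y t x r‖))) =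
        M * (T - t) + C₁ * II := by
      rw [intervalIntegral.integral_add (g := fun r => C₁ * (‖X t x r‖ + ‖Y t x r‖)) intervalIntegrable_const
        ((((continuousOn_const.mul (huc.add hvc))).mono (by rw [uIcc_of_le ht.2])).intervalIntegrable),
        intervalIntegral.integral_const, intervalIntegral.integral_const_mul, smul_eq_mul,
        mul_comm (T - t) M, hII]
    -- Step 1B : the monotonicity estimate
    have hstep1 : C₂ * ‖X t x T‖ ^ 2 + C₂ * Qq ≤ 2 * ((1 + ‖x‖) * ‖Y t x t‖) + K * (2 * T + 1) := by
      have hρc : ContinuousOn (fun r : ℝ =>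
          K - C₂ / 2 * (‖X t x r‖ ^ 2 + ‖Y t x r‖ ^ 2)) (Icc t T) :=
        continuousOn_const.sub (continuousOn_const.mul ((huc.pow 2).add (hvc.pow 2)))
      have hkey := ftc_inner (n := n) ht.2
        (P := X t x) (Q := Y t x)
        (FP := fun r => f r (X t x r) (Y t x r))
        (GQ := fun r => -(g r (X t x r) (Y t x r)))
        hXc hYc hFc hGc.neg
        (fun s hs => hXD t ht x s hs)
        (fun s hs => hYD t ht x s hs)
        (ρ := fun r => K - C₂ / 2 * (‖X t x r‖ ^ 2 + ‖Y t x r‖ ^ 2))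
        hρc
        (fun s hs => by
          have hm := hmono s (hIccsub t ht hs) (X t x s) 0 (Y t x s) 0
          simp only [sub_zero] at hm
          have ea : ⟪-(g s (X t x s) (Y t x s) - g s 0 0), X t x s⟫ =
              -⟪g s (X t x s) (Y t x s), X t x s⟫ + ⟪g s 0 0, X t x s⟫ := by
            rw [inner_neg_left, inner_sub_left]; ring
          have eb : ⟪f s (X t x s) (Y t x s) - f s 0 0, Y t x s⟫ =
              ⟪f s (X t x s) (Y t x s), Y t x s⟫ - ⟪f s 0 0, Y t x s⟫ := by
            rw [inner_sub_left]
          have ec : ⟪X t x s, -(g s (X t x s) (Y t x s))⟫ =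
              -⟪g s (X t x s) (Y t x s), X t x s⟫ := by
            rw [real_inner_comm, inner_neg_left]
          have hga := abs_real_inner_le_norm (g s 0 0) (X t x s)
          have hgb : ‖g s 0 0‖ * ‖X t x s‖ ≤ M * ‖X t x s‖ :=
            mul_le_mul_of_nonneg_right (hMg s (hIccsub t ht hs)) (norm_nonneg _)
          have hfa := abs_real_inner_le_norm (f s 0 0) (Y t x s)
          have hfb : ‖f s 0 0‖ * ‖Y t x s‖ ≤ M * ‖Y t x s‖ :=
            mul_le_mul_of_nonneg_right (hMf s (hIccsub t ht hs)) (norm_nonneg _)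
          have hamu := amgm_M (w := ‖X t x s‖) hC₂ hKC₂
          have hamv := amgm_M (w := ‖Y t x s‖) hC₂ hKC₂
          have hga' := abs_le.mp hga
          have hfa' := abs_le.mp hfa
          show ⟪X t x s, -(g s (X t x s) (Y t x s))⟫ +
              ⟪f s (X t x s) (Y t x s), Y t x s⟫ ≤
              K - C₂ / 2 * (‖X t x s‖ ^ 2 + ‖Y t x s‖ ^ 2)
          rw [ec]
          rw [ea, eb] at hm
          linarith only [hm, hga'.1, hga'.2, hfa'.1, hfa'.2, hgb, hfb, hamu, hamv])
      have hρint : (∫ r in t..T, (K - C₂ / 2 * (‖X t x r‖ ^ 2 + ‖Y t x r‖ ^ 2))) =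
          K * (T - t) - C₂ / 2 * Qq := by
        rw [intervalIntegral.integral_sub (g := fun r => C₂ / 2 * (‖X t x r‖ ^ 2 + ‖Y t x r‖ ^ 2)) intervalIntegrable_const
          ((((continuousOn_const.mul ((huc.pow 2).add (hvc.pow 2)))).mono
            (by rw [uIcc_of_le ht.2])).intervalIntegrable),
          intervalIntegral.integral_const, intervalIntegral.integral_const_mul, smul_eq_mul,
          mul_comm (T - t) K, hQq]
      rw [hρint] at hkey
      -- endpoint estimates
      have hφT : C₂ * ‖X t x T‖ ^ 2 - M * ‖X t x T‖ ≤ ⟪X t x T, Y t x T⟫ := by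
        rw [hYT t ht x]
        have hm := hh_mono (X t x T) 0
        simp only [sub_zero] at hm
        have e1 : ⟪h (X t x T) - h 0, X t x T⟫ =
            ⟪h (X t x T), X t x T⟫ - ⟪h 0, X t x T⟫ := by rw [inner_sub_left]
        have e2 : ⟪X t x T, h (X t x T)⟫ = ⟪h (X t x T), X t x T⟫ := real_inner_comm _ _
        have hha := abs_real_inner_le_norm (h 0) (X t x T)
        have hhb : ‖h 0‖ * ‖X t x T‖ ≤ M * ‖X t x T‖ :=
          mul_le_mul_of_nonneg_right hMh (norm_nonneg _)
        have hha' := abs_le.mp hha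
        rw [e2]
        rw [e1] at hm
        linarith only [hm, hha'.1, hha'.2, hhb]
      have hφt : ⟪X t x t, Y t x t⟫ ≤ (1 + ‖x‖) * ‖Y t x t‖ := by
        rw [hXt t ht x]
        have h1 := real_inner_le_norm x (Y t x t)
        have h2 : ‖x‖ * ‖Y t x t‖ ≤ (1 + ‖x‖) * ‖Y t x t‖ :=
          mul_le_mul_of_nonneg_right (by linarith only []) (norm_nonneg _)
        linarith only [h1, h2]
      have hME := amgm_M (w := ‖X t x T‖) hC₂ hKC₂
      have hKt : K * (T - t) ≤ K * T :=
        mul_le_mul_of_nonneg_left (by linarith only [ht.1]) hK0.le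
      linarith only [hkey, hφT, hφt, hME, hKt]
    -- Step 2B : forward bound
    have hstep2 : ∀ s ∈ Icc t T, ‖X t x s‖ ≤ ‖x‖ + M * T + C₁ * II := by
      intro s hs
      have hsub : Icc t s ⊆ Icc t T := Icc_subset_Icc le_rfl hs.2
      have hmonoI : uIcc t s ⊆ Icc t T := by rw [uIcc_of_le hs.1]; exact hsub
      have heq := hXe s hs
      rw [heq]
      refine (norm_add_le _ _).trans ?_
      have h1 : ‖∫ r in t..s, f r (X t x r) (Y t x r)‖ ≤
          ∫ r in t..s, ‖f r (X t x r) (Y t x r)‖ :=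
        intervalIntegral.norm_integral_le_integral_norm hs.1
      have h2 : (∫ r in t..s, ‖f r (X t x r) (Y t x r)‖) ≤
          ∫ r in t..s, (M + C₁ * (‖X t x r‖ + ‖Y t x r‖)) := by
        apply intervalIntegral.integral_mono_on hs.1
          ((hFc.norm.mono hmonoI).intervalIntegrable)
          ((hρ0c.mono hmonoI).intervalIntegrable)
        intro r hr
        exact hFb r (hsub hr)
      have h4 : (∫ r in t..s, (M + C₁ * (‖X t x r‖ + ‖Y t x r‖))) ≤
          ∫ r in t..T, (M + C₁ * (‖X t x r‖ + ‖Y t x r‖)) :=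
        int_mono_ext hs hρ0c hρ0nn
      rw [hρ0int] at h4
      have hMt : M * (T - t) ≤ M * T :=
        mul_le_mul_of_nonneg_left (by linarith only [ht.1]) (by linarith only [hM1])
      linarith only [h1, h2, h4, hMt]
    -- Step 3B : backward bound
    have hstep3 : ∀ s ∈ Icc t T, ‖Y t x s‖ ≤ M + C₁ * ‖X t x T‖ + M * T + C₁ * II := by
      intro s hs
      have hsub : Icc s T ⊆ Icc t T := Icc_subset_Icc hs.1 le_rfl
      have hmonoI : uIcc s T ⊆ Icc t T := by rw [uIcc_of_le hs.2]; exact hsub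
      have heq := hYe s hs
      rw [heq]
      refine (norm_add_le _ _).trans ?_
      have hh0 : ‖h (X t x T)‖ ≤ M + C₁ * ‖X t x T‖ := by
        have h1 := hh_lip (X t x T) 0
        simp only [sub_zero] at h1
        have h2 : ‖h (X t x T)‖ ≤ ‖h 0‖ + ‖h (X t x T) - h 0‖ := norm_le_norm_add_norm_sub' _ _
        linarith only [hMh, h1, h2]
      have h1 : ‖∫ r in s..T, g r (X t x r) (Y t x r)‖ ≤
          ∫ r in s..T, ‖g r (X t x r) (Y t x r)‖ :=
        intervalIntegral.norm_integral_le_integral_norm hs.2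
      have h2 : (∫ r in s..T, ‖g r (X t x r) (Y t x r)‖) ≤
          ∫ r in s..T, (M + C₁ * (‖X t x r‖ + ‖Y t x r‖)) := by
        apply intervalIntegral.integral_mono_on hs.2
          ((hGc.norm.mono hmonoI).intervalIntegrable)
          ((hρ0c.mono hmonoI).intervalIntegrable)
        intro r hr
        exact hGb r (hsub hr)
      have h4 : (∫ r in s..T, (M + C₁ * (‖X t x r‖ + ‖Y t x r‖))) ≤
          ∫ r in t..T, (M + C₁ * (‖X t x r‖ + ‖Y t x r‖)) :=
        int_mono_ext' hs hρ0c hρ0nn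
      rw [hρ0int] at h4
      have hMt : M * (T - t) ≤ M * T :=
        mul_le_mul_of_nonneg_left (by linarith only [ht.1]) (by linarith only [hM1])
      linarith only [hh0, h1, h2, h4, hMt]
    -- Step 4B : AM-GM
    have hstep4 : 2 * (θ * (1 + ‖x‖)) * II ≤ 2 * (θ * (1 + ‖x‖)) ^ 2 * (T - t) + Qq := by
      rw [hII, hQq]
      exact int_amgm ht.2 (mul_pos hθ0 hDd0) huc hvc
    -- arithmetic
    have hE0 : (0:ℝ) ≤ ‖X t x T‖ := norm_nonneg _
    have hvt0 : (0:ℝ) ≤ ‖Y t x t‖ := norm_nonneg _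
    set E : ℝ := ‖X t x T‖
    set vt : ℝ := ‖Y t x t‖
    set Dd : ℝ := 1 + ‖x‖ with hDd
    have hxDd : ‖x‖ ≤ Dd := by rw [hDd]; linarith only []
    have hDd2 : (1:ℝ) ≤ Dd ^ 2 := by
      have hq := mul_le_mul hDd1 hDd1 zero_le_one (by linarith only [hDd1] : (0:ℝ) ≤ Dd)
      linarith only [hq]
    have h2 : vt ≤ M * (1 + T) * Dd + C₁ * E + C₁ * II := by
      have h3 := hstep3 t ⟨le_rfl, ht.2⟩
      have h5 : M + M * T ≤ M * (1 + T) * Dd := by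
        have hq : 0 ≤ M * (1 + T) * (Dd - 1) :=
          mul_nonneg (mul_nonneg (by linarith only [hM1]) (by linarith only [hT]))
            (by linarith only [hDd1])
        linarith only [hq]
      linarith only [h3, h5]
    have hQR : C₂ * Qq ≤ (2 * vt + K' * Dd) * Dd := by
      have hEnn : 0 ≤ C₂ * E ^ 2 := mul_nonneg hC₂.le (sq_nonneg E)
      have hK'D : K' * 1 ≤ K' * Dd ^ 2 := mul_le_mul_of_nonneg_left hDd2 hK'0.le
      have hK'eq : K * (2 * T + 1) = K' := by rw [hK']
      linarith only [hstep1, hEnn, hK'D, hK'eq]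
    have hER : C₂ * E ^ 2 ≤ (2 * vt + K' * Dd) * Dd := by
      have hQnn : 0 ≤ C₂ * Qq := mul_nonneg hC₂.le hQ0
      have hK'D : K' * 1 ≤ K' * Dd ^ 2 := mul_le_mul_of_nonneg_left hDd2 hK'0.le
      have hK'eq : K * (2 * T + 1) = K' := by rw [hK']
      linarith only [hstep1, hQnn, hK'D, hK'eq]
    have hkeyE : (θ * C₂ * E) ^ 2 ≤ (θ ^ 2 * C₂ * Dd) * (2 * vt + K' * Dd) := by
      have hh := mul_le_mul_of_nonneg_left hER (mul_pos (pow_pos hθ0 2) hC₂).le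
      calc (θ * C₂ * E) ^ 2 = θ ^ 2 * C₂ * (C₂ * E ^ 2) := by ring
        _ ≤ θ ^ 2 * C₂ * ((2 * vt + K' * Dd) * Dd) := hh
        _ = (θ ^ 2 * C₂ * Dd) * (2 * vt + K' * Dd) := by ring
    have hb0 : (0:ℝ) ≤ 2 * vt + K' * Dd := by positivity
    have hE' : 2 * (θ * C₂) * E ≤ θ ^ 2 * C₂ * Dd + (2 * vt + K' * Dd) := by
      have := double_le_add_of_sq_le_mul (e := θ * C₂ * E) (by positivity) (by positivity)
        hb0 hkeyE
      linarith only [this]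
    have hI' : 2 * (θ * C₂) * II ≤ 2 * θ ^ 2 * C₂ * Dd * T + (2 * vt + K' * Dd) :=
      le_of_mul_le_mul_right (arith_I hC₂.le hDd0.le hθ0.le ht.1 hstep4 hQR) hDd0
    have hvtD : vt ≤ cJB * Dd := by
      have hs2 := mul_le_mul_of_nonneg_left h2 hθC₂0.le
      have hE'' := mul_le_mul_of_nonneg_left hE' hC₁.le
      have hI'' := mul_le_mul_of_nonneg_left hI' hC₁.le
      have hrw : (θ * C₂) * vt = (2 * C₁ + 2) * vt := by rw [hθC₂]
      have hcJBDd : cJB * Dd = 2 * (θ * C₂) * (M * (1 + T)) * Dd +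
          (C₁ * θ ^ 2 * C₂ * Dd + 2 * C₁ * θ ^ 2 * C₂ * Dd * T) + 2 * C₁ * K' * Dd := by
        rw [hcJB]; ring
      have hCvt : 0 ≤ C₁ * vt := mul_nonneg hC₁.le hvt0
      have hcJD : 0 ≤ cJB * Dd := (mul_pos hcJB0 hDd0).le
      have hCKD : 0 ≤ C₁ * (K' * Dd) := mul_nonneg hC₁.le (mul_pos hK'0 hDd0).le
      linarith only [hs2, hE'', hI'', hrw, hcJBDd, hCvt, hcJD, hvt0, hCKD]
    have hED : E ≤ cEB * Dd := by
      rw [hcEB, div_mul_eq_mul_div, le_div_iff₀ hθC₂0]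
      have hK'DD : K' * 1 ≤ K' * Dd := by
        exact mul_le_mul_of_nonneg_left hDd1 hK'0.le
      linarith only [hE', hvtD, hK'DD]
    have hID : II ≤ cIB * Dd := by
      rw [hcIB, div_mul_eq_mul_div, le_div_iff₀ hθC₂0]
      have hK'DD : K' * 1 ≤ K' * Dd := mul_le_mul_of_nonneg_left hDd1 hK'0.le
      linarith only [hI', hvtD, hK'DD]
    intro s hs
    have hu := hstep2 s hs
    have hv := hstep3 s hs
    have hCE := mul_le_mul_of_nonneg_left hED hC₁.le
    have hCI := mul_le_mul_of_nonneg_left hID hC₁.le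
    have hMTD : M * T * 1 ≤ M * T * Dd :=
      mul_le_mul_of_nonneg_left hDd1
        (mul_nonneg (by linarith only [hM1]) (by linarith only [hT]))
    have hMD : M * 1 ≤ M * Dd := mul_le_mul_of_nonneg_left hDd1 (by linarith only [hM1])
    linarith only [hu, hv, hCE, hCI, hMTD, hMD, hxDd]
  -- bound on the driver f along solutions
  have hcF : ∀ t ∈ Icc (0:ℝ) T, ∀ x : Vec n, ∀ r ∈ Icc t T,
      ‖f r (X t x r) (Y t x r)‖ ≤ (M + C₁ * cB) * (1 + ‖x‖) := by
    intro t ht x r hr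
    have h1 := hf_lip r (hIccsub t ht hr) (X t x r) 0 (Y t x r) 0
    simp only [sub_zero] at h1
    have h2 : ‖f r (X t x r) (Y t x r)‖ ≤ ‖f r 0 0‖ + ‖f r (X t x r) (Y t x r) - f r 0 0‖ :=
      norm_le_norm_add_norm_sub' _ _
    have h3 := hB t ht x r hr
    have h4 := hMf r (hIccsub t ht hr)
    have h5 : M * 1 ≤ M * (1 + ‖x‖) :=
      mul_le_mul_of_nonneg_left (by linarith only [norm_nonneg x]) (by linarith only [hM1])
    have h6 := mul_le_mul_of_nonneg_left h3 hC₁.le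
    linarith only [h1, h2, h4, h5, h6]
  -- one-sided key estimate via splicing and uniqueness
  have hkeyC : ∀ t₁ ∈ Icc (0:ℝ) T, ∀ t₂ ∈ Icc (0:ℝ) T, t₁ ≤ t₂ → ∀ x : Vec n, ∀ s ∈ Icc t₂ T,
      ‖X t₁ x s - X t₂ x s‖ ≤ (cA * (M + C₁ * cB)) * (1 + ‖x‖) * (t₂ - t₁) ∧
      ‖Y t₁ x s - Y t₂ x s‖ ≤ (cA * (M + C₁ * cB)) * (1 + ‖x‖) * (t₂ - t₁) := by
    intro t₁ ht₁ t₂ ht₂ h12 x s hs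
    obtain ⟨hXc, hYc, hXe, hYe⟩ := hsol t₁ ht₁ x
    have hFc := hcompf t₁ ht₁ _ _ hXc hYc
    have ht₂1 : Icc t₂ T ⊆ Icc t₁ T := Icc_subset_Icc h12 le_rfl
    have hsol' : IsFBSol T f g h t₂ (X t₁ x t₂) (X t₁ x) (Y t₁ x) := by
      refine ⟨hXc.mono ht₂1, hYc.mono ht₂1, ?_, fun u hu => hYe u (ht₂1 hu)⟩
      intro u hu
      have h1 := hXe u (ht₂1 hu)
      have h2 := hXe t₂ ⟨h12, ht₂.2⟩
      have hi1 : IntervalIntegrable (fun r => f r (X t₁ x r) (Y t₁ x r)) volume t₁ t₂ :=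
        (hFc.mono (by rw [uIcc_of_le h12]; exact Icc_subset_Icc le_rfl ht₂.2)).intervalIntegrable
      have hi2 : IntervalIntegrable (fun r => f r (X t₁ x r) (Y t₁ x r)) volume t₂ u :=
        (hFc.mono (by rw [uIcc_of_le hu.1]; exact Icc_subset_Icc h12 hu.2)).intervalIntegrable
      have hadd := intervalIntegral.integral_add_adjacent_intervals hi1 hi2
      rw [h1, h2, ← hadd]
      abel
    obtain ⟨hEqX, hEqY⟩ := huniq t₂ ht₂ (X t₁ x t₂) _ _ hsol'
    have hxx : ‖X t₁ x t₂ - x‖ ≤ (M + C₁ * cB) * (1 + ‖x‖) * (t₂ - t₁) := by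
      have h2 := hXe t₂ ⟨h12, ht₂.2⟩
      have he : X t₁ x t₂ - x = ∫ r in t₁..t₂, f r (X t₁ x r) (Y t₁ x r) := by
        rw [h2]; abel
      rw [he]
      have hb := intervalIntegral.norm_integral_le_of_norm_le_const
        (C := (M + C₁ * cB) * (1 + ‖x‖)) (a := t₁) (b := t₂)
        (f := fun r => f r (X t₁ x r) (Y t₁ x r)) ?_
      · rw [abs_of_nonneg (by linarith only [h12] : (0:ℝ) ≤ t₂ - t₁)] at hb
        exact hb
      · intro r hr
        rw [uIoc_of_le h12] at hr
        exact hcF t₁ ht₁ x r ⟨hr.1.le, hr.2.trans ht₂.2⟩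
    have hAx := hA t₂ ht₂ (X t₁ x t₂) x s hs
    have hmul := mul_le_mul_of_nonneg_left hxx hcA0.le
    constructor
    · rw [hEqX hs]
      refine (hAx.1).trans ?_
      calc cA * ‖X t₁ x t₂ - x‖ ≤ cA * ((M + C₁ * cB) * (1 + ‖x‖) * (t₂ - t₁)) := hmul
        _ = (cA * (M + C₁ * cB)) * (1 + ‖x‖) * (t₂ - t₁) := by ring
    · rw [hEqY hs]
      refine (hAx.2).trans ?_
      calc cA * ‖X t₁ x t₂ - x‖ ≤ cA * ((M + C₁ * cB) * (1 + ‖x‖) * (t₂ - t₁)) := hmul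
        _ = (cA * (M + C₁ * cB)) * (1 + ‖x‖) * (t₂ - t₁) := by ring
  -- conclusion
  have ha0 : 0 < cA * (M + C₁ * cB) := by
    have : 0 < M + C₁ * cB := by
      have := mul_pos hC₁ hcB0
      linarith only [hM1, this]
    exact mul_pos hcA0 this
  refine ⟨2 * T * (cA * (M + C₁ * cB)) ^ 2,
    mul_pos (mul_pos two_pos hT) (pow_pos ha0 2), ?_⟩
  intro t₁ ht₁ t₂ ht₂ x s hs
  rcases le_total t₁ t₂ with h12 | h21
  · have hs' : s ∈ Icc t₂ T := by rwa [max_eq_right h12] at hs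
    obtain ⟨hX', hY'⟩ := hkeyC t₁ ht₁ t₂ ht₂ h12 x s hs'
    have habs : |t₁ - t₂| = t₂ - t₁ := by
      rw [abs_sub_comm]; exact abs_of_nonneg (by linarith only [h12])
    have hd0 : (0:ℝ) ≤ t₂ - t₁ := by linarith only [h12]
    have hdT : t₂ - t₁ ≤ T := by linarith only [ht₁.1, ht₂.2]
    rw [habs]
    constructor
    · have := sq_est ha0.le (norm_nonneg x) hd0 hdT (norm_nonneg _) hX'
      linarith only [this]
    · have := sq_est ha0.le (norm_nonneg x) hd0 hdT (norm_nonneg _) hY'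
      linarith only [this]
  · have hs' : s ∈ Icc t₁ T := by rwa [max_eq_left h21] at hs
    obtain ⟨hX', hY'⟩ := hkeyC t₂ ht₂ t₁ ht₁ h21 x s hs'
    rw [norm_sub_rev (X t₂ x s)] at hX'
    rw [norm_sub_rev (Y t₂ x s)] at hY'
    have habs : |t₁ - t₂| = t₁ - t₂ := abs_of_nonneg (by linarith only [h21])
    have hd0 : (0:ℝ) ≤ t₁ - t₂ := by linarith only [h21]
    have hdT : t₁ - t₂ ≤ T := by linarith only [ht₂.1, ht₁.2]
    rw [habs]
    constructor
    · have := sq_est ha0.le (norm_nonneg x) hd0 hdT (norm_nonneg _) hX'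
      linarith only [this]
    · have := sq_est ha0.le (norm_nonneg x) hd0 hdT (norm_nonneg _) hY'
      linarith only [this]
end
end
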